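/- arXiv:1412.5297 — 10 statements merged into one kernel-verified Lean document; each statement's English description precedes it below -/
import Mathlib

section
/- If H and K are unbiased Bush-type Hadamard matrices of order 4n² with H·Kᵀ = 2n·L for a ±1 matrix L, then L is also a Bush-type Hadamard matrix of order 4n². -/
open Matrix BigOperators

/-- A matrix has all entries ±1. -/
def signMatrix {α : Type*} (H : Matrix α α ℝ) : Prop :=
  ∀ p q, H p q = 1 ∨ H p q = -1

/-- Bush-type condition: diagonal `2n`-blocks are all-ones, off-diagonal blocks
have zero row and column sums. -/
def isBushType (n : ℕ)
    (H : Matrix (Fin (2*n) × Fin (2*n)) (Fin (2*n) × Fin (2*n)) ℝ) : Prop :=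
  (∀ i a b, H (i, a) (i, b) = 1) ∧
  (∀ i j, i ≠ j →
    (∀ a, ∑ b, H (i, a) (j, b) = 0) ∧ (∀ b, ∑ a, H (i, a) (j, b) = 0))

lemma sum_sign_eq_card {m : ℕ} (x : Fin m → ℝ) (hx : ∀ b, x b = 1 ∨ x b = -1)
    (hs : ∑ b, x b = m) : ∀ b, x b = 1 := by
  have h0 : ∑ b, (1 - x b) = 0 := by
    rw [Finset.sum_sub_distrib, hs]
    simp
  have h := (Finset.sum_eq_zero_iff_of_nonneg
      (fun b _ => by rcases hx b with h | h <;> rw [h] <;> norm_num)).mp h0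
  intro b
  have := h b (Finset.mem_univ b)
  linarith

/-- If `H` and `K` are unbiased Bush-type Hadamard matrices of order `4n²` with
`H·Kᵀ = 2n·L` for a ±1 matrix `L`, then `L` is also a Bush-type Hadamard matrix. -/
theorem unbiased_bush_product_is_bush (n : ℕ) (hn : 0 < n)
    (H K L : Matrix (Fin (2*n) × Fin (2*n)) (Fin (2*n) × Fin (2*n)) ℝ)
    (hHsign : signMatrix H) (hKsign : signMatrix K) (hLsign : signMatrix L)
    (hHHad : H * Hᵀ = ((4 * n ^ 2 : ℕ) : ℝ) • 1)
    (hKHad : K * Kᵀ = ((4 * n ^ 2 : ℕ) : ℝ) • 1)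
    (hHBush : isBushType n H) (hKBush : isBushType n K)
    (hU : H * Kᵀ = (2 * (n : ℝ)) • L) :
    L * Lᵀ = ((4 * n ^ 2 : ℕ) : ℝ) • 1 ∧ isBushType n L := by
  have hnR : (0:ℝ) < (n:ℝ) := by exact_mod_cast hn
  have htwo : (2 * (n:ℝ)) ≠ 0 := by positivity
  have hc : ((4 * n ^ 2 : ℕ) : ℝ) ≠ 0 := by positivity
  -- entry formula for L
  have hentry : ∀ p q, (2 * (n:ℝ)) * L p q = ∑ r, H p r * K q r := by
    intro p q
    have := congrFun (congrFun hU p) q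
    simp only [Matrix.mul_apply, Matrix.smul_apply, smul_eq_mul, Matrix.transpose_apply] at this
    rw [← this]
  -- row sums of L
  have hrow : ∀ i a j, ∑ b, L (i,a) (j,b) = if i = j then (2*(n:ℝ)) else 0 := by
    intro i a j
    have key : (2*(n:ℝ)) * ∑ b, L (i,a) (j,b)
        = (2*(n:ℝ)) * (if i = j then (2*(n:ℝ)) else 0) := by
      rw [Finset.mul_sum]
      calc ∑ b, (2*(n:ℝ)) * L (i,a) (j,b)
          = ∑ b, ∑ r, H (i,a) r * K (j,b) r := by
            refine Finset.sum_congr rfl fun b _ => hentry _ _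
        _ = ∑ b, ∑ k, ∑ c, H (i,a) (k,c) * K (j,b) (k,c) := by
            refine Finset.sum_congr rfl fun b _ => ?_
            rw [Fintype.sum_prod_type]
        _ = ∑ k, ∑ c, H (i,a) (k,c) * ∑ b, K (j,b) (k,c) := by
            rw [Finset.sum_comm]
            refine Finset.sum_congr rfl fun k _ => ?_
            rw [Finset.sum_comm]
            refine Finset.sum_congr rfl fun c _ => ?_
            rw [Finset.mul_sum]
        _ = ∑ k, ∑ c, H (i,a) (k,c) * (if j = k then (2*(n:ℝ)) else 0) := by
            refine Finset.sum_congr rfl fun k _ => Finset.sum_congr rfl fun c _ => ?_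
            congr 1
            by_cases hjk : j = k
            · subst hjk
              simp [hKBush.1 j]
            · simp only [hjk, if_false]
              exact (hKBush.2 j k hjk).2 c
        _ = ∑ c, H (i,a) (j,c) * (2*(n:ℝ)) := by
            rw [Finset.sum_eq_single j]
            · simp
            · intro k _ hkj
              simp [Ne.symm hkj]
            · simp
        _ = (2*(n:ℝ)) * ∑ c, H (i,a) (j,c) := by
            rw [Finset.mul_sum]; exact Finset.sum_congr rfl fun c _ => mul_comm _ _
        _ = (2*(n:ℝ)) * (if i = j then (2*(n:ℝ)) else 0) := by
            congr 1
            by_cases hij : i = j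
            · subst hij
              simp [hHBush.1 i]
            · simp only [hij, if_false]
              exact (hHBush.2 i j hij).1 a
    exact mul_left_cancel₀ htwo key
  -- column sums of L
  have hcol : ∀ i j b, ∑ a, L (i,a) (j,b) = if i = j then (2*(n:ℝ)) else 0 := by
    intro i j b
    have key : (2*(n:ℝ)) * ∑ a, L (i,a) (j,b)
        = (2*(n:ℝ)) * (if i = j then (2*(n:ℝ)) else 0) := by
      rw [Finset.mul_sum]
      calc ∑ a, (2*(n:ℝ)) * L (i,a) (j,b)
          = ∑ a, ∑ k, ∑ c, H (i,a) (k,c) * K (j,b) (k,c) := by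
            refine Finset.sum_congr rfl fun a _ => ?_
            rw [hentry, Fintype.sum_prod_type]
        _ = ∑ k, ∑ c, (∑ a, H (i,a) (k,c)) * K (j,b) (k,c) := by
            rw [Finset.sum_comm]
            refine Finset.sum_congr rfl fun k _ => ?_
            rw [Finset.sum_comm]
            refine Finset.sum_congr rfl fun c _ => ?_
            rw [Finset.sum_mul]
        _ = ∑ k, ∑ c, (if i = k then (2*(n:ℝ)) else 0) * K (j,b) (k,c) := by
            refine Finset.sum_congr rfl fun k _ => Finset.sum_congr rfl fun c _ => ?_
            congr 1
            by_cases hik : i = k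
            · subst hik
              simp [hHBush.1 i]
            · simp only [hik, if_false]
              exact (hHBush.2 i k hik).2 c
        _ = ∑ c, (2*(n:ℝ)) * K (j,b) (i,c) := by
            rw [Finset.sum_eq_single i]
            · simp
            · intro k _ hki
              simp [Ne.symm hki]
            · simp
        _ = (2*(n:ℝ)) * ∑ c, K (j,b) (i,c) := by rw [Finset.mul_sum]
        _ = (2*(n:ℝ)) * (if i = j then (2*(n:ℝ)) else 0) := by
            congr 1
            by_cases hij : i = j
            · subst hij
              simp [hKBush.1 i]
            · rw [if_neg hij]
              exact (hKBush.2 j i (Ne.symm hij)).1 b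
    exact mul_left_cancel₀ htwo key
  -- Bush-type of L
  have hLBush : isBushType n L := by
    constructor
    · intro i a b
      have hs : ∑ b, L (i,a) (i,b) = ((2*n : ℕ) : ℝ) := by
        rw [hrow i a i]
        simp
      exact sum_sign_eq_card (fun b => L (i,a) (i,b)) (fun b => hLsign _ _) hs b
    · intro i j hij
      refine ⟨fun a => ?_, fun b => ?_⟩
      · rw [hrow i a j, if_neg hij]
      · rw [hcol i j b, if_neg hij]
  refine ⟨?_, hLBush⟩
  -- Hadamard condition
  have hKtK : Kᵀ * K = ((4 * n ^ 2 : ℕ) : ℝ) • 1 := by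
    have h1 : K * (((4 * n ^ 2 : ℕ) : ℝ)⁻¹ • Kᵀ) = 1 := by
      rw [Matrix.mul_smul, hKHad, smul_smul, inv_mul_cancel₀ hc, one_smul]
    have h2 := mul_eq_one_comm.mp h1
    calc Kᵀ * K = ((4 * n ^ 2 : ℕ) : ℝ) • ((((4 * n ^ 2 : ℕ) : ℝ)⁻¹ • Kᵀ) * K) := by
          rw [Matrix.smul_mul, smul_smul, mul_inv_cancel₀ hc, one_smul]
      _ = ((4 * n ^ 2 : ℕ) : ℝ) • 1 := by rw [h2]
  have hsq : (2*(n:ℝ)) * (2*(n:ℝ)) = ((4 * n ^ 2 : ℕ) : ℝ) := by push_cast; ring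
  have hbig : ((4 * n ^ 2 : ℕ) : ℝ) • (L * Lᵀ)
      = ((4 * n ^ 2 : ℕ) : ℝ) • (((4 * n ^ 2 : ℕ) : ℝ) • (1 : Matrix _ _ ℝ)) := by
    calc ((4 * n ^ 2 : ℕ) : ℝ) • (L * Lᵀ)
        = ((2*(n:ℝ)) • L) * ((2*(n:ℝ)) • L)ᵀ := by
          rw [Matrix.transpose_smul, Matrix.smul_mul, Matrix.mul_smul, smul_smul, hsq]
      _ = (H * Kᵀ) * (H * Kᵀ)ᵀ := by rw [hU]
      _ = H * (Kᵀ * K) * Hᵀ := by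
          rw [Matrix.transpose_mul, Matrix.transpose_transpose]
          rw [Matrix.mul_assoc, Matrix.mul_assoc, Matrix.mul_assoc]
      _ = ((4 * n ^ 2 : ℕ) : ℝ) • (H * Hᵀ) := by
          rw [hKtK, Matrix.mul_smul, Matrix.mul_one, Matrix.smul_mul]
      _ = ((4 * n ^ 2 : ℕ) : ℝ) • (((4 * n ^ 2 : ℕ) : ℝ) • (1 : Matrix _ _ ℝ)) := by
          rw [hHHad]
  exact smul_right_injective _ hc hbig
end

section
/- Let H₁,…,H_m be mutually unbiased regular Hadamard matrices of order 4n² (each with constant row/column sum 2n). Let M be the Gram matrix of the (m+1) block rows [I, H₁/2n, …, H_m/2n], i.e., M is the (m+1)(4n²)×(m+1)(4n²) matrix with (i,j)-block equal to G_i·G_jᵀ where G₀ = I and G_k = H_k/(2n). Then M² = (m+1)·M. -/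
open Matrix BigOperators

/-- For mutually unbiased regular Hadamard matrices `H₁, …, H_m` of order `4n²`,
the Gram matrix `M` of `[I, H₁/2n, …, H_m/2n]` satisfies `M² = (m+1)·M`. -/
theorem gram_of_MURH_sq (n m : ℕ) (hn : 0 < n)
    (H : Fin m → Matrix (Fin (4*n^2)) (Fin (4*n^2)) ℝ)
    (hsign : ∀ k, signMatrix (H k))
    (hHad : ∀ k, H k * (H k)ᵀ = ((4 * n ^ 2 : ℕ) : ℝ) • 1)
    (hrow : ∀ k p, ∑ q, H k p q = 2 * (n : ℝ))
    (hcol : ∀ k q, ∑ p, H k p q = 2 * (n : ℝ))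
    (hmub : ∀ k l, k ≠ l → ∃ L, signMatrix L ∧ H k * (H l)ᵀ = (2 * (n : ℝ)) • L)
    (G : Fin (m+1) → Matrix (Fin (4*n^2)) (Fin (4*n^2)) ℝ)
    (hG0 : G 0 = 1)
    (hGs : ∀ k : Fin m, G k.succ = (2 * (n : ℝ))⁻¹ • H k)
    (M : Matrix (Fin (m+1) × Fin (4*n^2)) (Fin (m+1) × Fin (4*n^2)) ℝ)
    (hM : ∀ i j p q, M (i, p) (j, q) = (G i * (G j)ᵀ) p q) :
    M * M = ((m : ℝ) + 1) • M := by
  have hn' : (2*(n:ℝ)) ≠ 0 := by positivity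
  have horth : ∀ k, G k * (G k)ᵀ = 1 := by
    intro k
    induction k using Fin.cases with
    | zero => simp [hG0]
    | succ k =>
      rw [hGs, Matrix.transpose_smul, Matrix.smul_mul, Matrix.mul_smul, hHad,
        smul_smul, smul_smul]
      have : (2*(n:ℝ))⁻¹ * ((2*(n:ℝ))⁻¹ * ((4 * n ^ 2 : ℕ) : ℝ)) = 1 := by
        push_cast
        field_simp
        ring
      rw [mul_assoc, this, one_smul]
  have horth' : ∀ k, (G k)ᵀ * G k = 1 := fun k => mul_eq_one_comm.mp (horth k)
  ext ⟨i, p⟩ ⟨j, q⟩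
  rw [Matrix.mul_apply, Matrix.smul_apply, Fintype.sum_prod_type]
  have hk : ∀ k : Fin (m+1), ∑ r, M (i, p) (k, r) * M (k, r) (j, q)
      = (G i * (G j)ᵀ) p q := by
    intro k
    simp only [hM]
    rw [← Matrix.mul_apply, Matrix.mul_assoc, ← Matrix.mul_assoc ((G k)ᵀ),
      horth', Matrix.one_mul]
  rw [Finset.sum_congr rfl (fun k _ => hk k), Finset.sum_const, Finset.card_univ,
    Fintype.card_fin, hM, nsmul_eq_mul, smul_eq_mul]
  push_cast
  ring
end

section
/- With M the Gram matrix as above built from m ≥ 2 mutually unbiased regular Hadamard matrices of order 4n², the matrix B = 2n(M − I) has all entries in {−1, 0, 1}, and writing B = B₁ − B₂ with B₁, B₂ disjoint (0,1)-matrices, one has B₁ + B₂ = (J_{m+1} − I_{m+1}) ⊗ J_{4n²}. -/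
open Matrix BigOperators

/-- For `m ≥ 2` mutually unbiased regular Hadamard matrices of order `4n²`, the
matrix `B = 2n(M − I)` has entries in `{−1,0,1}`, and its positive and negative
parts `B₁, B₂` satisfy `B₁ + B₂ = (J_{m+1} − I_{m+1}) ⊗ J_{4n²}`. -/
theorem gram_B_entries_and_support (n m : ℕ) (hn : 0 < n) (hm : 2 ≤ m)
    (H : Fin m → Matrix (Fin (4*n^2)) (Fin (4*n^2)) ℝ)
    (hsign : ∀ k, signMatrix (H k))
    (hHad : ∀ k, H k * (H k)ᵀ = ((4 * n ^ 2 : ℕ) : ℝ) • 1)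
    (hrow : ∀ k p, ∑ q, H k p q = 2 * (n : ℝ))
    (hcol : ∀ k q, ∑ p, H k p q = 2 * (n : ℝ))
    (hmub : ∀ k l, k ≠ l → ∃ L, signMatrix L ∧ H k * (H l)ᵀ = (2 * (n : ℝ)) • L)
    (G : Fin (m+1) → Matrix (Fin (4*n^2)) (Fin (4*n^2)) ℝ)
    (hG0 : G 0 = 1)
    (hGs : ∀ k : Fin m, G k.succ = (2 * (n : ℝ))⁻¹ • H k)
    (M : Matrix (Fin (m+1) × Fin (4*n^2)) (Fin (m+1) × Fin (4*n^2)) ℝ)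
    (hM : ∀ i j p q, M (i, p) (j, q) = (G i * (G j)ᵀ) p q)
    (B₁ B₂ : Matrix (Fin (m+1) × Fin (4*n^2)) (Fin (m+1) × Fin (4*n^2)) ℝ)
    (hB₁01 : ∀ x y, B₁ x y = 0 ∨ B₁ x y = 1)
    (hB₂01 : ∀ x y, B₂ x y = 0 ∨ B₂ x y = 1)
    (hdisj : ∀ x y, B₁ x y = 0 ∨ B₂ x y = 0)
    (hB : B₁ - B₂ = (2 * (n : ℝ)) • (M - 1)) :
    (∀ x y, ((2 * (n : ℝ)) • (M - 1)) x y ∈ ({-1, 0, 1} : Set ℝ)) ∧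
    B₁ + B₂ = Matrix.of (fun x y : Fin (m+1) × Fin (4*n^2) =>
      if x.1 = y.1 then (0 : ℝ) else 1) := by
  have h2n : (2 * (n : ℝ)) ≠ 0 := by positivity
  have hGG : ∀ i, G i * (G i)ᵀ = 1 := by
    intro i
    induction i using Fin.cases with
    | zero => rw [hG0]; simp
    | succ k =>
      rw [hGs, Matrix.transpose_smul, Matrix.smul_mul, Matrix.mul_smul, hHad,
        smul_smul, smul_smul]
      have : (2 * (n : ℝ))⁻¹ * (2 * (n : ℝ))⁻¹ * ((4 * n ^ 2 : ℕ) : ℝ) = 1 := by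
        push_cast
        field_simp
        ring
      rw [this, one_smul]
  have hoff : ∀ i j, i ≠ j → ∃ L, signMatrix L ∧
      G i * (G j)ᵀ = (2 * (n : ℝ))⁻¹ • L := by
    intro i j hij
    induction i using Fin.cases with
    | zero =>
      induction j using Fin.cases with
      | zero => exact absurd rfl hij
      | succ l =>
        refine ⟨(H l)ᵀ, fun p q => hsign l q p, ?_⟩
        rw [hG0, hGs, Matrix.transpose_smul, Matrix.one_mul]
    | succ k =>
      induction j using Fin.cases with
      | zero =>
        refine ⟨H k, hsign k, ?_⟩
        rw [hG0, hGs, Matrix.transpose_one, Matrix.mul_one]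
      | succ l =>
        have hkl : k ≠ l := fun h => hij (by rw [h])
        obtain ⟨L, hL, hHL⟩ := hmub k l hkl
        refine ⟨L, hL, ?_⟩
        rw [hGs, hGs, Matrix.transpose_smul, Matrix.smul_mul, Matrix.mul_smul,
          hHL, smul_smul, smul_smul]
        congr 1
        field_simp
  have hdiag : ∀ (i : Fin (m+1)) p q,
      ((2 * (n : ℝ)) • (M - 1)) (i, p) (i, q) = 0 := by
    intro i p q
    have h1 : (1 : Matrix (Fin (m+1) × Fin (4*n^2)) (Fin (m+1) × Fin (4*n^2)) ℝ)
        (i, p) (i, q) = (1 : Matrix (Fin (4*n^2)) (Fin (4*n^2)) ℝ) p q := by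
      simp [Matrix.one_apply, Prod.ext_iff]
    simp only [Matrix.smul_apply, Matrix.sub_apply, h1, hM, hGG, smul_eq_mul]
    ring
  have hoffe : ∀ (i j : Fin (m+1)) p q, i ≠ j →
      ((2 * (n : ℝ)) • (M - 1)) (i, p) (j, q) = 1 ∨
      ((2 * (n : ℝ)) • (M - 1)) (i, p) (j, q) = -1 := by
    intro i j p q hij
    obtain ⟨L, hL, hGL⟩ := hoff i j hij
    have h1 : (1 : Matrix (Fin (m+1) × Fin (4*n^2)) (Fin (m+1) × Fin (4*n^2)) ℝ)
        (i, p) (j, q) = 0 := by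
      simp [Matrix.one_apply, Prod.ext_iff, hij]
    have : ((2 * (n : ℝ)) • (M - 1)) (i, p) (j, q) = L p q := by
      simp only [Matrix.smul_apply, Matrix.sub_apply, h1, hM, hGL, smul_eq_mul,
        Matrix.smul_apply]
      field_simp
      ring
    rw [this]
    exact hL p q
  constructor
  · rintro ⟨i, p⟩ ⟨j, q⟩
    by_cases hij : i = j
    · subst hij
      simp [hdiag i p q]
    · rcases hoffe i j p q hij with h | h <;> simp [h]
  · ext ⟨i, p⟩ ⟨j, q⟩
    have hBv : B₁ (i, p) (j, q) - B₂ (i, p) (j, q)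
        = ((2 * (n : ℝ)) • (M - 1)) (i, p) (j, q) := by
      rw [← Matrix.sub_apply, hB]
    simp only [Matrix.add_apply, Matrix.of_apply]
    by_cases hij : i = j
    · rw [if_pos hij]
      subst hij
      rw [hdiag i p q] at hBv
      rcases hdisj (i, p) (i, q) with hd | hd <;>
        rcases hB₁01 (i, p) (i, q) with h1 | h1 <;>
        rcases hB₂01 (i, p) (i, q) with h2 | h2 <;> linarith
    · rw [if_neg hij]
      rcases hoffe i j p q hij with h | h <;> rw [h] at hBv <;>
        rcases hdisj (i, p) (j, q) with hd | hd <;>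
        rcases hB₁01 (i, p) (j, q) with h1 | h1 <;>
        rcases hB₂01 (i, p) (j, q) with h2 | h2 <;> linarith
end

section
/- Let H₁,…,H_m be mutually unbiased regular Hadamard matrices of order 4n², B = B₁ − B₂ as above, and B₃ = I_{m+1} ⊗ J_{4n²} − I. Then B₁·B₃ = (2n²+n−1)B₁ + (2n²+n)B₂ and B₂·B₃ = (2n²−n)B₁ + (2n²−n−1)B₂. -/
open Matrix BigOperators

/-- For mutually unbiased regular Hadamard matrices of order `4n²`, with
`B₁, B₂` the positive and negative parts of `B = 2n(M−I)` and
`B₃ = I_{m+1} ⊗ J_{4n²} − I`, one has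
`B₁·B₃ = (2n²+n−1)B₁ + (2n²+n)B₂` and `B₂·B₃ = (2n²−n)B₁ + (2n²−n−1)B₂`. -/
theorem gram_B_times_B₃ (n m : ℕ) (hn : 0 < n) (hm : 2 ≤ m)
    (H : Fin m → Matrix (Fin (4*n^2)) (Fin (4*n^2)) ℝ)
    (hsign : ∀ k, signMatrix (H k))
    (hHad : ∀ k, H k * (H k)ᵀ = ((4 * n ^ 2 : ℕ) : ℝ) • 1)
    (hrow : ∀ k p, ∑ q, H k p q = 2 * (n : ℝ))
    (hcol : ∀ k q, ∑ p, H k p q = 2 * (n : ℝ))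
    (hmub : ∀ k l, k ≠ l → ∃ L, signMatrix L ∧ H k * (H l)ᵀ = (2 * (n : ℝ)) • L)
    (G : Fin (m+1) → Matrix (Fin (4*n^2)) (Fin (4*n^2)) ℝ)
    (hG0 : G 0 = 1)
    (hGs : ∀ k : Fin m, G k.succ = (2 * (n : ℝ))⁻¹ • H k)
    (M : Matrix (Fin (m+1) × Fin (4*n^2)) (Fin (m+1) × Fin (4*n^2)) ℝ)
    (hM : ∀ i j p q, M (i, p) (j, q) = (G i * (G j)ᵀ) p q)
    (B₁ B₂ B₃ : Matrix (Fin (m+1) × Fin (4*n^2)) (Fin (m+1) × Fin (4*n^2)) ℝ)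
    (hB₁01 : ∀ x y, B₁ x y = 0 ∨ B₁ x y = 1)
    (hB₂01 : ∀ x y, B₂ x y = 0 ∨ B₂ x y = 1)
    (hdisj : ∀ x y, B₁ x y = 0 ∨ B₂ x y = 0)
    (hB : B₁ - B₂ = (2 * (n : ℝ)) • (M - 1))
    (hB₃ : B₃ = Matrix.of (fun x y : Fin (m+1) × Fin (4*n^2) =>
      (if x.1 = y.1 then (1 : ℝ) else 0) - (if x = y then 1 else 0))) :
    B₁ * B₃ = (2 * (n : ℝ)^2 + n - 1) • B₁ + (2 * (n : ℝ)^2 + n) • B₂ ∧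
    B₂ * B₃ = (2 * (n : ℝ)^2 - n) • B₁ + (2 * (n : ℝ)^2 - n - 1) • B₂ := by
  have hnR : (n : ℝ) ≠ 0 := Nat.cast_ne_zero.mpr hn.ne'
  have hn2 : (2 * (n : ℝ)) ≠ 0 := by positivity
  -- row sums of G are all 1
  have hGrow : ∀ (i : Fin (m+1)) p, ∑ r, G i p r = 1 := by
    intro i
    rcases Fin.eq_zero_or_eq_succ i with rfl | ⟨k, rfl⟩
    · intro p; simp [hG0, Matrix.one_apply]
    · intro p
      simp only [hGs, Matrix.smul_apply, smul_eq_mul, ← Finset.mul_sum, hrow]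
      exact inv_mul_cancel₀ hn2
  -- column sums of G are all 1
  have hGcol : ∀ (j : Fin (m+1)) r, ∑ q, G j q r = 1 := by
    intro j
    rcases Fin.eq_zero_or_eq_succ j with rfl | ⟨k, rfl⟩
    · intro r; simp [hG0, Matrix.one_apply]
    · intro r
      simp only [hGs, Matrix.smul_apply, smul_eq_mul, ← Finset.mul_sum, hcol]
      exact inv_mul_cancel₀ hn2
  -- block row sums of M are all 1
  have hMsum : ∀ (i : Fin (m+1)) p (j : Fin (m+1)), ∑ q, M (i, p) (j, q) = 1 := by
    intro i p j
    simp only [hM, Matrix.mul_apply, Matrix.transpose_apply]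
    rw [Finset.sum_comm]
    calc ∑ r, ∑ q, G i p r * G j q r = ∑ r, G i p r * ∑ q, G j q r := by
          simp [Finset.mul_sum]
      _ = 1 := by simp [hGcol, hGrow]
  -- diagonal blocks of M are the identity
  have hGdiag : ∀ i : Fin (m+1), G i * (G i)ᵀ = 1 := by
    intro i
    rcases Fin.eq_zero_or_eq_succ i with rfl | ⟨k, rfl⟩
    · simp [hG0]
    · rw [hGs, Matrix.transpose_smul, Matrix.smul_mul, Matrix.mul_smul, hHad,
        smul_smul, smul_smul]
      have h1 : (2 * (n:ℝ))⁻¹ * (2 * (n:ℝ))⁻¹ * ((4 * n ^ 2 : ℕ) : ℝ) = 1 := by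
        push_cast
        field_simp
        ring
      rw [h1, one_smul]
  -- B₁ and B₂ vanish on diagonal blocks
  have hdiagB : ∀ (i : Fin (m+1)) p q, B₁ (i,p) (i,q) = 0 ∧ B₂ (i,p) (i,q) = 0 := by
    intro i p q
    have h := congrFun (congrFun hB (i,p)) (i,q)
    simp only [Matrix.sub_apply, Matrix.smul_apply, smul_eq_mul] at h
    rw [hM, hGdiag] at h
    have hone : (1 : Matrix (Fin (m+1) × Fin (4*n^2)) (Fin (m+1) × Fin (4*n^2)) ℝ)
        (i,p) (i,q) = (1 : Matrix (Fin (4*n^2)) (Fin (4*n^2)) ℝ) p q := by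
      simp [Matrix.one_apply, Prod.ext_iff]
    rw [hone, sub_self, mul_zero] at h
    rcases hdisj (i,p) (i,q) with h0 | h0 <;> constructor <;> linarith
  -- off-diagonal entries of M are ±(2n)⁻¹
  have hMoff : ∀ (i j : Fin (m+1)) p q, i ≠ j →
      M (i,p) (j,q) = (2*(n:ℝ))⁻¹ ∨ M (i,p) (j,q) = -(2*(n:ℝ))⁻¹ := by
    intro i j p q hij
    rw [hM]
    rcases Fin.eq_zero_or_eq_succ i with rfl | ⟨k, rfl⟩ <;>
      rcases Fin.eq_zero_or_eq_succ j with rfl | ⟨l, rfl⟩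
    · exact absurd rfl hij
    · rw [hG0, Matrix.one_mul, hGs, Matrix.transpose_smul, Matrix.smul_apply,
        Matrix.transpose_apply, smul_eq_mul]
      rcases hsign l q p with h | h <;> rw [h] <;> [left; right] <;> ring
    · rw [hG0, Matrix.transpose_one, Matrix.mul_one, hGs, Matrix.smul_apply, smul_eq_mul]
      rcases hsign k p q with h | h <;> rw [h] <;> [left; right] <;> ring
    · have hkl : k ≠ l := fun h => hij (by rw [h])
      obtain ⟨L, hL, hHL⟩ := hmub k l hkl
      rw [hGs, hGs, Matrix.transpose_smul, Matrix.smul_mul, Matrix.mul_smul, hHL]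
      simp only [smul_smul, Matrix.smul_apply, smul_eq_mul]
      rcases hL p q with h | h <;> rw [h] <;> [left; right] <;> field_simp
  -- on off-diagonal blocks, B₁ + B₂ = 1
  have hsum1 : ∀ x y : Fin (m+1) × Fin (4*n^2), x.1 ≠ y.1 →
      B₁ x y + B₂ x y = 1 := by
    intro x y hxy
    have h := congrFun (congrFun hB x) y
    simp only [Matrix.sub_apply, Matrix.smul_apply, smul_eq_mul] at h
    have hone : (1 : Matrix (Fin (m+1) × Fin (4*n^2)) (Fin (m+1) × Fin (4*n^2)) ℝ)
        x y = 0 := by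
      rw [Matrix.one_apply]
      exact if_neg (fun h' => hxy (congrArg Prod.fst h'))
    rw [hone, sub_zero] at h
    obtain ⟨i, p⟩ := x; obtain ⟨j, q⟩ := y
    rcases hMoff i j p q hxy with hε | hε <;> rw [hε] at h
    · rw [mul_inv_cancel₀ hn2] at h
      rcases hB₁01 (i,p) (j,q) with h1|h1 <;> rcases hB₂01 (i,p) (j,q) with h2|h2 <;>
        rw [h1, h2] at h ⊢ <;> first | linarith | norm_num
    · rw [mul_neg, mul_inv_cancel₀ hn2] at h
      rcases hB₁01 (i,p) (j,q) with h1|h1 <;> rcases hB₂01 (i,p) (j,q) with h2|h2 <;>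
        rw [h1, h2] at h ⊢ <;> first | linarith | norm_num
  -- off-diagonal block row sums of B₁, B₂
  have hS : ∀ (x : Fin (m+1) × Fin (4*n^2)) (j : Fin (m+1)), j ≠ x.1 →
      (∑ q, B₁ x (j, q)) = 2*(n:ℝ)^2 + n ∧ (∑ q, B₂ x (j, q)) = 2*(n:ℝ)^2 - n := by
    intro x j hj
    have hadd : (∑ q, B₁ x (j, q)) + (∑ q, B₂ x (j, q)) = 4 * (n:ℝ)^2 := by
      rw [← Finset.sum_add_distrib]
      have h1 : ∀ q : Fin (4*n^2), B₁ x (j,q) + B₂ x (j,q) = 1 := fun q =>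
        hsum1 x (j,q) (fun h => hj h.symm)
      rw [Finset.sum_congr rfl (fun q _ => h1 q), Finset.sum_const, Finset.card_univ,
        Fintype.card_fin, nsmul_eq_mul, mul_one]
      push_cast; ring
    have hsub : (∑ q, B₁ x (j, q)) - (∑ q, B₂ x (j, q)) = 2 * (n:ℝ) := by
      rw [← Finset.sum_sub_distrib]
      have hterm : ∀ q : Fin (4*n^2), B₁ x (j,q) - B₂ x (j,q) = 2*(n:ℝ) * M x (j,q) := by
        intro q
        have h := congrFun (congrFun hB x) (j,q)
        simp only [Matrix.sub_apply, Matrix.smul_apply, smul_eq_mul] at h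
        have hone : (1 : Matrix (Fin (m+1) × Fin (4*n^2)) (Fin (m+1) × Fin (4*n^2)) ℝ)
            x (j,q) = 0 := by
          rw [Matrix.one_apply]
          exact if_neg (fun h' => hj (congrArg Prod.fst h').symm)
        rw [hone, sub_zero] at h
        exact h
      rw [Finset.sum_congr rfl (fun q _ => hterm q), ← Finset.mul_sum]
      obtain ⟨i, p⟩ := x
      rw [hMsum i p j, mul_one]
    constructor <;> linarith
  -- diagonal block row sums are 0
  have hS0 : ∀ (x : Fin (m+1) × Fin (4*n^2)),
      (∑ q, B₁ x (x.1, q)) = 0 ∧ (∑ q, B₂ x (x.1, q)) = 0 := by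
    rintro ⟨i, p⟩
    constructor
    · exact Finset.sum_eq_zero fun q _ => (hdiagB i p q).1
    · exact Finset.sum_eq_zero fun q _ => (hdiagB i p q).2
  -- entrywise formula for C * B₃
  have key : ∀ (C : Matrix (Fin (m+1) × Fin (4*n^2)) (Fin (m+1) × Fin (4*n^2)) ℝ)
      (x y : Fin (m+1) × Fin (4*n^2)),
      (C * B₃) x y = (∑ q, C x (y.1, q)) - C x y := by
    intro C x y
    rw [hB₃]
    simp only [Matrix.mul_apply, Matrix.of_apply, mul_sub]
    rw [Finset.sum_sub_distrib]
    congr 1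
    · rw [Fintype.sum_prod_type]
      simp only [mul_ite, mul_one, mul_zero]
      have h1 : ∀ j : Fin (m+1), (∑ q, if j = y.1 then C x (j,q) else 0)
          = if j = y.1 then (∑ q, C x (j,q)) else 0 := by
        intro j; split <;> simp
      rw [Finset.sum_congr rfl (fun j _ => h1 j)]
      simp
    · simp only [mul_ite, mul_one, mul_zero]
      simp
  constructor <;> ext x y <;> rw [key] <;>
    simp only [Matrix.add_apply, Matrix.smul_apply, smul_eq_mul] <;>
    by_cases hxy : y.1 = x.1
  · have e1 : B₁ x y = 0 := by
      obtain ⟨i, p⟩ := x; obtain ⟨j, q⟩ := y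
      have hji : j = i := hxy
      subst hji
      exact (hdiagB _ p q).1
    have e2 : B₂ x y = 0 := by
      obtain ⟨i, p⟩ := x; obtain ⟨j, q⟩ := y
      have hji : j = i := hxy
      subst hji
      exact (hdiagB _ p q).2
    rw [hxy, (hS0 x).1, e1, e2]; ring
  · have h1 := (hS x y.1 hxy).1
    have hsum := hsum1 x y (fun h => hxy h.symm)
    have e2 : B₂ x y = 1 - B₁ x y := by linarith
    rw [h1, e2]; ring
  · have e1 : B₁ x y = 0 := by
      obtain ⟨i, p⟩ := x; obtain ⟨j, q⟩ := y
      have hji : j = i := hxy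
      subst hji
      exact (hdiagB _ p q).1
    have e2 : B₂ x y = 0 := by
      obtain ⟨i, p⟩ := x; obtain ⟨j, q⟩ := y
      have hji : j = i := hxy
      subst hji
      exact (hdiagB _ p q).2
    rw [hxy, (hS0 x).2, e1, e2]; ring
  · have h2 := (hS x y.1 hxy).2
    have hsum := hsum1 x y (fun h => hxy h.symm)
    have e1 : B₁ x y = 1 - B₂ x y := by linarith
    rw [h2, e1]; ring
end

section
/- In the 5-class scheme arising from mutually unbiased Bush-type Hadamard matrices, (A₄ + A₅)(A₄ − A₅) = 0; consequently A₄² = A₅². -/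
open Matrix BigOperators

/-- In the 5-class scheme arising from mutually unbiased Bush-type Hadamard
matrices, `(A₄ + A₅)(A₄ − A₅) = 0`, hence `A₄² = A₅²`. -/
theorem mubh_A4_A5_products (n m : ℕ) (hn : 0 < n)
    (H : Fin m → Matrix (Fin (2*n) × Fin (2*n)) (Fin (2*n) × Fin (2*n)) ℝ)
    (hsign : ∀ k, signMatrix (H k))
    (hHad : ∀ k, H k * (H k)ᵀ = ((4 * n ^ 2 : ℕ) : ℝ) • 1)
    (hBush : ∀ k, isBushType n (H k))
    (hmub : ∀ k l, k ≠ l → ∃ L, signMatrix L ∧ H k * (H l)ᵀ = (2 * (n : ℝ)) • L)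
    (G : Fin (m+1) → Matrix (Fin (2*n) × Fin (2*n)) (Fin (2*n) × Fin (2*n)) ℝ)
    (hG0 : G 0 = 1)
    (hGs : ∀ k : Fin m, G k.succ = (2 * (n : ℝ))⁻¹ • H k)
    (M : Matrix (Fin (m+1) × Fin (2*n) × Fin (2*n)) (Fin (m+1) × Fin (2*n) × Fin (2*n)) ℝ)
    (hM : ∀ i j p q, M (i, p) (j, q) = (G i * (G j)ᵀ) p q)
    (B₁ B₂ : Matrix (Fin (m+1) × Fin (2*n) × Fin (2*n)) (Fin (m+1) × Fin (2*n) × Fin (2*n)) ℝ)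
    (hB₁01 : ∀ x y, B₁ x y = 0 ∨ B₁ x y = 1)
    (hB₂01 : ∀ x y, B₂ x y = 0 ∨ B₂ x y = 1)
    (hdisj : ∀ x y, B₁ x y = 0 ∨ B₂ x y = 0)
    (hB : B₁ - B₂ = (2 * (n : ℝ)) • (M - 1))
    (A₀ A₁ A₂ A₃ A₄ A₅ : Matrix (Fin (m+1) × Fin (2*n) × Fin (2*n)) (Fin (m+1) × Fin (2*n) × Fin (2*n)) ℝ)
    (hA₀ : A₀ = 1)
    (hA₁ : A₁ = Matrix.of (fun x y : Fin (m+1) × Fin (2*n) × Fin (2*n) =>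
      if x.1 = y.1 ∧ x.2.1 = y.2.1 ∧ x.2.2 ≠ y.2.2 then (1 : ℝ) else 0))
    (hA₂ : A₂ = Matrix.of (fun x y : Fin (m+1) × Fin (2*n) × Fin (2*n) =>
      if x.1 = y.1 ∧ x.2.1 ≠ y.2.1 then (1 : ℝ) else 0))
    (hA₃ : A₃ = Matrix.of (fun x y : Fin (m+1) × Fin (2*n) × Fin (2*n) =>
      if x.1 ≠ y.1 ∧ x.2.1 = y.2.1 then (1 : ℝ) else 0))
    (hA₄ : A₄ = B₁ - A₃)
    (hA₅ : A₅ = B₂)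
    :
    (A₄ + A₅) * (A₄ - A₅) = 0 ∧ A₄ * A₄ = A₅ * A₅ := by

  -- basic numeric facts
  have hnR : (0:ℝ) < (n:ℝ) := by exact_mod_cast hn
  have h2n : (2*(n:ℝ)) ≠ 0 := by positivity
  -- Bush facts
  have hBushDiag : ∀ k i a b, H k (i,a) (i,b) = 1 := fun k => (hBush k).1
  have hRow : ∀ k i j, i ≠ j → ∀ a, ∑ b, H k (i,a) (j,b) = 0 :=
    fun k i j h => ((hBush k).2 i j h).1
  have hCol : ∀ k i j, i ≠ j → ∀ b, ∑ a, H k (i,a) (j,b) = 0 :=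
    fun k i j h => ((hBush k).2 i j h).2
  -- sub-block column / row sums of each H
  have hcol1 : ∀ (k : Fin m) b e f, ∑ a, H k (b,a) (e,f) = if b = e then ((2*n:ℕ):ℝ) else 0 := by
    intro k b e f
    by_cases h : b = e
    · subst h
      rw [if_pos rfl]
      rw [Finset.sum_congr rfl (fun a _ => hBushDiag k b a f)]
      simp [Finset.card_univ]
    · rw [if_neg h]
      exact hCol k b e h f
  have hrow1 : ∀ (k : Fin m) c d b, ∑ f, H k (c,d) (b,f) = if c = b then ((2*n:ℕ):ℝ) else 0 := by
    intro k c d b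
    by_cases h : c = b
    · subst h
      rw [if_pos rfl]
      rw [Finset.sum_congr rfl (fun f _ => hBushDiag k c d f)]
      simp [Finset.card_univ]
    · rw [if_neg h]
      exact hRow k c b h d
  -- G i * (G i)ᵀ = 1
  have hGG : ∀ i : Fin (m+1), G i * (G i)ᵀ = 1 := by
    intro i
    induction i using Fin.cases with
    | zero => rw [hG0]; simp
    | succ k =>
      rw [hGs k, Matrix.transpose_smul, Matrix.smul_mul, Matrix.mul_smul, hHad k,
        smul_smul, smul_smul]
      have hs : (2*(n:ℝ))⁻¹ * (2*(n:ℝ))⁻¹ * ((4 * n ^ 2 : ℕ) : ℝ) = 1 := by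
        push_cast
        field_simp
        ring
      rw [hs, one_smul]
  have hMdiag : ∀ (i : Fin (m+1)) p q, (G i * (G i)ᵀ) p q = if p = q then (1:ℝ) else 0 := by
    intro i p q; rw [hGG i, Matrix.one_apply]
  -- off-diagonal entries of M are ± (2n)⁻¹
  have hMoff : ∀ i j : Fin (m+1), i ≠ j → ∀ p q,
      (G i * (G j)ᵀ) p q = (2*(n:ℝ))⁻¹ ∨ (G i * (G j)ᵀ) p q = -(2*(n:ℝ))⁻¹ := by
    intro i j hij p q
    induction i using Fin.cases with
    | zero =>
      induction j using Fin.cases with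
      | zero => exact absurd rfl hij
      | succ l =>
        rw [hG0, one_mul, hGs l, Matrix.transpose_smul, Matrix.smul_apply,
          Matrix.transpose_apply, smul_eq_mul]
        rcases hsign l q p with h | h
        · left; rw [h, mul_one]
        · right; rw [h]; ring
    | succ k =>
      induction j using Fin.cases with
      | zero =>
        rw [hG0, Matrix.transpose_one, mul_one, hGs k, Matrix.smul_apply, smul_eq_mul]
        rcases hsign k p q with h | h
        · left; rw [h, mul_one]
        · right; rw [h]; ring
      | succ l =>
        have hkl : k ≠ l := fun h => hij (by rw [h])
        obtain ⟨L, hL, hHL⟩ := hmub k l hkl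
        rw [hGs k, hGs l, Matrix.transpose_smul, Matrix.smul_mul, Matrix.mul_smul, hHL,
          smul_smul, smul_smul, Matrix.smul_apply, smul_eq_mul]
        have hs : (2*(n:ℝ))⁻¹ * (2*(n:ℝ))⁻¹ * (2*(n:ℝ)) = (2*(n:ℝ))⁻¹ := by
          field_simp
        rw [hs]
        rcases hL p q with h | h
        · left; rw [h, mul_one]
        · right; rw [h]; ring
  -- column sums of off-diagonal blocks of G j (G k)ᵀ
  have hColsum : ∀ j k : Fin (m+1), j ≠ k → ∀ b c d,
      ∑ a, (G j * (G k)ᵀ) (b,a) (c,d) = if b = c then (1:ℝ) else 0 := by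
    intro j k hjk b c d
    induction j using Fin.cases with
    | zero =>
      induction k using Fin.cases with
      | zero => exact absurd rfl hjk
      | succ l =>
        rw [hG0, one_mul, hGs l, Matrix.transpose_smul]
        simp only [Matrix.smul_apply, Matrix.transpose_apply, smul_eq_mul]
        rw [← Finset.mul_sum]
        have : ∑ a, H l (c,d) (b,a) = if c = b then ((2*n:ℕ):ℝ) else 0 := hrow1 l c d b
        rw [this]
        by_cases h : b = c
        · rw [if_pos h, if_pos h.symm]
          push_cast
          field_simp
        · rw [if_neg h, if_neg (fun hh => h hh.symm), mul_zero]
    | succ l =>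
      induction k using Fin.cases with
      | zero =>
        rw [hG0, Matrix.transpose_one, mul_one, hGs l]
        simp only [Matrix.smul_apply, smul_eq_mul]
        rw [← Finset.mul_sum]
        rw [hcol1 l b c d]
        by_cases h : b = c
        · rw [if_pos h, if_pos h]
          push_cast
          field_simp
        · rw [if_neg h, if_neg h, mul_zero]
      | succ l' =>
        have hll : l ≠ l' := fun h => hjk (by rw [h])
        obtain ⟨L, hL, hHL⟩ := hmub l l' hll
        have key : ∑ a, (H l * (H l')ᵀ) (b,a) (c,d)
            = if b = c then ((2*n:ℕ):ℝ) * ((2*n:ℕ):ℝ) else 0 := by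
          simp only [Matrix.mul_apply, Matrix.transpose_apply]
          rw [Finset.sum_comm]
          have step1 : ∀ x : Fin (2*n) × Fin (2*n),
              ∑ a, H l (b,a) x * H l' (c,d) x
                = (if b = x.1 then ((2*n:ℕ):ℝ) else 0) * H l' (c,d) x := by
            intro x
            rw [← Finset.sum_mul]
            congr 1
            exact hcol1 l b x.1 x.2
          rw [Finset.sum_congr rfl (fun x _ => step1 x)]
          rw [Fintype.sum_prod_type]
          have step2 : ∀ e : Fin (2*n),
              ∑ f, (if b = e then ((2*n:ℕ):ℝ) else 0) * H l' (c,d) (e,f)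
                = if b = e then ((2*n:ℕ):ℝ) * (∑ f, H l' (c,d) (e,f)) else 0 := by
            intro e
            by_cases h : b = e
            · simp [h, Finset.mul_sum]
            · simp [h]
          rw [Finset.sum_congr rfl (fun e _ => step2 e)]
          rw [Finset.sum_ite_eq]
          simp only [Finset.mem_univ, if_true]
          rw [hrow1 l' c d b]
          by_cases h : b = c
          · rw [if_pos h, if_pos h.symm]
          · rw [if_neg h, if_neg (fun hh => h hh.symm), mul_zero]
        rw [hGs l, hGs l', Matrix.transpose_smul, Matrix.smul_mul, Matrix.mul_smul, smul_smul]
        simp only [Matrix.smul_apply, smul_eq_mul]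
        rw [← Finset.mul_sum, key]
        by_cases h : b = c
        · rw [if_pos h, if_pos h]
          push_cast
          field_simp
        · rw [if_neg h, if_neg h, mul_zero]
  -- entrywise description of A₄ - A₅
  have hD : ∀ x y : Fin (m+1) × Fin (2*n) × Fin (2*n),
      (A₄ - A₅) x y = (2*(n:ℝ)) * ((G x.1 * (G y.1)ᵀ) x.2 y.2 - (if x = y then 1 else 0))
        - (if x.1 ≠ y.1 ∧ x.2.1 = y.2.1 then 1 else 0) := by
    intro x y
    have hb := congrFun (congrFun hB x) y
    simp only [Matrix.sub_apply, Matrix.smul_apply, Matrix.one_apply, smul_eq_mul] at hb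
    have hmx : M x y = (G x.1 * (G y.1)ᵀ) x.2 y.2 := hM x.1 y.1 x.2 y.2
    rw [hmx] at hb
    rw [hA₄, hA₅, hA₃]
    simp only [Matrix.sub_apply, Matrix.of_apply]
    rw [show B₁ x y - (if x.1 ≠ y.1 ∧ x.2.1 = y.2.1 then (1:ℝ) else 0) - B₂ x y
        = (B₁ x y - B₂ x y) - (if x.1 ≠ y.1 ∧ x.2.1 = y.2.1 then (1:ℝ) else 0) by ring]
    rw [hb]
  -- entrywise description of A₄ + A₅
  have hSum : ∀ x y : Fin (m+1) × Fin (2*n) × Fin (2*n),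
      (A₄ + A₅) x y = if x.1 ≠ y.1 ∧ x.2.1 ≠ y.2.1 then (1:ℝ) else 0 := by
    intro x y
    have hb := congrFun (congrFun hB x) y
    simp only [Matrix.sub_apply, Matrix.smul_apply, Matrix.one_apply, smul_eq_mul] at hb
    have hmx : M x y = (G x.1 * (G y.1)ᵀ) x.2 y.2 := hM x.1 y.1 x.2 y.2
    rw [hmx] at hb
    rw [hA₄, hA₅, hA₃]
    simp only [Matrix.add_apply, Matrix.sub_apply, Matrix.of_apply]
    by_cases hij : x.1 = y.1
    · -- diagonal block: B₁ = B₂ = 0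
      have hone : (if x = y then (1:ℝ) else 0) = if x.2 = y.2 then 1 else 0 := by
        by_cases h2 : x.2 = y.2
        · rw [if_pos h2, if_pos (Prod.ext hij h2)]
        · rw [if_neg h2, if_neg (fun hh => h2 (congrArg Prod.snd hh))]
      rw [hij] at hb
      rw [hMdiag y.1 x.2 y.2] at hb
      rw [hone] at hb
      have hb0 : B₁ x y - B₂ x y = 0 := by
        rw [hb]
        by_cases h2 : x.2 = y.2 <;> simp [h2]
      have hB10 : B₁ x y = 0 ∧ B₂ x y = 0 := by
        rcases hdisj x y with h | h
        · constructor
          · exact h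
          · rw [h] at hb0; linarith
        · constructor
          · rw [h] at hb0; linarith
          · exact h
      rw [hB10.1, hB10.2, if_neg (fun hh => hh.1 hij),
        if_neg (fun hh => hh.1 hij)]
      ring
    · -- off-diagonal block: B₁ + B₂ = 1
      have hxy : x ≠ y := fun hh => hij (congrArg Prod.fst hh)
      rw [if_neg hxy] at hb
      have hval : B₁ x y - B₂ x y = 1 ∨ B₁ x y - B₂ x y = -1 := by
        rcases hMoff x.1 y.1 hij x.2 y.2 with h | h
        · left; rw [hb, h]; field_simp; ring
        · right; rw [hb, h]; field_simp; ring
      have hsum1 : B₁ x y + B₂ x y = 1 := by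
        rcases hB₁01 x y with h1 | h1 <;> rcases hB₂01 x y with h2 | h2 <;>
          rcases hval with h | h <;> linarith
      rw [show B₁ x y - (if x.1 ≠ y.1 ∧ x.2.1 = y.2.1 then (1:ℝ) else 0) + B₂ x y
          = (B₁ x y + B₂ x y) - (if x.1 ≠ y.1 ∧ x.2.1 = y.2.1 then (1:ℝ) else 0) by ring]
      rw [hsum1]
      by_cases h21 : x.2.1 = y.2.1
      · rw [if_pos ⟨hij, h21⟩, if_neg (fun hh => hh.2 h21)]; norm_num
      · rw [if_neg (fun hh => h21 hh.2), if_pos ⟨hij, h21⟩]; norm_num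
  -- diagonal blocks of A₄ - A₅ vanish
  have hDdiag : ∀ (j : Fin (m+1)) p q, (A₄ - A₅) (j,p) (j,q) = 0 := by
    intro j p q
    rw [hD]
    simp only [hMdiag]
    by_cases h2 : p = q
    · simp [h2, Prod.ext_iff]
    · simp [h2, Prod.ext_iff]
  -- column sums of off-diagonal blocks of A₄ - A₅ vanish
  have hDcolsum : ∀ (j k : Fin (m+1)) (b : Fin (2*n)) (c d : Fin (2*n)), j ≠ k →
      ∑ a, (A₄ - A₅) (j,(b,a)) (k,(c,d)) = 0 := by
    intro j k b c d hjk
    have hterm : ∀ a : Fin (2*n), (A₄ - A₅) (j,(b,a)) (k,(c,d))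
        = (2*(n:ℝ)) * (G j * (G k)ᵀ) (b,a) (c,d) - (if b = c then 1 else 0) := by
      intro a
      rw [hD]
      simp only
      rw [if_neg (fun hh : ((j,((b,a) : Fin (2*n) × Fin (2*n))) : Fin (m+1) × Fin (2*n) × Fin (2*n)) = (k,(c,d)) => hjk (congrArg Prod.fst hh))]
      have : (if j ≠ k ∧ b = c then (1:ℝ) else 0) = if b = c then 1 else 0 := by
        by_cases h2 : b = c
        · rw [if_pos ⟨hjk, h2⟩, if_pos h2]
        · rw [if_neg (fun hh => h2 hh.2), if_neg h2]
      rw [this]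
      ring
    rw [Finset.sum_congr rfl (fun a _ => hterm a)]
    rw [Finset.sum_sub_distrib, ← Finset.mul_sum, hColsum j k hjk b c d]
    by_cases h2 : b = c
    · rw [if_pos h2]
      simp only [Finset.sum_const, Finset.card_univ, Fintype.card_fin, nsmul_eq_mul]
      push_cast
      ring
    · rw [if_neg h2]
      simp
  -- the main product
  have P1 : (A₄ + A₅) * (A₄ - A₅) = 0 := by
    ext x y
    obtain ⟨i, p⟩ := x
    obtain ⟨k, r⟩ := y
    rw [Matrix.mul_apply, Matrix.zero_apply, Fintype.sum_prod_type]
    apply Finset.sum_eq_zero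
    intro j _
    rw [Fintype.sum_prod_type]
    apply Finset.sum_eq_zero
    intro b _
    by_cases hjk : j = k
    · subst hjk
      apply Finset.sum_eq_zero
      intro a _
      rw [show ((j,((b,a) : Fin (2*n) × Fin (2*n))) : Fin (m+1) × Fin (2*n) × Fin (2*n)) = (j,(b,a)) from rfl]
      rw [hDdiag j (b,a) r]
      ring
    · have hconst : ∀ a : Fin (2*n),
          (A₄ + A₅) (i,p) (j,(b,a)) * (A₄ - A₅) (j,(b,a)) (k,r)
            = (if i ≠ j ∧ p.1 ≠ b then (1:ℝ) else 0) * (A₄ - A₅) (j,(b,a)) (k,r) := by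
        intro a
        rw [hSum (i,p) (j,(b,a))]
      rw [Finset.sum_congr rfl (fun a _ => hconst a), ← Finset.mul_sum]
      rw [hDcolsum j k b r.1 r.2 hjk]
      ring
  -- symmetry of M
  have hMsymm : ∀ (i j : Fin (m+1)) p q, (G i * (G j)ᵀ) p q = (G j * (G i)ᵀ) q p := by
    intro i j p q
    have : (G j * (G i)ᵀ) q p = ((G j * (G i)ᵀ)ᵀ) p q := rfl
    rw [this, Matrix.transpose_mul, Matrix.transpose_transpose]
  -- symmetry of A₄ - A₅ and A₄ + A₅
  have tD : (A₄ - A₅)ᵀ = A₄ - A₅ := by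
    ext x y
    rw [Matrix.transpose_apply, hD x y, hD y x, hMsymm y.1 x.1 y.2 x.2]
    have e1 : (if y = x then (1:ℝ) else 0) = if x = y then 1 else 0 := by
      by_cases h : x = y
      · rw [if_pos h, if_pos h.symm]
      · rw [if_neg h, if_neg (fun hh => h hh.symm)]
    have e2 : (if y.1 ≠ x.1 ∧ y.2.1 = x.2.1 then (1:ℝ) else 0)
        = if x.1 ≠ y.1 ∧ x.2.1 = y.2.1 then 1 else 0 := by
      by_cases h : x.1 = y.1
      · rw [if_neg (fun hh => hh.1 h.symm), if_neg (fun hh => hh.1 h)]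
      · by_cases h2 : x.2.1 = y.2.1
        · rw [if_pos ⟨fun hh => h hh.symm, h2.symm⟩, if_pos ⟨h, h2⟩]
        · rw [if_neg (fun hh => h2 hh.2.symm), if_neg (fun hh => h2 hh.2)]
    rw [e1, e2]
  have tS : (A₄ + A₅)ᵀ = A₄ + A₅ := by
    ext x y
    rw [Matrix.transpose_apply, hSum x y, hSum y x]
    by_cases h : x.1 = y.1
    · rw [if_neg (fun hh => hh.1 h.symm), if_neg (fun hh => hh.1 h)]
    · by_cases h2 : x.2.1 = y.2.1
      · rw [if_neg (fun hh => hh.2 h2.symm), if_neg (fun hh => hh.2 h2)]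
      · rw [if_pos ⟨fun hh => h hh.symm, fun hh => h2 hh.symm⟩, if_pos ⟨h, h2⟩]
  have P2 : (A₄ - A₅) * (A₄ + A₅) = 0 := by
    have : (A₄ - A₅) * (A₄ + A₅) = ((A₄ + A₅) * (A₄ - A₅))ᵀ := by
      rw [Matrix.transpose_mul, tS, tD]
    rw [this, P1, Matrix.transpose_zero]
  refine ⟨P1, ?_⟩
  have h : (A₄*A₄ - A₅*A₅) + (A₄*A₄ - A₅*A₅) = 0 := by
    have e : (A₄*A₄ - A₅*A₅) + (A₄*A₄ - A₅*A₅)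
        = (A₄ + A₅) * (A₄ - A₅) + (A₄ - A₅) * (A₄ + A₅) := by
      noncomm_ring
    rw [e, P1, P2, add_zero]
  have h3 : (2:ℝ) • (A₄*A₄ - A₅*A₅) = 0 := by
    rw [two_smul]; exact h
  have h2 : A₄*A₄ - A₅*A₅ = 0 := by
    have : A₄*A₄ - A₅*A₅ = (2:ℝ)⁻¹ • ((2:ℝ) • (A₄*A₄ - A₅*A₅)) := by
      rw [smul_smul]; norm_num
    rw [this, h3, smul_zero]
  exact sub_eq_zero.mp h2
end

section
/- In the 5-class scheme arising from mutually unbiased Bush-type Hadamard matrices of order 4n², A₁·A₄ = (n−1)A₄ + nA₅ and A₁·A₅ = nA₄ + (n−1)A₅. -/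
open Matrix BigOperators

/-- In the 5-class scheme arising from mutually unbiased Bush-type Hadamard
matrices of order `4n²`, `A₁·A₄ = (n−1)A₄ + nA₅` and `A₁·A₅ = nA₄ + (n−1)A₅`. -/
theorem mubh_A1_times_A4_A5 (n m : ℕ) (hn : 0 < n)
    (H : Fin m → Matrix (Fin (2*n) × Fin (2*n)) (Fin (2*n) × Fin (2*n)) ℝ)
    (hsign : ∀ k, signMatrix (H k))
    (hHad : ∀ k, H k * (H k)ᵀ = ((4 * n ^ 2 : ℕ) : ℝ) • 1)
    (hBush : ∀ k, isBushType n (H k))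
    (hmub : ∀ k l, k ≠ l → ∃ L, signMatrix L ∧ H k * (H l)ᵀ = (2 * (n : ℝ)) • L)
    (G : Fin (m+1) → Matrix (Fin (2*n) × Fin (2*n)) (Fin (2*n) × Fin (2*n)) ℝ)
    (hG0 : G 0 = 1)
    (hGs : ∀ k : Fin m, G k.succ = (2 * (n : ℝ))⁻¹ • H k)
    (M : Matrix (Fin (m+1) × Fin (2*n) × Fin (2*n)) (Fin (m+1) × Fin (2*n) × Fin (2*n)) ℝ)
    (hM : ∀ i j p q, M (i, p) (j, q) = (G i * (G j)ᵀ) p q)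
    (B₁ B₂ : Matrix (Fin (m+1) × Fin (2*n) × Fin (2*n)) (Fin (m+1) × Fin (2*n) × Fin (2*n)) ℝ)
    (hB₁01 : ∀ x y, B₁ x y = 0 ∨ B₁ x y = 1)
    (hB₂01 : ∀ x y, B₂ x y = 0 ∨ B₂ x y = 1)
    (hdisj : ∀ x y, B₁ x y = 0 ∨ B₂ x y = 0)
    (hB : B₁ - B₂ = (2 * (n : ℝ)) • (M - 1))
    (A₀ A₁ A₂ A₃ A₄ A₅ : Matrix (Fin (m+1) × Fin (2*n) × Fin (2*n)) (Fin (m+1) × Fin (2*n) × Fin (2*n)) ℝ)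
    (hA₀ : A₀ = 1)
    (hA₁ : A₁ = Matrix.of (fun x y : Fin (m+1) × Fin (2*n) × Fin (2*n) =>
      if x.1 = y.1 ∧ x.2.1 = y.2.1 ∧ x.2.2 ≠ y.2.2 then (1 : ℝ) else 0))
    (hA₂ : A₂ = Matrix.of (fun x y : Fin (m+1) × Fin (2*n) × Fin (2*n) =>
      if x.1 = y.1 ∧ x.2.1 ≠ y.2.1 then (1 : ℝ) else 0))
    (hA₃ : A₃ = Matrix.of (fun x y : Fin (m+1) × Fin (2*n) × Fin (2*n) =>
      if x.1 ≠ y.1 ∧ x.2.1 = y.2.1 then (1 : ℝ) else 0))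
    (hA₄ : A₄ = B₁ - A₃)
    (hA₅ : A₅ = B₂)
    :
    A₁ * A₄ = ((n : ℝ) - 1) • A₄ + (n : ℝ) • A₅ ∧
    A₁ * A₅ = (n : ℝ) • A₄ + ((n : ℝ) - 1) • A₅ := by
  have hn' : (0:ℝ) < (n:ℝ) := by exact_mod_cast hn
  have h2n : (2 * (n:ℝ)) ≠ 0 := by positivity
  -- block row sums of a Bush-type matrix
  have hrow : ∀ k (a c b : Fin (2*n)), ∑ e, H k (a,c) (b,e) = if b = a then 2*(n:ℝ) else 0 := by
    intro k a c b
    by_cases hb : b = a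
    · rw [if_pos hb, hb]
      have h1 : ∀ e : Fin (2*n), H k (a,c) (a,e) = 1 := fun e => (hBush k).1 a c e
      rw [Finset.sum_congr rfl (fun e _ => h1 e), Finset.sum_const, Finset.card_univ,
        Fintype.card_fin, nsmul_eq_mul, mul_one]
      push_cast; ring
    · rw [if_neg hb]
      exact ((hBush k).2 a b (fun h => hb h.symm)).1 c
  -- block column sums of a Bush-type matrix
  have hcol : ∀ k (a e b : Fin (2*n)), ∑ c, H k (a,c) (b,e) = if b = a then 2*(n:ℝ) else 0 := by
    intro k a e b
    by_cases hb : b = a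
    · rw [if_pos hb, hb]
      have h1 : ∀ c : Fin (2*n), H k (a,c) (a,e) = 1 := fun c => (hBush k).1 a c e
      rw [Finset.sum_congr rfl (fun c _ => h1 c), Finset.sum_const, Finset.card_univ,
        Fintype.card_fin, nsmul_eq_mul, mul_one]
      push_cast; ring
    · rw [if_neg hb]
      exact ((hBush k).2 a b (fun h => hb h.symm)).2 e
  -- block row sums of H k * (H l)ᵀ
  have hKrow : ∀ k l (a c b' : Fin (2*n)), ∑ d, (H k * (H l)ᵀ) (a,c) (b',d)
      = if b' = a then (2*(n:ℝ)) * (2*(n:ℝ)) else 0 := by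
    intro k l a c b'
    have step : ∀ d, (H k * (H l)ᵀ) (a,c) (b',d) = ∑ q, H k (a,c) q * H l (b',d) q := by
      intro d; simp [Matrix.mul_apply, Matrix.transpose_apply]
    rw [Finset.sum_congr rfl (fun d _ => step d), Finset.sum_comm]
    have inner : ∀ q : Fin (2*n) × Fin (2*n),
        ∑ d, H k (a,c) q * H l (b',d) q = if q.1 = b' then H k (a,c) q * (2*(n:ℝ)) else 0 := by
      intro q
      rw [← Finset.mul_sum]
      have h1 : ∑ d, H l (b',d) q = if q.1 = b' then 2*(n:ℝ) else 0 := hcol l b' q.2 q.1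
      rw [h1]
      by_cases h : q.1 = b' <;> simp [h]
    rw [Finset.sum_congr rfl (fun q _ => inner q), Fintype.sum_prod_type]
    have pull : ∀ x : Fin (2*n), (∑ x1, if x = b' then H k (a,c) (x,x1) * (2*(n:ℝ)) else 0)
        = if x = b' then (∑ x1, H k (a,c) (x,x1)) * (2*(n:ℝ)) else 0 := by
      intro x; split_ifs with h
      · rw [Finset.sum_mul]
      · simp
    rw [Finset.sum_congr rfl (fun x _ => pull x),
      Finset.sum_ite_eq' Finset.univ b' (fun x => (∑ x1, H k (a,c) (x,x1)) * (2*(n:ℝ)))]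
    simp only [Finset.mem_univ, if_true]
    rw [hrow k a c b']
    by_cases h : b' = a <;> simp [h]
  -- block column sums of H k * (H l)ᵀ
  have hKcol : ∀ k l (a a' d : Fin (2*n)), a' ≠ a → ∑ c, (H k * (H l)ᵀ) (a,c) (a',d) = 0 := by
    intro k l a a' d ha
    have step : ∀ c, (H k * (H l)ᵀ) (a,c) (a',d) = ∑ q, H k (a,c) q * H l (a',d) q := by
      intro c; simp [Matrix.mul_apply, Matrix.transpose_apply]
    rw [Finset.sum_congr rfl (fun c _ => step c), Finset.sum_comm]
    have inner : ∀ q : Fin (2*n) × Fin (2*n),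
        ∑ c, H k (a,c) q * H l (a',d) q = if q.1 = a then (2*(n:ℝ)) * H l (a',d) q else 0 := by
      intro q
      rw [← Finset.sum_mul]
      have h1 : ∑ c, H k (a,c) q = if q.1 = a then 2*(n:ℝ) else 0 := hcol k a q.2 q.1
      rw [h1]
      by_cases h : q.1 = a <;> simp [h]
    rw [Finset.sum_congr rfl (fun q _ => inner q), Fintype.sum_prod_type]
    have pull : ∀ x : Fin (2*n), (∑ x1, if x = a then (2*(n:ℝ)) * H l (a',d) (x,x1) else 0)
        = if x = a then (2*(n:ℝ)) * (∑ x1, H l (a',d) (x,x1)) else 0 := by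
      intro x; split_ifs with h
      · rw [Finset.mul_sum]
      · simp
    rw [Finset.sum_congr rfl (fun x _ => pull x),
      Finset.sum_ite_eq' Finset.univ a (fun x => (2*(n:ℝ)) * (∑ x1, H l (a',d) (x,x1)))]
    simp only [Finset.mem_univ, if_true]
    rw [hrow l a' d a, if_neg (fun h => ha h.symm), mul_zero]
  -- diagonal sub-blocks of H k * (H l)ᵀ are constant 2n (for k ≠ l)
  have hKdiag : ∀ k l, k ≠ l → ∀ (a c d : Fin (2*n)), (H k * (H l)ᵀ) (a,c) (a,d) = 2*(n:ℝ) := by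
    intro k l hkl a c d
    obtain ⟨L, hL, hKL⟩ := hmub k l hkl
    have hsum : ∑ e, L (a,c) (a,e) = 2*(n:ℝ) := by
      have h1 : ∑ e, (H k * (H l)ᵀ) (a,c) (a,e) = (2*(n:ℝ)) * (2*(n:ℝ)) := by
        rw [hKrow k l a c a, if_pos rfl]
      rw [hKL] at h1
      simp only [Matrix.smul_apply, smul_eq_mul] at h1
      rw [← Finset.mul_sum] at h1
      exact mul_left_cancel₀ h2n h1
    have hle : ∀ e : Fin (2*n), (0:ℝ) ≤ 1 - L (a,c) (a,e) := by
      intro e; rcases hL (a,c) (a,e) with h|h <;> rw [h] <;> norm_num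
    have hzero : ∑ e, (1 - L (a,c) (a,e)) = 0 := by
      rw [Finset.sum_sub_distrib, hsum, Finset.sum_const, Finset.card_univ,
        Fintype.card_fin, nsmul_eq_mul, mul_one]
      push_cast; ring
    have hall := (Finset.sum_eq_zero_iff_of_nonneg (fun e _ => hle e)).1 hzero d (Finset.mem_univ d)
    have hLd : L (a,c) (a,d) = 1 := by linarith
    rw [hKL]
    simp [Matrix.smul_apply, hLd]
  -- the master lemma: off-diagonal blocks of the Gram matrix
  have master : ∀ i j : Fin (m+1), i ≠ j →
      ∃ K : Matrix (Fin (2*n) × Fin (2*n)) (Fin (2*n) × Fin (2*n)) ℝ,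
      (∀ p q, (2*(n:ℝ)) * (G i * (G j)ᵀ) p q = K p q) ∧
      (∀ p q, K p q = 1 ∨ K p q = -1) ∧
      (∀ a c d, K (a,c) (a,d) = 1) ∧
      (∀ a a' d, a' ≠ a → ∑ c, K (a,c) (a',d) = 0) := by
    intro i j hij
    rcases Fin.eq_zero_or_eq_succ i with hi | ⟨k, hi⟩ <;>
      rcases Fin.eq_zero_or_eq_succ j with hj | ⟨l, hj⟩ <;> subst hi <;> subst hj
    · exact absurd rfl hij
    · -- i = 0, j = l.succ : K = (H l)ᵀ
      refine ⟨(H l)ᵀ, ?_, ?_, ?_, ?_⟩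
      · intro p q
        rw [hG0, hGs, Matrix.one_mul, Matrix.transpose_smul]
        simp only [Matrix.smul_apply, smul_eq_mul, Matrix.transpose_apply]
        field_simp
      · intro p q; exact hsign l q p
      · intro a c d; exact (hBush l).1 a d c
      · intro a a' d ha
        simp only [Matrix.transpose_apply]
        exact ((hBush l).2 a' a ha).1 d
    · -- i = k.succ, j = 0 : K = H k
      refine ⟨H k, ?_, ?_, ?_, ?_⟩
      · intro p q
        rw [hG0, hGs, Matrix.transpose_one, Matrix.mul_one]
        simp only [Matrix.smul_apply, smul_eq_mul]
        field_simp
      · intro p q; exact hsign k p q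
      · intro a c d; exact (hBush k).1 a c d
      · intro a a' d ha
        exact ((hBush k).2 a a' (fun h => ha h.symm)).2 d
    · -- i = k.succ, j = l.succ, k ≠ l
      have hkl : k ≠ l := by
        intro h; exact hij (by rw [h])
      refine ⟨(2*(n:ℝ))⁻¹ • (H k * (H l)ᵀ), ?_, ?_, ?_, ?_⟩
      · intro p q
        rw [hGs, hGs, Matrix.transpose_smul, Matrix.smul_mul, Matrix.mul_smul]
        simp only [Matrix.smul_apply, smul_eq_mul]
        field_simp
      · intro p q
        obtain ⟨L, hL, hKL⟩ := hmub k l hkl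
        rw [hKL]
        simp only [Matrix.smul_apply, smul_eq_mul]
        rw [inv_mul_cancel_left₀ h2n]
        exact hL p q
      · intro a c d
        simp only [Matrix.smul_apply, smul_eq_mul]
        rw [hKdiag k l hkl a c d, inv_mul_cancel₀ h2n]
      · intro a a' d ha
        simp only [Matrix.smul_apply, smul_eq_mul]
        rw [← Finset.mul_sum, hKcol k l a a' d ha, mul_zero]
  -- diagonal blocks of the Gram matrix are identities
  have hGG : ∀ i : Fin (m+1), G i * (G i)ᵀ = 1 := by
    intro i
    rcases Fin.eq_zero_or_eq_succ i with hi | ⟨k, hi⟩ <;> subst hi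
    · rw [hG0]; simp
    · rw [hGs, Matrix.transpose_smul, Matrix.smul_mul, Matrix.mul_smul, hHad k,
        smul_smul, smul_smul]
      have h1 : (2*(n:ℝ))⁻¹ * (2*(n:ℝ))⁻¹ * ((4 * n ^ 2 : ℕ) : ℝ) = 1 := by
        push_cast; field_simp; ring
      rw [h1, one_smul]
  have hBdiag : ∀ i p q, B₁ (i,p) (i,q) = 0 ∧ B₂ (i,p) (i,q) = 0 := by
    intro i p q
    have hBe : B₁ (i,p) (i,q) - B₂ (i,p) (i,q) = 0 := by
      have h := congrFun (congrFun hB (i,p)) (i,q)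
      simp only [Matrix.sub_apply, Matrix.smul_apply, smul_eq_mul] at h
      rw [h, hM, hGG i]
      by_cases hpq : p = q <;>
        simp [Matrix.one_apply, hpq, Prod.ext_iff]
    rcases hdisj (i,p) (i,q) with h|h <;> rcases hB₁01 (i,p) (i,q) with h1|h1 <;>
      rcases hB₂01 (i,p) (i,q) with h2|h2 <;> exact ⟨by linarith, by linarith⟩
  -- off-diagonal blocks of B₁ - B₂
  have hBoff : ∀ i j p q, i ≠ j →
      B₁ (i,p) (j,q) - B₂ (i,p) (j,q) = 2*(n:ℝ) * (G i * (G j)ᵀ) p q := by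
    intro i j p q hij
    have h := congrFun (congrFun hB (i,p)) (j,q)
    simp only [Matrix.sub_apply, Matrix.smul_apply, smul_eq_mul] at h
    rw [h, hM]
    have h1 : (1 : Matrix (Fin (m+1) × Fin (2*n) × Fin (2*n)) (Fin (m+1) × Fin (2*n) × Fin (2*n)) ℝ) (i,p) (j,q) = 0 := by
      rw [Matrix.one_apply, if_neg]
      intro hc
      exact hij (congrArg Prod.fst hc)
    rw [h1, sub_zero]
  have hsplit : ∀ x y, (B₁ x y - B₂ x y = 1 → B₁ x y = 1 ∧ B₂ x y = 0) ∧
      (B₁ x y - B₂ x y = -1 → B₁ x y = 0 ∧ B₂ x y = 1) := by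
    intro x y
    rcases hB₁01 x y with h1|h1 <;> rcases hB₂01 x y with h2|h2 <;>
      exact ⟨fun h => ⟨by linarith, by linarith⟩, fun h => ⟨by linarith, by linarith⟩⟩
  -- multiplication by A₁ from the left
  have hA1mul : ∀ (X : Matrix (Fin (m+1) × Fin (2*n) × Fin (2*n)) (Fin (m+1) × Fin (2*n) × Fin (2*n)) ℝ)
      (i : Fin (m+1)) (a c : Fin (2*n)) (y : Fin (m+1) × Fin (2*n) × Fin (2*n)),
      (A₁ * X) (i,(a,c)) y = (∑ c', X (i,(a,c')) y) - X (i,(a,c)) y := by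
    intro X i a c y
    rw [Matrix.mul_apply, hA₁]
    have step : ∀ z : Fin (m+1) × Fin (2*n) × Fin (2*n),
        (Matrix.of fun x y : Fin (m+1) × Fin (2*n) × Fin (2*n) =>
          if x.1 = y.1 ∧ x.2.1 = y.2.1 ∧ x.2.2 ≠ y.2.2 then (1:ℝ) else 0) (i,(a,c)) z * X z y
        = (if i = z.1 ∧ a = z.2.1 then X z y else 0) - (if (i,(a,c)) = z then X z y else 0) := by
      intro z
      simp only [Matrix.of_apply]
      obtain ⟨j', a'', c''⟩ := z
      by_cases h1 : i = j' <;> by_cases h2 : a = a'' <;> by_cases h3 : c = c'' <;>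
        simp [h1, h2, h3, Prod.ext_iff]
    rw [Finset.sum_congr rfl (fun z _ => step z), Finset.sum_sub_distrib]
    congr 1
    · have e1 : ∀ z : Fin (m+1) × Fin (2*n) × Fin (2*n),
          (if i = z.1 ∧ a = z.2.1 then X z y else 0)
          = if i = z.1 then (if a = z.2.1 then X z y else 0) else 0 := fun z => by
        rw [ite_and]
      rw [Finset.sum_congr rfl (fun z _ => e1 z), Fintype.sum_prod_type]
      have pull1 : ∀ x : Fin (m+1),
          (∑ p : Fin (2*n) × Fin (2*n), if i = x then (if a = p.1 then X (x,p) y else 0) else 0)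
          = if i = x then (∑ p : Fin (2*n) × Fin (2*n), if a = p.1 then X (x,p) y else 0) else 0 := by
        intro x
        by_cases h : i = x <;> simp [h]
      rw [Finset.sum_congr rfl (fun x _ => pull1 x),
        Finset.sum_ite_eq Finset.univ i
          (fun x => ∑ p : Fin (2*n) × Fin (2*n), if a = p.1 then X (x,p) y else 0)]
      simp only [Finset.mem_univ, if_true, Fintype.sum_prod_type]
      have pull2 : ∀ a'' : Fin (2*n),
          (∑ c' : Fin (2*n), if a = a'' then X (i,(a'',c')) y else 0)
          = if a = a'' then (∑ c' : Fin (2*n), X (i,(a'',c')) y) else 0 := by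
        intro a''
        by_cases h : a = a'' <;> simp [h]
      rw [Finset.sum_congr rfl (fun a'' _ => pull2 a''),
        Finset.sum_ite_eq Finset.univ a (fun a'' => ∑ c' : Fin (2*n), X (i,(a'',c')) y)]
      simp
    · simp
  -- the key pointwise computation
  have key : ∀ (i j : Fin (m+1)) (a a' c d : Fin (2*n)),
      ((∑ c', A₄ (i,(a,c')) (j,(a',d))) = (n:ℝ) * (A₄ (i,(a,c)) (j,(a',d)) + A₅ (i,(a,c)) (j,(a',d)))) ∧
      ((∑ c', A₅ (i,(a,c')) (j,(a',d))) = (n:ℝ) * (A₄ (i,(a,c)) (j,(a',d)) + A₅ (i,(a,c)) (j,(a',d)))) := by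
    intro i j a a' c d
    by_cases hij : i = j
    · subst hij
      have hz : ∀ c' : Fin (2*n), A₄ (i,(a,c')) (i,(a',d)) = 0 ∧ A₅ (i,(a,c')) (i,(a',d)) = 0 := by
        intro c'
        obtain ⟨h1, h2⟩ := hBdiag i (a,c') (a',d)
        constructor
        · rw [hA₄]; simp [Matrix.sub_apply, h1, hA₃]
        · rw [hA₅]; exact h2
      constructor
      · rw [Finset.sum_congr rfl (fun c' _ => (hz c').1), (hz c).1, (hz c).2]; simp
      · rw [Finset.sum_congr rfl (fun c' _ => (hz c').2), (hz c).1, (hz c).2]; simp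
    · obtain ⟨K, hKe, hKsign, hKd, hKc⟩ := master i j hij
      have hBval : ∀ p q, B₁ (i,p) (j,q) - B₂ (i,p) (j,q) = K p q :=
        fun p q => (hBoff i j p q hij).trans (hKe p q)
      have hB12 : ∀ p q, B₁ (i,p) (j,q) = (K p q + 1)/2 ∧ B₂ (i,p) (j,q) = (1 - K p q)/2 := by
        intro p q
        rcases hKsign p q with h|h
        · obtain ⟨e1, e2⟩ := (hsplit (i,p) (j,q)).1 (by rw [hBval p q, h])
          rw [h, e1, e2]; norm_num
        · obtain ⟨e1, e2⟩ := (hsplit (i,p) (j,q)).2 (by rw [hBval p q, h])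
          rw [h, e1, e2]; norm_num
      by_cases ha : a = a'
      · subst ha
        have h4 : ∀ c' : Fin (2*n), A₄ (i,(a,c')) (j,(a,d)) = 0 := by
          intro c'
          rw [hA₄, Matrix.sub_apply, (hB12 (a,c') (a,d)).1, hKd a c' d, hA₃]
          simp [hij]
        have h5 : ∀ c' : Fin (2*n), A₅ (i,(a,c')) (j,(a,d)) = 0 := by
          intro c'
          rw [hA₅, (hB12 (a,c') (a,d)).2, hKd a c' d]
          norm_num
        constructor
        · rw [Finset.sum_congr rfl (fun c' _ => h4 c'), h4 c, h5 c]; simp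
        · rw [Finset.sum_congr rfl (fun c' _ => h5 c'), h4 c, h5 c]; simp
      · have hsumK : ∑ c', K (a,c') (a',d) = 0 := hKc a a' d (fun h => ha h.symm)
        have hA3z : ∀ c' : Fin (2*n), A₃ (i,(a,c')) (j,(a',d)) = 0 := by
          intro c'
          rw [hA₃]; simp [ha]
        have h4 : ∀ c' : Fin (2*n), A₄ (i,(a,c')) (j,(a',d)) = (K (a,c') (a',d) + 1)/2 := by
          intro c'
          rw [hA₄, Matrix.sub_apply, (hB12 (a,c') (a',d)).1, hA3z c', sub_zero]
        have h5 : ∀ c' : Fin (2*n), A₅ (i,(a,c')) (j,(a',d)) = (1 - K (a,c') (a',d))/2 := by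
          intro c'
          rw [hA₅, (hB12 (a,c') (a',d)).2]
        have hcount : ∑ c' : Fin (2*n), (1:ℝ) = 2*(n:ℝ) := by
          rw [Finset.sum_const, Finset.card_univ, Fintype.card_fin, nsmul_eq_mul, mul_one]
          push_cast; ring
        have hhalf : ∑ c' : Fin (2*n), (K (a,c') (a',d) + 1)/2 = (n:ℝ) := by
          rw [← Finset.sum_div, Finset.sum_add_distrib, hsumK, hcount]
          ring
        have hhalf' : ∑ c' : Fin (2*n), (1 - K (a,c') (a',d))/2 = (n:ℝ) := by
          rw [← Finset.sum_div, Finset.sum_sub_distrib, hsumK, hcount]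
          ring
        have hRHS : A₄ (i,(a,c)) (j,(a',d)) + A₅ (i,(a,c)) (j,(a',d)) = 1 := by
          rw [h4 c, h5 c]; ring
        constructor
        · rw [Finset.sum_congr rfl (fun c' _ => h4 c'), hhalf, hRHS, mul_one]
        · rw [Finset.sum_congr rfl (fun c' _ => h5 c'), hhalf', hRHS, mul_one]
  refine ⟨?_, ?_⟩
  · ext x y
    obtain ⟨i, a, c⟩ := x; obtain ⟨j, a', d⟩ := y
    rw [hA1mul A₄ i a c (j,(a',d))]
    have hk := (key i j a a' c d).1
    simp only [Matrix.add_apply, Matrix.smul_apply, smul_eq_mul]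
    rw [hk]; ring
  · ext x y
    obtain ⟨i, a, c⟩ := x; obtain ⟨j, a', d⟩ := y
    rw [hA1mul A₅ i a c (j,(a',d))]
    have hk := (key i j a a' c d).2
    simp only [Matrix.add_apply, Matrix.smul_apply, smul_eq_mul]
    rw [hk]; ring
end

section
/- The number m of mutually unbiased Bush-type Hadamard matrices of order 4n² satisfies m ≤ 2n − 1. -/
open Matrix BigOperators

namespace MUBHAux

/-- commuting four nested sums -/
lemma sum_comm4 {α β γ δ : Type*} [Fintype α] [Fintype β] [Fintype γ] [Fintype δ]
    (f : α → β → γ → δ → ℝ) :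
    (∑ p, ∑ q, ∑ a, ∑ b, f p q a b) = ∑ a, ∑ b, ∑ p, ∑ q, f p q a b := calc
  (∑ p, ∑ q, ∑ a, ∑ b, f p q a b) = ∑ p, ∑ a, ∑ q, ∑ b, f p q a b :=
    Finset.sum_congr rfl fun p _ => Finset.sum_comm
  _ = ∑ a, ∑ p, ∑ q, ∑ b, f p q a b := Finset.sum_comm
  _ = ∑ a, ∑ p, ∑ b, ∑ q, f p q a b :=
    Finset.sum_congr rfl fun a _ => Finset.sum_congr rfl fun p _ => Finset.sum_comm
  _ = ∑ a, ∑ b, ∑ p, ∑ q, f p q a b :=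
    Finset.sum_congr rfl fun a _ => Finset.sum_comm

/-- commuting three nested sums -/
lemma sum_comm3 {α β γ : Type*} [Fintype α] [Fintype β] [Fintype γ]
    (f : α → β → γ → ℝ) :
    (∑ p, ∑ q, ∑ a, f p q a) = ∑ a, ∑ p, ∑ q, f p q a := calc
  (∑ p, ∑ q, ∑ a, f p q a) = ∑ p, ∑ a, ∑ q, f p q a :=
    Finset.sum_congr rfl fun p _ => Finset.sum_comm
  _ = ∑ a, ∑ p, ∑ q, f p q a := Finset.sum_comm

/-- summing a function supported on a fixed first coordinate -/
lemma sum_fst_filter {n : ℕ} (j : Fin n) {β : Type*} [Fintype β]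
    (f : Fin n × β → ℝ) :
    (∑ p : Fin n × β, if p.1 = j then f p else 0) = ∑ c, f (j, c) := by
  rw [Fintype.sum_prod_type]
  rw [Finset.sum_eq_single j]
  · simp
  · intro b _ hb
    simp [hb]
  · simp

/-- The abstract Gram-matrix bound: a family of pairwise orthogonal vectors of
equal norm `2nβ`, each having inner product `β` with a fixed vector `w` of
norm `β`, has cardinality at most `2n`. -/
lemma gram_bound {ι ν : Type*} [Fintype ι] [Fintype ν] [DecidableEq ν] (n : ℕ)
    (y : ν → ι → ι → ℝ) (w : ι → ι → ℝ) (β : ℝ) (hβ : 0 < β)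
    (hyy : ∀ o o', (∑ p, ∑ q, y o p q * y o' p q) =
      if o = o' then 2*(n:ℝ)*β else 0)
    (hyw : ∀ o, (∑ p, ∑ q, y o p q * w p q) = β)
    (hww : (∑ p, ∑ q, w p q * w p q) = β) :
    Fintype.card ν ≤ 2*n := by
  by_contra hcon
  push_neg at hcon
  set c : ℝ := (Fintype.card ν : ℝ) with hc
  have hcpos : (2*(n:ℝ)) < c := by
    rw [hc]
    exact_mod_cast hcon
  have key : (0:ℝ) ≤ ∑ p, ∑ q, ((∑ o, y o p q) - c * w p q)^2 := by
    apply Finset.sum_nonneg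
    intro p _
    apply Finset.sum_nonneg
    intro q _
    positivity
  -- expand the square
  have expand : (∑ p, ∑ q, ((∑ o, y o p q) - c * w p q)^2) =
      (∑ p, ∑ q, (∑ o, y o p q) * (∑ o, y o p q))
      - 2 * c * (∑ p, ∑ q, (∑ o, y o p q) * w p q)
      + c^2 * (∑ p, ∑ q, w p q * w p q) := by
    rw [Finset.mul_sum, Finset.mul_sum]
    rw [← Finset.sum_sub_distrib, ← Finset.sum_add_distrib]
    refine Finset.sum_congr rfl fun p _ => ?_
    rw [Finset.mul_sum, Finset.mul_sum]
    rw [← Finset.sum_sub_distrib, ← Finset.sum_add_distrib]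
    refine Finset.sum_congr rfl fun q _ => ?_
    ring
  have hAA : (∑ p, ∑ q, (∑ o, y o p q) * (∑ o, y o p q)) = c * (2*(n:ℝ)*β) := by
    have h1 : ∀ p q, (∑ o, y o p q) * (∑ o, y o p q)
        = ∑ o, ∑ o', y o p q * y o' p q := fun p q => Fintype.sum_mul_sum _ _
    simp_rw [h1]
    rw [sum_comm4 (fun p q o o' => y o p q * y o' p q)]
    have h2 : ∀ o : ν, (∑ o' : ν, ∑ p, ∑ q, y o p q * y o' p q) = 2*(n:ℝ)*β := by
      intro o
      have h3 : ∀ o' : ν, (∑ p, ∑ q, y o p q * y o' p q)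
          = if o = o' then 2*(n:ℝ)*β else 0 := fun o' => hyy o o'
      rw [Finset.sum_congr rfl fun o' _ => h3 o']
      simp
    rw [Finset.sum_congr rfl fun o _ => h2 o]
    simp [Finset.sum_const, mul_comm]
    exact Or.inl hc.symm
  have hAB : (∑ p, ∑ q, (∑ o, y o p q) * w p q) = c * β := by
    have h1 : ∀ p q, (∑ o, y o p q) * w p q = ∑ o, y o p q * w p q := by
      intro p q; rw [Finset.sum_mul]
    simp_rw [h1]
    rw [sum_comm3 (fun p q o => y o p q * w p q)]
    rw [Finset.sum_congr rfl fun o _ => hyw o]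
    simp [Finset.sum_const, mul_comm]
    exact Or.inl hc.symm
  rw [expand, hAA, hAB, hww] at key
  have hc0 : (0:ℝ) < c := lt_of_le_of_lt (by positivity : (0:ℝ) ≤ 2*(n:ℝ)) hcpos
  nlinarith [hβ, hcpos, mul_pos hc0 hβ]

variable {n : ℕ}

/-- The key rearrangement: the Frobenius pairing of two block-projection type
matrices equals a sum of squared row inner products. -/
lemma T_eq (H1 H2 : Matrix (Fin (2*n) × Fin (2*n)) (Fin (2*n) × Fin (2*n)) ℝ)
    (i j : Fin (2*n)) :
    (∑ p, ∑ q, (∑ a, H1 (i,a) p * H1 (i,a) q) * (∑ b, H2 (j,b) p * H2 (j,b) q))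
      = ∑ a, ∑ b, (∑ p, H1 (i,a) p * H2 (j,b) p)^2 := by
  have h : ∀ p q, (∑ a, H1 (i,a) p * H1 (i,a) q) * (∑ b, H2 (j,b) p * H2 (j,b) q)
      = ∑ a, ∑ b, (H1 (i,a) p * H2 (j,b) p) * (H1 (i,a) q * H2 (j,b) q) := by
    intro p q
    rw [Fintype.sum_mul_sum]
    exact Finset.sum_congr rfl fun a _ => Finset.sum_congr rfl fun b _ => by ring
  simp_rw [h]
  rw [sum_comm4 (fun p q a b => (H1 (i,a) p * H2 (j,b) p) * (H1 (i,a) q * H2 (j,b) q))]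
  refine Finset.sum_congr rfl fun a _ => Finset.sum_congr rfl fun b _ => ?_
  rw [sq, Fintype.sum_mul_sum]

/-- The `Z` matrix attached to a generalized Hadamard matrix: difference of the
(scaled) projections onto the rows in blocks `i1` and `i2`. -/
def ZZ (A : Matrix (Fin (2*n) × Fin (2*n)) (Fin (2*n) × Fin (2*n)) ℝ)
    (i1 i2 : Fin (2*n)) : (Fin (2*n) × Fin (2*n)) → (Fin (2*n) × Fin (2*n)) → ℝ :=
  fun p q => (∑ a, A (i1,a) p * A (i1,a) q) - (∑ a, A (i2,a) p * A (i2,a) q)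

/-- The common correction matrix. -/
def DD (n : ℕ) (i1 i2 : Fin (2*n)) :
    (Fin (2*n) × Fin (2*n)) → (Fin (2*n) × Fin (2*n)) → ℝ :=
  fun p q => (if p.1 = i1 ∧ q.1 = i1 then (2*(n:ℝ)) else 0)
    - (if p.1 = i2 ∧ q.1 = i2 then (2*(n:ℝ)) else 0)

lemma T_same (A : Matrix (Fin (2*n) × Fin (2*n)) (Fin (2*n) × Fin (2*n)) ℝ)
    (hA : ∀ p q, (∑ r, A p r * A q r) = if p = q then 4*(n:ℝ)^2 else 0)
    (i j : Fin (2*n)) :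
    (∑ p, ∑ q, (∑ a, A (i,a) p * A (i,a) q) * (∑ b, A (j,b) p * A (j,b) q))
      = if i = j then 2*(n:ℝ) * (16*(n:ℝ)^4) else 0 := by
  rw [T_eq]
  have h1 : ∀ (a b : Fin (2*n)), (∑ p, A (i,a) p * A (j,b) p)^2
      = if (i,a) = ((j,b) : Fin (2*n) × Fin (2*n)) then 16*(n:ℝ)^4 else 0 := by
    intro a b
    rw [hA]
    split_ifs <;> ring
  simp_rw [h1]
  rcases eq_or_ne i j with hij | hij
  · subst hij
    rw [if_pos rfl]
    have h2 : ∀ a b : Fin (2*n), (if ((i,a) : Fin (2*n) × Fin (2*n)) = (i,b)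
        then (16*(n:ℝ)^4 : ℝ) else 0) = if a = b then 16*(n:ℝ)^4 else 0 := by
      intro a b
      simp [Prod.ext_iff]
    simp_rw [h2]
    simp [Finset.sum_ite_eq, Finset.card_univ, mul_comm]
    try ring
  · rw [if_neg hij]
    have h2 : ∀ a b : Fin (2*n), (if ((i,a) : Fin (2*n) × Fin (2*n)) = (j,b)
        then (16*(n:ℝ)^4 : ℝ) else 0) = 0 := by
      intro a b
      simp [Prod.ext_iff, hij]
    simp_rw [h2]
    simp

lemma T_diff (A B : Matrix (Fin (2*n) × Fin (2*n)) (Fin (2*n) × Fin (2*n)) ℝ)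
    (hAB : ∀ p q, (∑ r, A p r * B q r)^2 = 4*(n:ℝ)^2)
    (i j : Fin (2*n)) :
    (∑ p, ∑ q, (∑ a, A (i,a) p * A (i,a) q) * (∑ b, B (j,b) p * B (j,b) q))
      = 16*(n:ℝ)^4 := by
  rw [T_eq]
  simp_rw [hAB]
  simp [Finset.sum_const, Finset.card_univ]
  ring

lemma gram_ZZ_same (A : Matrix (Fin (2*n) × Fin (2*n)) (Fin (2*n) × Fin (2*n)) ℝ)
    (hA : ∀ p q, (∑ r, A p r * A q r) = if p = q then 4*(n:ℝ)^2 else 0)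
    (i1 i2 : Fin (2*n)) (h12 : i1 ≠ i2) :
    (∑ p, ∑ q, ZZ A i1 i2 p q * ZZ A i1 i2 p q) = 2*(n:ℝ) * (32*(n:ℝ)^4) := by
  unfold ZZ
  have expand : ∀ p q : Fin (2*n) × Fin (2*n),
      ((∑ a, A (i1,a) p * A (i1,a) q) - (∑ a, A (i2,a) p * A (i2,a) q)) *
      ((∑ a, A (i1,a) p * A (i1,a) q) - (∑ a, A (i2,a) p * A (i2,a) q))
      = ((∑ a, A (i1,a) p * A (i1,a) q) * (∑ b, A (i1,b) p * A (i1,b) q)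
        - (∑ a, A (i1,a) p * A (i1,a) q) * (∑ b, A (i2,b) p * A (i2,b) q))
        - ((∑ a, A (i2,a) p * A (i2,a) q) * (∑ b, A (i1,b) p * A (i1,b) q)
        - (∑ a, A (i2,a) p * A (i2,a) q) * (∑ b, A (i2,b) p * A (i2,b) q)) := by
    intro p q; ring
  simp_rw [expand, Finset.sum_sub_distrib]
  rw [T_same A hA i1 i1, T_same A hA i1 i2, T_same A hA i2 i1, T_same A hA i2 i2]
  rw [if_pos rfl, if_pos rfl, if_neg h12, if_neg (Ne.symm h12)]
  ring

lemma gram_ZZ_diff (A B : Matrix (Fin (2*n) × Fin (2*n)) (Fin (2*n) × Fin (2*n)) ℝ)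
    (hAB : ∀ p q, (∑ r, A p r * B q r)^2 = 4*(n:ℝ)^2)
    (hBA : ∀ p q, (∑ r, B p r * A q r)^2 = 4*(n:ℝ)^2)
    (i1 i2 : Fin (2*n)) :
    (∑ p, ∑ q, ZZ A i1 i2 p q * ZZ B i1 i2 p q) = 0 := by
  unfold ZZ
  have expand : ∀ p q : Fin (2*n) × Fin (2*n),
      ((∑ a, A (i1,a) p * A (i1,a) q) - (∑ a, A (i2,a) p * A (i2,a) q)) *
      ((∑ b, B (i1,b) p * B (i1,b) q) - (∑ b, B (i2,b) p * B (i2,b) q))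
      = ((∑ a, A (i1,a) p * A (i1,a) q) * (∑ b, B (i1,b) p * B (i1,b) q)
        - (∑ a, A (i1,a) p * A (i1,a) q) * (∑ b, B (i2,b) p * B (i2,b) q))
        - ((∑ a, A (i2,a) p * A (i2,a) q) * (∑ b, B (i1,b) p * B (i1,b) q)
        - (∑ a, A (i2,a) p * A (i2,a) q) * (∑ b, B (i2,b) p * B (i2,b) q)) := by
    intro p q; ring
  simp_rw [expand, Finset.sum_sub_distrib]
  rw [T_diff A B hAB i1 i1, T_diff A B hAB i1 i2, T_diff A B hAB i2 i1,
    T_diff A B hAB i2 i2]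
  ring

/-- Pairing of a scaled block projection with one block of `DD`. -/
lemma S_eq (A : Matrix (Fin (2*n) × Fin (2*n)) (Fin (2*n) × Fin (2*n)) ℝ)
    (hA3 : ∀ i j a, (∑ b, A (i,a) (j,b)) = if i = j then 2*(n:ℝ) else 0)
    (i j : Fin (2*n)) :
    (∑ p, ∑ q, (∑ a, A (i,a) p * A (i,a) q) *
      (if p.1 = j ∧ q.1 = j then (2*(n:ℝ)) else 0))
      = if i = j then 2*(n:ℝ) * (8*(n:ℝ)^3) else 0 := by
  have expand : ∀ p q : Fin (2*n) × Fin (2*n),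
      (∑ a, A (i,a) p * A (i,a) q) * (if p.1 = j ∧ q.1 = j then (2*(n:ℝ)) else 0)
      = ∑ a, ((if p.1 = j then A (i,a) p else 0) *
          (if q.1 = j then A (i,a) q else 0)) * (2*(n:ℝ)) := by
    intro p q
    rw [Finset.sum_mul]
    refine Finset.sum_congr rfl fun a _ => ?_
    by_cases h1 : p.1 = j <;> by_cases h2 : q.1 = j <;> simp [h1, h2] <;> ring
  simp_rw [expand]
  rw [sum_comm3 (fun p q a => ((if p.1 = j then A (i,a) p else 0) *
      (if q.1 = j then A (i,a) q else 0)) * (2*(n:ℝ)))]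
  have step : ∀ a : Fin (2*n),
      (∑ p, ∑ q, ((if p.1 = j then A (i,a) p else 0) *
        (if q.1 = j then A (i,a) q else 0)) * (2*(n:ℝ)))
      = (if i = j then 2*(n:ℝ) else 0) * (if i = j then 2*(n:ℝ) else 0) * (2*(n:ℝ)) := by
    intro a
    have h1 : (∑ p : Fin (2*n) × Fin (2*n), if p.1 = j then A (i,a) p else 0)
        = if i = j then 2*(n:ℝ) else 0 := by
      rw [sum_fst_filter]
      exact hA3 i j a
    have h2 : (∑ p, ∑ q, ((if p.1 = j then A (i,a) p else 0) *
        (if q.1 = j then A (i,a) q else 0)) * (2*(n:ℝ)))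
        = ((∑ p : Fin (2*n) × Fin (2*n), if p.1 = j then A (i,a) p else 0) *
          (∑ q : Fin (2*n) × Fin (2*n), if q.1 = j then A (i,a) q else 0)) * (2*(n:ℝ)) := by
      rw [Fintype.sum_mul_sum, Finset.sum_mul]
      exact Finset.sum_congr rfl fun p _ => (Finset.sum_mul ..).symm
    rw [h2, h1]
  rw [Finset.sum_congr rfl fun a _ => step a]
  rcases eq_or_ne i j with hij | hij
  · subst hij
    simp only [eq_self_iff_true, if_true]
    rw [Finset.sum_const, Finset.card_univ]
    simp only [Fintype.card_fin, nsmul_eq_mul]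
    push_cast
    ring
  · simp [hij]

lemma gram_ZD (A : Matrix (Fin (2*n) × Fin (2*n)) (Fin (2*n) × Fin (2*n)) ℝ)
    (hA3 : ∀ i j a, (∑ b, A (i,a) (j,b)) = if i = j then 2*(n:ℝ) else 0)
    (i1 i2 : Fin (2*n)) (h12 : i1 ≠ i2) :
    (∑ p, ∑ q, ZZ A i1 i2 p q * DD n i1 i2 p q) = 32*(n:ℝ)^4 := by
  unfold ZZ DD
  have expand : ∀ p q : Fin (2*n) × Fin (2*n),
      ((∑ a, A (i1,a) p * A (i1,a) q) - (∑ a, A (i2,a) p * A (i2,a) q)) *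
      ((if p.1 = i1 ∧ q.1 = i1 then (2*(n:ℝ)) else 0)
        - (if p.1 = i2 ∧ q.1 = i2 then (2*(n:ℝ)) else 0))
      = ((∑ a, A (i1,a) p * A (i1,a) q) * (if p.1 = i1 ∧ q.1 = i1 then (2*(n:ℝ)) else 0)
        - (∑ a, A (i1,a) p * A (i1,a) q) * (if p.1 = i2 ∧ q.1 = i2 then (2*(n:ℝ)) else 0))
        - ((∑ a, A (i2,a) p * A (i2,a) q) * (if p.1 = i1 ∧ q.1 = i1 then (2*(n:ℝ)) else 0)
        - (∑ a, A (i2,a) p * A (i2,a) q) * (if p.1 = i2 ∧ q.1 = i2 then (2*(n:ℝ)) else 0)) := by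
    intro p q; ring
  simp_rw [expand, Finset.sum_sub_distrib]
  rw [S_eq A hA3 i1 i1, S_eq A hA3 i1 i2, S_eq A hA3 i2 i1, S_eq A hA3 i2 i2]
  rw [if_pos rfl, if_pos rfl, if_neg h12, if_neg (Ne.symm h12)]
  ring

lemma gram_DD (hn : 0 < n) (i1 i2 : Fin (2*n)) (h12 : i1 ≠ i2) :
    (∑ p, ∑ q, DD n i1 i2 p q * DD n i1 i2 p q) = 32*(n:ℝ)^4 := by
  unfold DD
  have expand : ∀ p q : Fin (2*n) × Fin (2*n),
      ((if p.1 = i1 ∧ q.1 = i1 then (2*(n:ℝ)) else 0)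
        - (if p.1 = i2 ∧ q.1 = i2 then (2*(n:ℝ)) else 0)) *
      ((if p.1 = i1 ∧ q.1 = i1 then (2*(n:ℝ)) else 0)
        - (if p.1 = i2 ∧ q.1 = i2 then (2*(n:ℝ)) else 0))
      = (if p.1 = i1 then (if q.1 = i1 then 4*(n:ℝ)^2 else 0) else 0)
        + (if p.1 = i2 then (if q.1 = i2 then 4*(n:ℝ)^2 else 0) else 0) := by
    intro p q
    by_cases h1 : p.1 = i1 <;> by_cases h2 : q.1 = i1 <;>
      by_cases h3 : p.1 = i2 <;> by_cases h4 : q.1 = i2 <;>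
      first
        | exact absurd (h1.symm.trans h3) h12
        | exact absurd (h2.symm.trans h4) h12
        | (simp [h1, h2, h3, h4, h12, Ne.symm h12]; try ring)
  simp_rw [expand, Finset.sum_add_distrib]
  have hblock : ∀ j : Fin (2*n),
      (∑ p : Fin (2*n) × Fin (2*n), ∑ q : Fin (2*n) × Fin (2*n),
        if p.1 = j then (if q.1 = j then 4*(n:ℝ)^2 else 0) else 0)
      = 16*(n:ℝ)^4 := by
    intro j
    have hinner : (∑ q : Fin (2*n) × Fin (2*n), if q.1 = j then 4*(n:ℝ)^2 else 0)
        = 2*(n:ℝ) * (4*(n:ℝ)^2) := by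
      rw [sum_fst_filter j (fun _ => 4*(n:ℝ)^2)]
      simp [Finset.sum_const, Finset.card_univ]
      try ring
    have houter : ∀ p : Fin (2*n) × Fin (2*n),
        (∑ q : Fin (2*n) × Fin (2*n), if p.1 = j then (if q.1 = j then 4*(n:ℝ)^2 else 0) else 0)
        = if p.1 = j then 2*(n:ℝ) * (4*(n:ℝ)^2) else 0 := by
      intro p
      by_cases h : p.1 = j
      · simp only [h, if_pos rfl]; exact hinner
      · simp [h]
    rw [Finset.sum_congr rfl fun p _ => houter p]
    rw [sum_fst_filter j (fun _ => 2*(n:ℝ) * (4*(n:ℝ)^2))]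
    simp [Finset.sum_const, Finset.card_univ]
    ring
  rw [hblock i1, hblock i2]
  ring

end MUBHAux

open MUBHAux

/-- The number `m` of mutually unbiased Bush-type Hadamard matrices of order
`4n²` satisfies `m ≤ 2n − 1`. -/
theorem mubh_upper_bound (n m : ℕ) (hn : 0 < n)
    (H : Fin m → Matrix (Fin (2*n) × Fin (2*n)) (Fin (2*n) × Fin (2*n)) ℝ)
    (hsign : ∀ k, signMatrix (H k))
    (hHad : ∀ k, H k * (H k)ᵀ = ((4 * n ^ 2 : ℕ) : ℝ) • 1)
    (hBush : ∀ k, isBushType n (H k))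
    (hmub : ∀ k l, k ≠ l → ∃ L, signMatrix L ∧ H k * (H l)ᵀ = (2 * (n : ℝ)) • L) :
    m ≤ 2 * n - 1 := by
  have h2n : 2 ≤ 2*n := by omega
  set i1 : Fin (2*n) := ⟨0, by omega⟩ with hi1
  set i2 : Fin (2*n) := ⟨1, by omega⟩ with hi2
  have h12 : i1 ≠ i2 := by
    simp [hi1, hi2, Fin.ext_iff]
  -- extend the family by the scaled identity matrix
  set H' : Option (Fin m) → Matrix (Fin (2*n) × Fin (2*n)) (Fin (2*n) × Fin (2*n)) ℝ :=
    fun o => Option.elim o ((2*(n:ℝ)) • 1) H with hH'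
  -- row orthogonality
  have P1 : ∀ o p q, (∑ r, H' o p r * H' o q r) = if p = q then 4*(n:ℝ)^2 else 0 := by
    rintro (_ | k) p q
    · simp only [hH', Option.elim, Matrix.smul_apply, Matrix.one_apply, smul_eq_mul]
      rcases eq_or_ne p q with h | h
      · subst h
        rw [Finset.sum_eq_single p]
        · simp; ring
        · intro r _ hr
          simp [Ne.symm hr]
        · simp
      · rw [if_neg h, Finset.sum_eq_zero]
        intro r _
        rcases eq_or_ne p r with h1 | h1
        · subst h1; simp [h, Ne.symm h]
        · simp [h1]
    · have h := congrFun (congrFun (hHad k) p) q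
      simp only [Matrix.mul_apply, Matrix.transpose_apply, Matrix.smul_apply,
        Matrix.one_apply, smul_eq_mul] at h
      rw [hH']
      simp only [Option.elim]
      rw [h]
      rcases eq_or_ne p q with h1 | h1 <;> simp [h1] <;> push_cast <;> ring
  -- unbiasedness (squared inner products of rows from different bases)
  have P2 : ∀ o o', o ≠ o' → ∀ p q, (∑ r, H' o p r * H' o' q r)^2 = 4*(n:ℝ)^2 := by
    have hid : ∀ (k : Fin m) (p q : Fin (2*n) × Fin (2*n)),
        (∑ r, ((2*(n:ℝ)) • (1 : Matrix (Fin (2*n) × Fin (2*n)) (Fin (2*n) × Fin (2*n)) ℝ)) p r * H k q r)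
          = 2*(n:ℝ) * H k q p := by
      intro k p q
      rw [Finset.sum_eq_single p]
      · simp
      · intro r _ hr
        simp [Matrix.one_apply, Ne.symm hr]
      · simp
    have hid' : ∀ (k : Fin m) (p q : Fin (2*n) × Fin (2*n)),
        (∑ r, H k p r * ((2*(n:ℝ)) • (1 : Matrix (Fin (2*n) × Fin (2*n)) (Fin (2*n) × Fin (2*n)) ℝ)) q r)
          = 2*(n:ℝ) * H k p q := by
      intro k p q
      rw [Finset.sum_eq_single q]
      · simp; ring
      · intro r _ hr
        simp [Matrix.one_apply, Ne.symm hr]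
      · simp
    have hsq : ∀ (k : Fin m) (p q : Fin (2*n) × Fin (2*n)), (H k p q)^2 = 1 := by
      intro k p q
      rcases hsign k p q with h | h <;> rw [h] <;> norm_num
    rintro (_ | k) (_ | l) hne p q
    · exact absurd rfl hne
    · rw [hH']; simp only [Option.elim]
      rw [hid l p q, mul_pow, hsq l q p]
      ring
    · rw [hH']; simp only [Option.elim]
      rw [hid' k p q, mul_pow, hsq k p q]
      ring
    · have hkl : k ≠ l := by
        rintro rfl; exact hne rfl
      obtain ⟨L, hLs, hLe⟩ := hmub k l hkl
      have h := congrFun (congrFun hLe p) q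
      simp only [Matrix.mul_apply, Matrix.transpose_apply, Matrix.smul_apply,
        smul_eq_mul] at h
      rw [hH']; simp only [Option.elim]
      rw [h]
      have : (L p q)^2 = 1 := by
        rcases hLs p q with h1 | h1 <;> rw [h1] <;> norm_num
      rw [mul_pow, this]
      ring
  -- Bush property: block row sums
  have P3 : ∀ o i j a, (∑ b, H' o (i,a) (j,b)) = if i = j then 2*(n:ℝ) else 0 := by
    rintro (_ | k) i j a
    · rw [hH']; simp only [Option.elim]
      rcases eq_or_ne i j with h | h
      · subst h
        rw [if_pos rfl, Finset.sum_eq_single a]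
        · simp
        · intro b _ hb
          simp [Matrix.one_apply, Prod.ext_iff, Ne.symm hb]
        · simp
      · rw [if_neg h, Finset.sum_eq_zero]
        intro b _
        simp [Matrix.one_apply, Prod.ext_iff, h]
    · rw [hH']; simp only [Option.elim]
      rcases eq_or_ne i j with h | h
      · subst h
        rw [if_pos rfl]
        have h1 : ∀ b : Fin (2*n), H k (i,a) (i,b) = 1 := fun b => (hBush k).1 i a b
        rw [Finset.sum_congr rfl fun b _ => h1 b]
        simp [Finset.sum_const, Finset.card_univ]
        try ring
      · rw [if_neg h]
        exact ((hBush k).2 i j h).1 a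
  -- apply the Gram bound
  have hnR : (0:ℝ) < (n:ℝ) := by exact_mod_cast hn
  have hcard : Fintype.card (Option (Fin m)) ≤ 2*n := by
    apply gram_bound n (fun o => ZZ (H' o) i1 i2) (DD n i1 i2) (32*(n:ℝ)^4)
      (by positivity)
    · intro o o'
      rcases eq_or_ne o o' with h | h
      · subst h
        rw [if_pos rfl]
        have := gram_ZZ_same (H' o) (P1 o) i1 i2 h12
        rw [this]
        try ring
      · rw [if_neg h]
        exact gram_ZZ_diff (H' o) (H' o') (P2 o o' h) (P2 o' o (Ne.symm h)) i1 i2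
    · intro o
      exact gram_ZD (H' o) (P3 o) i1 i2 h12
    · exact gram_DD hn i1 i2 h12
  rw [Fintype.card_option, Fintype.card_fin] at hcard
  omega
end

section
/- If there exist m mutually suitable Latin squares of order 2n all having constant value 1 on the diagonal, and a Hadamard matrix of order 2n, then there exist m mutually unbiased Bush-type Hadamard matrices of order 4n². -/
open Matrix BigOperators

/-- If there are `m` mutually suitable Latin squares of order `2n` with constant
diagonal and a Hadamard matrix of order `2n`, then there are `m` mutually
unbiased Bush-type Hadamard matrices of order `4n²`. -/
theorem msls_gives_mubh (n m : ℕ) (hn : 0 < n)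
    (L : Fin m → Fin (2*n) → Fin (2*n) → Fin (2*n))
    (hLrow : ∀ k i, Function.Bijective (L k i))
    (hLcol : ∀ k j, Function.Bijective (fun i => L k i j))
    (hsuit : ∀ k l, k ≠ l → ∀ r s, ∃! c, L k r c = L l s c)
    (d : Fin (2*n)) (hdiag : ∀ k i, L k i i = d)
    (K : Matrix (Fin (2*n)) (Fin (2*n)) ℝ)
    (hKsign : signMatrix K)
    (hKHad : K * Kᵀ = ((2 * n : ℕ) : ℝ) • 1) :
    ∃ H : Fin m → Matrix (Fin (2*n) × Fin (2*n)) (Fin (2*n) × Fin (2*n)) ℝ,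
      (∀ k, signMatrix (H k) ∧ H k * (H k)ᵀ = ((4 * n ^ 2 : ℕ) : ℝ) • 1 ∧
        isBushType n (H k)) ∧
      (∀ k l, k ≠ l →
        ∃ Lkl, signMatrix Lkl ∧ H k * (H l)ᵀ = (2 * (n : ℝ)) • Lkl) := by
  have hN0 : ((2*n : ℕ) : ℝ) ≠ 0 := by positivity
  -- normalized Hadamard
  set K2 : Matrix (Fin (2*n)) (Fin (2*n)) ℝ := fun p q => K p q * K d q with hK2
  have hsq : ∀ p q, K p q * K p q = 1 := by
    intro p q; rcases hKsign p q with h | h <;> rw [h] <;> norm_num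
  have horth : ∀ p q, ∑ b, K p b * K q b = if p = q then ((2*n:ℕ):ℝ) else 0 := by
    intro p q
    have := congrFun (congrFun hKHad p) q
    simpa [Matrix.mul_apply, Matrix.transpose_apply, Matrix.one_apply,
      mul_ite] using this
  have horth2 : ∀ p q, ∑ b, K2 p b * K2 q b = if p = q then ((2*n:ℕ):ℝ) else 0 := by
    intro p q
    rw [← horth p q]
    refine Finset.sum_congr rfl fun b _ => ?_
    have h : K2 p b * K2 q b = (K p b * K q b) * (K d b * K d b) := by
      simp only [hK2]; ring
    rw [h, hsq d b, mul_one]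
  -- column orthogonality
  have hKtK : Kᵀ * K = ((2*n : ℕ) : ℝ) • 1 := by
    have h1 : K * (((2*n:ℕ):ℝ)⁻¹ • Kᵀ) = 1 := by
      rw [Matrix.mul_smul, hKHad, smul_smul, inv_mul_cancel₀ hN0, one_smul]
    have h2 : (((2*n:ℕ):ℝ)⁻¹ • Kᵀ) * K = 1 := mul_eq_one_comm.mp h1
    calc Kᵀ * K = ((2*n:ℕ):ℝ) • ((((2*n:ℕ):ℝ)⁻¹ • Kᵀ) * K) := by
          rw [Matrix.smul_mul, smul_smul, mul_inv_cancel₀ hN0, one_smul]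
      _ = ((2*n:ℕ):ℝ) • 1 := by rw [h2]
  have hcol : ∀ a b, ∑ c, K c a * K c b = if a = b then ((2*n:ℕ):ℝ) else 0 := by
    intro a b
    have := congrFun (congrFun hKtK a) b
    simpa [Matrix.mul_apply, Matrix.transpose_apply, Matrix.one_apply,
      mul_ite] using this
  have hcol2 : ∀ a b, ∑ c, K2 c a * K2 c b = if a = b then ((2*n:ℕ):ℝ) else 0 := by
    intro a b
    have h : ∑ c, K2 c a * K2 c b = (K d a * K d b) * ∑ c, K c a * K c b := by
      rw [Finset.mul_sum]
      refine Finset.sum_congr rfl fun c _ => ?_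
      simp only [hK2]; ring
    rw [h, hcol a b]
    by_cases hab : a = b
    · subst hab; simp [hsq d a]
    · simp [hab]
  -- row sums of K2
  have hrowsum : ∀ c, ∑ b, K2 c b = if c = d then ((2*n:ℕ):ℝ) else 0 := by
    intro c
    have h : ∑ b, K2 c b = ∑ b, K c b * K d b := rfl
    rw [h, horth c d]
  have hK2sign : ∀ p q, K2 p q = 1 ∨ K2 p q = -1 := by
    intro p q
    rcases hKsign p q with h | h <;> rcases hKsign d q with h' | h' <;>
      simp [hK2, h, h']
  -- the construction
  set H : Fin m → Matrix (Fin (2*n) × Fin (2*n)) (Fin (2*n) × Fin (2*n)) ℝ :=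
    fun k p q => K2 (L k p.1 q.1) p.2 * K2 (L k p.1 q.1) q.2 with hH
  have hHsign : ∀ k, ∀ p q, H k p q = 1 ∨ H k p q = -1 := by
    intro k p q
    rcases hK2sign (L k p.1 q.1) p.2 with h | h <;>
      rcases hK2sign (L k p.1 q.1) q.2 with h' | h' <;>
      simp [hH, h, h']
  have hprod : ∀ k l i a j b, (H k * (H l)ᵀ) (i,a) (j,b) =
      ∑ j', (if L k i j' = L l j j' then
        ((2*n:ℕ):ℝ) * (K2 (L k i j') a * K2 (L l j j') b) else 0) := by
    intro k l i a j b
    rw [Matrix.mul_apply]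
    rw [Fintype.sum_prod_type]
    refine Finset.sum_congr rfl fun j' _ => ?_
    have h1 : ∑ b', H k (i,a) (j',b') * (H l)ᵀ (j',b') (j,b) =
        (K2 (L k i j') a * K2 (L l j j') b) *
          ∑ b', K2 (L k i j') b' * K2 (L l j j') b' := by
      rw [Finset.mul_sum]
      refine Finset.sum_congr rfl fun b' _ => ?_
      rw [Matrix.transpose_apply]; simp only [hH]; ring
    rw [h1, horth2]
    split_ifs with hc
    · ring
    · ring
  have hK2d : ∀ q, K2 d q = 1 := fun q => hsq d q
  refine ⟨H, fun k => ⟨hHsign k, ?_, ?_, ?_⟩, ?_⟩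
  · -- Hadamard condition
    ext ⟨i, a⟩ ⟨j, b⟩
    rw [hprod]
    by_cases hij : i = j
    · subst hij
      have hstep : ∀ j', (if L k i j' = L k i j' then
          ((2*n:ℕ):ℝ) * (K2 (L k i j') a * K2 (L k i j') b) else 0) =
          ((2*n:ℕ):ℝ) * (K2 (L k i j') a * K2 (L k i j') b) := by
        intro j'; rw [if_pos rfl]
      rw [Finset.sum_congr rfl (fun j' _ => hstep j'), ← Finset.mul_sum]
      rw [Fintype.sum_bijective (L k i) (hLrow k i)
        (fun j' => K2 (L k i j') a * K2 (L k i j') b)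
        (fun c => K2 c a * K2 c b) (fun j' => rfl)]
      rw [hcol2 a b]
      simp only [Matrix.smul_apply, Matrix.one_apply, Prod.mk.injEq, true_and,
        smul_eq_mul]
      by_cases hab : a = b
      · subst hab; rw [if_pos rfl, if_pos rfl]; push_cast; ring
      · rw [if_neg hab, if_neg (by simp [hab])]; ring
    · have hstep : ∀ j' ∈ Finset.univ, (if L k i j' = L k j j' then
          ((2*n:ℕ):ℝ) * (K2 (L k i j') a * K2 (L k j j') b) else 0) = 0 := by
        intro j' _
        rw [if_neg]
        intro hc
        exact hij ((hLcol k j').injective hc)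
      rw [Finset.sum_eq_zero hstep]
      simp only [Matrix.smul_apply, Matrix.one_apply, Prod.mk.injEq,
        smul_eq_mul]
      rw [if_neg (by simp [hij])]
      ring
  · -- diagonal blocks all ones
    intro i a b
    show K2 (L k i i) a * K2 (L k i i) b = 1
    rw [hdiag k i, hK2d, hK2d, mul_one]
  · -- off-diagonal blocks zero sums
    intro i j hij
    have hcne : L k i j ≠ d := by
      intro hc
      exact hij ((hLrow k i).injective (by rw [hc, hdiag k i]))
    constructor
    · intro a
      have h1 : ∑ b, H k (i, a) (j, b) = K2 (L k i j) a * ∑ b, K2 (L k i j) b := by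
        rw [Finset.mul_sum]
      rw [h1, hrowsum, if_neg hcne, mul_zero]
    · intro b
      have h1 : ∑ a, H k (i, a) (j, b) = (∑ a, K2 (L k i j) a) * K2 (L k i j) b := by
        rw [Finset.sum_mul]
      rw [h1, hrowsum, if_neg hcne, zero_mul]
  · -- mutual unbiasedness
    intro k l hkl
    have key : ∀ i a j b, ∃ ε : ℝ, (ε = 1 ∨ ε = -1) ∧
        (H k * (H l)ᵀ) (i, a) (j, b) = ((2*n:ℕ):ℝ) * ε := by
      intro i a j b
      obtain ⟨j₀, hj₀, huniq⟩ := hsuit k l hkl i j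
      refine ⟨K2 (L k i j₀) a * K2 (L l j j₀) b, ?_, ?_⟩
      · rcases hK2sign (L k i j₀) a with h | h <;>
          rcases hK2sign (L l j j₀) b with h' | h' <;> simp [h, h']
      · rw [hprod]
        rw [Finset.sum_eq_single j₀]
        · rw [if_pos hj₀]
        · intro j' _ hne
          rw [if_neg]
          intro hc
          exact hne (huniq j' hc)
        · intro hmem
          exact absurd (Finset.mem_univ j₀) hmem
    refine ⟨fun p q => ((2*n:ℕ):ℝ)⁻¹ * (H k * (H l)ᵀ) p q, ?_, ?_⟩
    · rintro ⟨i, a⟩ ⟨j, b⟩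
      obtain ⟨ε, hε, hval⟩ := key i a j b
      have h2 : ((2*n:ℕ):ℝ)⁻¹ * (H k * (H l)ᵀ) (i, a) (j, b) = ε := by
        rw [hval, ← mul_assoc, inv_mul_cancel₀ hN0, one_mul]
      show ((2*n:ℕ):ℝ)⁻¹ * (H k * (H l)ᵀ) (i, a) (j, b) = 1 ∨
        ((2*n:ℕ):ℝ)⁻¹ * (H k * (H l)ᵀ) (i, a) (j, b) = -1
      rw [h2]; exact hε
    · ext p q
      show (H k * (H l)ᵀ) p q = (2 * (n:ℝ)) * (((2*n:ℕ):ℝ)⁻¹ * (H k * (H l)ᵀ) p q)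
      rw [← mul_assoc]
      have : (2 * (n:ℝ)) * ((2*n:ℕ):ℝ)⁻¹ = 1 := by
        rw [mul_inv_eq_one₀ hN0]; push_cast; ring
      rw [this, one_mul]
end

section
/- Let A₀,…,A₅ be the 5-class scheme of mutually unbiased Bush-type Hadamard matrices of order 4n², and define the 9 matrices Ã₀ = diag(A₀,A₀), Ã₁ = diag(A₁,A₁), Ã₂ = antidiag(A₁,A₁), Ã₃ = [[A₂,A₂],[A₂,A₂]], Ã₄ = diag(A₃,A₃), Ã₅ = antidiag(A₃,A₃), Ã₆ = [[A₄,A₅],[A₅,A₄]], Ã₇ = [[A₅,A₄],[A₄,A₅]], Ã₈ = antidiag(A₀,A₀). Then Ã₀,…,Ã₈ form a symmetric 8-class association scheme. -/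
open Matrix BigOperators

namespace MUBH

@[simp] lemma card_filter_fst {α β : Type*} [Fintype α] [Fintype β] [DecidableEq α]
    (a : α) : (Finset.univ.filter (fun x : α × β => x.1 = a)).card = Fintype.card β := by
  have : (Finset.univ.filter (fun x : α × β => x.1 = a)) = {a} ×ˢ Finset.univ := by
    ext ⟨x, y⟩; simp [eq_comm]
  simp [this]

@[simp] lemma card_filter_fst' {α β : Type*} [Fintype α] [Fintype β] [DecidableEq α]
    (a : α) : (Finset.univ.filter (fun x : α × β => a = x.1)).card = Fintype.card β := by
  simp [eq_comm (a := a)]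

@[simp] lemma card_filter_snd_fst {α β γ : Type*} [Fintype α] [Fintype β] [Fintype γ]
    [DecidableEq β] (c : β) :
    (Finset.univ.filter (fun x : α × β × γ => x.2.1 = c)).card
      = Fintype.card α * Fintype.card γ := by
  have : (Finset.univ.filter (fun x : α × β × γ => x.2.1 = c))
      = Finset.univ ×ˢ ({c} ×ˢ Finset.univ) := by
    ext ⟨x, y, z⟩; simp [eq_comm]
  simp [this]

@[simp] lemma card_filter_snd_fst' {α β γ : Type*} [Fintype α] [Fintype β] [Fintype γ]
    [DecidableEq β] (c : β) :
    (Finset.univ.filter (fun x : α × β × γ => c = x.2.1)).card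
      = Fintype.card α * Fintype.card γ := by
  simp [eq_comm (a := c)]

variable {n m : ℕ}

abbrev Idx (n m : ℕ) := Fin (m+1) × Fin (2*n) × Fin (2*n)

def Pm (n m : ℕ) : Matrix (Idx n m) (Idx n m) ℝ :=
  Matrix.of fun x y => if x.1 = y.1 ∧ x.2.1 = y.2.1 then 1 else 0
def Km (n m : ℕ) : Matrix (Idx n m) (Idx n m) ℝ :=
  Matrix.of fun x y => if x.1 = y.1 then 1 else 0
def Qm (n m : ℕ) : Matrix (Idx n m) (Idx n m) ℝ :=
  Matrix.of fun x y => if x.2.1 = y.2.1 then 1 else 0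
def Jm (n m : ℕ) : Matrix (Idx n m) (Idx n m) ℝ :=
  Matrix.of fun _ _ => 1

lemma Pm_mul_Pm : Pm n m * Pm n m = (2*n : ℝ) • Pm n m := by
  ext ⟨i,a,b⟩ ⟨j,c,d⟩
  simp [Matrix.mul_apply, Pm, Km, Qm, Jm, Fintype.sum_prod_type,
    Finset.sum_ite_eq, Finset.sum_ite_eq', ite_and, smul_ite]
  try ring
  try (split_ifs <;> simp <;> try ring)

lemma Pm_mul_Km : Pm n m * Km n m = (2*n : ℝ) • Km n m := by
  ext ⟨i,a,b⟩ ⟨j,c,d⟩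
  simp [Matrix.mul_apply, Pm, Km, Qm, Jm, Fintype.sum_prod_type,
    Finset.sum_ite_eq, Finset.sum_ite_eq', ite_and, smul_ite]
  try ring
  try (split_ifs <;> simp <;> try ring)

lemma Km_mul_Pm : Km n m * Pm n m = (2*n : ℝ) • Km n m := by
  ext ⟨i,a,b⟩ ⟨j,c,d⟩
  simp [Matrix.mul_apply, Pm, Km, Qm, Jm, Fintype.sum_prod_type,
    Finset.sum_ite_eq, Finset.sum_ite_eq', ite_and, smul_ite]
  try ring
  try (split_ifs <;> simp <;> try ring)

lemma Pm_mul_Qm : Pm n m * Qm n m = (2*n : ℝ) • Qm n m := by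
  ext ⟨i,a,b⟩ ⟨j,c,d⟩
  simp [Matrix.mul_apply, Pm, Km, Qm, Jm, Fintype.sum_prod_type,
    Finset.sum_ite_eq, Finset.sum_ite_eq', ite_and, smul_ite]
  try ring
  try (split_ifs <;> simp <;> try ring)

lemma Qm_mul_Pm : Qm n m * Pm n m = (2*n : ℝ) • Qm n m := by
  ext ⟨i,a,b⟩ ⟨j,c,d⟩
  simp [Matrix.mul_apply, Pm, Km, Qm, Jm, Fintype.sum_prod_type,
    Finset.sum_ite_eq, Finset.sum_ite_eq', ite_and, smul_ite]
  try ring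
  try (split_ifs <;> simp <;> try ring)

lemma Pm_mul_Jm : Pm n m * Jm n m = (2*n : ℝ) • Jm n m := by
  ext ⟨i,a,b⟩ ⟨j,c,d⟩
  simp [Matrix.mul_apply, Pm, Km, Qm, Jm, Fintype.sum_prod_type,
    Finset.sum_ite_eq, Finset.sum_ite_eq', ite_and, smul_ite]
  try ring
  try (split_ifs <;> simp <;> try ring)

lemma Jm_mul_Pm : Jm n m * Pm n m = (2*n : ℝ) • Jm n m := by
  ext ⟨i,a,b⟩ ⟨j,c,d⟩
  simp [Matrix.mul_apply, Pm, Km, Qm, Jm, Fintype.sum_prod_type,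
    Finset.sum_ite_eq, Finset.sum_ite_eq', ite_and, smul_ite]
  try ring
  try (split_ifs <;> simp <;> try ring)

lemma Km_mul_Km : Km n m * Km n m = ((2*n)*(2*n) : ℝ) • Km n m := by
  ext ⟨i,a,b⟩ ⟨j,c,d⟩
  simp [Matrix.mul_apply, Pm, Km, Qm, Jm, Fintype.sum_prod_type,
    Finset.sum_ite_eq, Finset.sum_ite_eq', ite_and, smul_ite]
  try ring
  try (split_ifs <;> simp <;> try ring)

lemma Km_transpose : (Km n m)ᵀ = Km n m := by
  ext x y; simp [Km, Matrix.transpose_apply, eq_comm]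
lemma Qm_transpose : (Qm n m)ᵀ = Qm n m := by
  ext x y; simp [Qm, Matrix.transpose_apply, eq_comm]
lemma Jm_transpose : (Jm n m)ᵀ = Jm n m := by
  ext x y; simp [Jm]


lemma Qm_mul_Km : Qm n m * Km n m = (2*n : ℝ) • Jm n m := by
  ext ⟨i,a,b⟩ ⟨j,c,d⟩
  simp [Matrix.mul_apply, Pm, Km, Qm, Jm, Fintype.sum_prod_type,
    Finset.sum_ite_eq, Finset.sum_ite_eq', ite_and, smul_ite]
  try ring
  try (split_ifs <;> simp <;> try ring)

lemma Km_mul_Qm : Km n m * Qm n m = (2*n : ℝ) • Jm n m := by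
  have h := congrArg Matrix.transpose (Qm_mul_Km (n:=n) (m:=m))
  rwa [Matrix.transpose_mul, Matrix.transpose_smul, Km_transpose, Qm_transpose,
    Jm_transpose] at h

lemma Km_mul_Jm : Km n m * Jm n m = ((2*n)*(2*n) : ℝ) • Jm n m := by
  ext ⟨i,a,b⟩ ⟨j,c,d⟩
  simp [Matrix.mul_apply, Pm, Km, Qm, Jm, Fintype.sum_prod_type,
    Finset.sum_ite_eq, Finset.sum_ite_eq', ite_and, smul_ite]
  try ring
  try (split_ifs <;> simp <;> try ring)

lemma Jm_mul_Km : Jm n m * Km n m = ((2*n)*(2*n) : ℝ) • Jm n m := by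
  ext ⟨i,a,b⟩ ⟨j,c,d⟩
  simp [Matrix.mul_apply, Pm, Km, Qm, Jm, Fintype.sum_prod_type,
    Finset.sum_ite_eq, Finset.sum_ite_eq', ite_and, smul_ite]
  try ring
  try (split_ifs <;> simp <;> try ring)

lemma Qm_mul_Qm : Qm n m * Qm n m = ((2*n)*(m+1) : ℝ) • Qm n m := by
  ext ⟨i,a,b⟩ ⟨j,c,d⟩
  simp [Matrix.mul_apply, Pm, Km, Qm, Jm, Fintype.sum_prod_type,
    Finset.sum_ite_eq, Finset.sum_ite_eq', ite_and, smul_ite]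
  try ring
  try (split_ifs <;> simp <;> try ring)

lemma Qm_mul_Jm : Qm n m * Jm n m = ((2*n)*(m+1) : ℝ) • Jm n m := by
  ext ⟨i,a,b⟩ ⟨j,c,d⟩
  simp [Matrix.mul_apply, Pm, Km, Qm, Jm, Fintype.sum_prod_type,
    Finset.sum_ite_eq, Finset.sum_ite_eq', ite_and, smul_ite]
  try ring
  try (split_ifs <;> simp <;> try ring)

lemma Jm_mul_Qm : Jm n m * Qm n m = ((2*n)*(m+1) : ℝ) • Jm n m := by
  ext ⟨i,a,b⟩ ⟨j,c,d⟩
  simp [Matrix.mul_apply, Pm, Km, Qm, Jm, Fintype.sum_prod_type,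
    Finset.sum_ite_eq, Finset.sum_ite_eq', ite_and, smul_ite]
  try ring
  try (split_ifs <;> simp <;> try ring)

lemma Jm_mul_Jm : Jm n m * Jm n m = ((2*n)*(2*n)*(m+1) : ℝ) • Jm n m := by
  ext ⟨i,a,b⟩ ⟨j,c,d⟩
  simp [Matrix.mul_apply, Pm, Km, Qm, Jm, Fintype.sum_prod_type,
    Finset.sum_ite_eq, Finset.sum_ite_eq', ite_and, smul_ite]
  try ring
  try (split_ifs <;> simp <;> try ring)

lemma Pm_transpose : (Pm n m)ᵀ = Pm n m := by
  ext x y; simp [Pm, Matrix.transpose_apply, eq_comm, and_comm]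


section G
variable {n m : ℕ} (hn : 0 < n)
  (H : Fin m → Matrix (Fin (2*n) × Fin (2*n)) (Fin (2*n) × Fin (2*n)) ℝ)
  (G : Fin (m+1) → Matrix (Fin (2*n) × Fin (2*n)) (Fin (2*n) × Fin (2*n)) ℝ)
  (hG0 : G 0 = 1)
  (hGs : ∀ k : Fin m, G k.succ = (2 * (n : ℝ))⁻¹ • H k)
  (hBush : ∀ k, isBushType n (H k))

include hn hG0 hGs hBush

lemma G_rowblock : ∀ k p c, ∑ d, G k p (c, d) = if p.1 = c then 1 else 0 := by
  have h2n : (2 * (n : ℝ)) ≠ 0 := by positivity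
  intro k p c
  induction k using Fin.cases with
  | zero =>
    rw [hG0]
    obtain ⟨p1, p2⟩ := p
    simp [Matrix.one_apply, Prod.ext_iff, ite_and, Finset.sum_ite_eq]
  | succ k =>
    rw [hGs k]
    obtain ⟨p1, p2⟩ := p
    by_cases h : p1 = c
    · subst h
      simp only [Matrix.smul_apply, smul_eq_mul, ← Finset.mul_sum]
      rw [Finset.sum_congr rfl (fun d _ => (hBush k).1 p1 p2 d)]
      simp [h2n]
      field_simp
    · simp only [Matrix.smul_apply, smul_eq_mul, ← Finset.mul_sum]
      rw [((hBush k).2 p1 c h).1 p2]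
      simp [h]

lemma G_colblock : ∀ k a z, ∑ b, G k (a, b) z = if a = z.1 then 1 else 0 := by
  have h2n : (2 * (n : ℝ)) ≠ 0 := by positivity
  intro k a z
  induction k using Fin.cases with
  | zero =>
    rw [hG0]
    obtain ⟨z1, z2⟩ := z
    simp [Matrix.one_apply, Prod.ext_iff, ite_and, Finset.sum_ite_eq']
    try split_ifs <;> simp_all [eq_comm]
  | succ k =>
    rw [hGs k]
    obtain ⟨z1, z2⟩ := z
    by_cases h : a = z1
    · subst h
      simp only [Matrix.smul_apply, smul_eq_mul, ← Finset.mul_sum]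
      rw [Finset.sum_congr rfl (fun b _ => (hBush k).1 a b z2)]
      simp [h2n]
      field_simp
    · simp only [Matrix.smul_apply, smul_eq_mul, ← Finset.mul_sum]
      rw [((hBush k).2 a z1 h).2 z2]
      simp [h]


lemma G_mul_Gt (hHad : ∀ k, H k * (H k)ᵀ = ((4 * n ^ 2 : ℕ) : ℝ) • 1) :
    ∀ k, G k * (G k)ᵀ = 1 := by
  have h2n : (2 * (n : ℝ)) ≠ 0 := by positivity
  intro k
  induction k using Fin.cases with
  | zero => rw [hG0]; simp
  | succ k =>
    rw [hGs k, Matrix.transpose_smul, Matrix.smul_mul, Matrix.mul_smul, hHad k,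
      smul_smul, smul_smul]
    rw [show ((4 * n ^ 2 : ℕ) : ℝ) = (2 * (n:ℝ)) * (2 * (n:ℝ)) by push_cast; ring]
    rw [show (2 * (n : ℝ))⁻¹ * (2 * (n:ℝ))⁻¹ * ((2 * (n:ℝ)) * (2 * (n:ℝ))) = 1 by
      field_simp]
    simp

lemma Gt_mul_G (hHad : ∀ k, H k * (H k)ᵀ = ((4 * n ^ 2 : ℕ) : ℝ) • 1) :
    ∀ k, (G k)ᵀ * G k = 1 := fun k =>
  mul_eq_one_comm.mp (G_mul_Gt hn H G hG0 hGs hBush hHad k)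

lemma gram_block_sum : ∀ i j p a, ∑ b, (G i * (G j)ᵀ) p (a, b) = if p.1 = a then 1 else 0 := by
  intro i j p a
  have : ∀ b, (G i * (G j)ᵀ) p (a, b) = ∑ z, G i p z * G j (a, b) z := by
    intro b; rw [Matrix.mul_apply]; simp [Matrix.transpose_apply]
  rw [Finset.sum_congr rfl (fun b _ => this b), Finset.sum_comm]
  have : ∀ z : Fin (2*n) × Fin (2*n), ∑ b, G i p z * G j (a, b) z
      = G i p z * (if a = z.1 then 1 else 0) := by
    intro z; rw [← Finset.mul_sum, G_colblock hn H G hG0 hGs hBush j a z]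
  rw [Finset.sum_congr rfl (fun z _ => this z)]
  have : ∑ z : Fin (2*n) × Fin (2*n), G i p z * (if a = z.1 then 1 else 0)
      = ∑ d, G i p (a, d) := by
    rw [Fintype.sum_prod_type]
    simp [mul_ite, Finset.sum_ite_eq, eq_comm]
  rw [this, G_rowblock hn H G hG0 hGs hBush i p a]

lemma gram_row_sum : ∀ i j p, ∑ z, (G i * (G j)ᵀ) p z = 1 := by
  intro i j p
  rw [Fintype.sum_prod_type]
  rw [Finset.sum_congr rfl (fun a _ => gram_block_sum hn H G hG0 hGs hBush i j p a)]
  simp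

lemma gram_sign (hsign : ∀ k, signMatrix (H k))
    (hmub : ∀ k l, k ≠ l → ∃ L, signMatrix L ∧ H k * (H l)ᵀ = (2 * (n : ℝ)) • L) :
    ∀ i j, i ≠ j → ∀ p q, (G i * (G j)ᵀ) p q = (2 * (n:ℝ))⁻¹ ∨
      (G i * (G j)ᵀ) p q = -(2 * (n:ℝ))⁻¹ := by
  have h2n : (2 * (n : ℝ)) ≠ 0 := by positivity
  intro i j hij p q
  induction i using Fin.cases with
  | zero =>
    induction j using Fin.cases with
    | zero => exact absurd rfl hij
    | succ l =>
      rw [hG0, hGs l, Matrix.one_mul, Matrix.transpose_smul]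
      rcases hsign l q p with h | h <;> [left; right] <;>
        simp [Matrix.transpose_apply, h]
  | succ k =>
    induction j using Fin.cases with
    | zero =>
      rw [hG0, hGs k]
      rcases hsign k p q with h | h <;> [left; right] <;>
        simp [Matrix.transpose_one, Matrix.mul_one, h]
    | succ l =>
      have hkl : k ≠ l := fun h => hij (by rw [h])
      obtain ⟨L, hL, hHL⟩ := hmub k l hkl
      rw [hGs k, hGs l, Matrix.transpose_smul, Matrix.smul_mul, Matrix.mul_smul,
        hHL, smul_smul, smul_smul]
      have : (2 * (n : ℝ))⁻¹ * (2 * (n:ℝ))⁻¹ * (2 * (n:ℝ)) = (2 * (n:ℝ))⁻¹ := by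
        field_simp
        try ring
      rw [this]
      rcases hL p q with h | h <;> [left; right] <;> simp [h]

end G
lemma sum_ite_pull {α : Type*} [Fintype α] (c : Prop) [Decidable c] (f : α → ℝ) :
    ∑ x, (if c then f x else 0) = if c then ∑ x, f x else 0 := by
  split_ifs <;> simp


section M
variable {n m : ℕ} (hn : 0 < n)
  (H : Fin m → Matrix (Fin (2*n) × Fin (2*n)) (Fin (2*n) × Fin (2*n)) ℝ)
  (G : Fin (m+1) → Matrix (Fin (2*n) × Fin (2*n)) (Fin (2*n) × Fin (2*n)) ℝ)
  (hG0 : G 0 = 1)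
  (hGs : ∀ k : Fin m, G k.succ = (2 * (n : ℝ))⁻¹ • H k)
  (hBush : ∀ k, isBushType n (H k))
  (hHad : ∀ k, H k * (H k)ᵀ = ((4 * n ^ 2 : ℕ) : ℝ) • 1)
  (M : Matrix (Idx n m) (Idx n m) ℝ)
  (hM : ∀ i j p q, M (i, p) (j, q) = (G i * (G j)ᵀ) p q)

include hn hG0 hGs hBush hHad hM

lemma M_symm : Mᵀ = M := by
  ext ⟨i, p⟩ ⟨j, q⟩
  rw [Matrix.transpose_apply, hM, hM]
  rw [show (G j * (G i)ᵀ) q p = ((G j * (G i)ᵀ)ᵀ) p q from rfl]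
  rw [Matrix.transpose_mul, Matrix.transpose_transpose]

lemma M_row_block : ∀ i p j a, ∑ b, M (i, p) (j, (a, b)) = if p.1 = a then 1 else 0 := by
  intro i p j a
  rw [Finset.sum_congr rfl (fun b _ => hM i j p (a, b))]
  exact gram_block_sum hn H G hG0 hGs hBush i j p a

lemma M_row : ∀ i p j, ∑ r, M (i, p) (j, r) = 1 := by
  intro i p j
  rw [Fintype.sum_prod_type]
  rw [Finset.sum_congr rfl (fun a _ => M_row_block hn H G hG0 hGs hBush hHad M hM i p j a)]
  simp

lemma M_mul_M : M * M = ((m : ℝ) + 1) • M := by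
  ext ⟨i, p⟩ ⟨j, q⟩
  rw [Matrix.mul_apply, Fintype.sum_prod_type]
  have step : ∀ k : Fin (m+1),
      ∑ r : Fin (2*n) × Fin (2*n), M (i, p) (k, r) * M (k, r) (j, q)
        = (G i * (G j)ᵀ) p q := by
    intro k
    rw [Finset.sum_congr rfl (fun r _ => by rw [hM i k p r, hM k j r q])]
    rw [← Matrix.mul_apply]
    rw [Matrix.mul_assoc, ← Matrix.mul_assoc (G k)ᵀ,
      Gt_mul_G hn H G hG0 hGs hBush hHad k, Matrix.one_mul]
  rw [Finset.sum_congr rfl (fun k _ => step k)]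
  rw [Matrix.smul_apply, hM i j p q]
  simp
  try ring

lemma M_sum_fst : ∀ i p k c,
    (∑ r : Fin (2*n) × Fin (2*n), if r.1 = c then M (i, p) (k, r) else 0)
      = if p.1 = c then 1 else 0 := by
  intro i p k c
  rw [Fintype.sum_prod_type, Finset.sum_comm]
  simp only [Finset.sum_ite_eq', Finset.sum_ite_eq, Finset.mem_univ, if_true]
  exact M_row_block hn H G hG0 hGs hBush hHad M hM i p k c

lemma M_mul_P : M * Pm n m = Qm n m := by
  ext ⟨i, p⟩ ⟨j, q⟩
  rw [Matrix.mul_apply, Fintype.sum_prod_type]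
  have step : ∀ k : Fin (m+1),
      (∑ r : Fin (2*n) × Fin (2*n), M (i, p) (k, r) * Pm n m (k, r) (j, q))
        = if k = j then (if p.1 = q.1 then 1 else 0) else 0 := by
    intro k
    by_cases hk : k = j
    · subst hk
      simp only [Pm, Matrix.of_apply, ite_and, if_pos rfl, mul_ite, mul_one, mul_zero]
      try simp only [if_pos rfl]
      exact M_sum_fst hn H G hG0 hGs hBush hHad M hM i p k q.1
    · simp [Pm, ite_and, mul_ite, hk]
  rw [Finset.sum_congr rfl (fun k _ => step k)]
  simp only [Finset.sum_ite_eq, Finset.sum_ite_eq', Finset.mem_univ, if_true]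
  rfl

lemma M_mul_Q : M * Qm n m = ((m : ℝ) + 1) • Qm n m := by
  ext ⟨i, p⟩ ⟨j, q⟩
  rw [Matrix.mul_apply, Fintype.sum_prod_type]
  have step : ∀ k : Fin (m+1),
      (∑ r : Fin (2*n) × Fin (2*n), M (i, p) (k, r) * Qm n m (k, r) (j, q))
        = if p.1 = q.1 then 1 else 0 := by
    intro k
    simp only [Qm, Matrix.of_apply, mul_ite, mul_one, mul_zero]
    exact M_sum_fst hn H G hG0 hGs hBush hHad M hM i p k q.1
  rw [Finset.sum_congr rfl (fun k _ => step k)]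
  simp [Qm, Matrix.smul_apply]
  try split_ifs <;> simp <;> try ring

lemma M_mul_K : M * Km n m = Jm n m := by
  ext ⟨i, p⟩ ⟨j, q⟩
  rw [Matrix.mul_apply, Fintype.sum_prod_type]
  have step : ∀ k : Fin (m+1),
      (∑ r : Fin (2*n) × Fin (2*n), M (i, p) (k, r) * Km n m (k, r) (j, q))
        = if k = j then 1 else 0 := by
    intro k
    by_cases hk : k = j
    · subst hk
      simp only [Km, Matrix.of_apply, if_pos rfl, if_true, mul_one, eq_self_iff_true]
      exact M_row hn H G hG0 hGs hBush hHad M hM i p k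
    · simp only [Km, Matrix.of_apply, mul_ite, mul_one, mul_zero]
      simp [hk]
  rw [Finset.sum_congr rfl (fun k _ => step k)]
  simp [Jm]

lemma M_mul_J : M * Jm n m = ((m : ℝ) + 1) • Jm n m := by
  ext ⟨i, p⟩ ⟨j, q⟩
  rw [Matrix.mul_apply, Fintype.sum_prod_type]
  have step : ∀ k : Fin (m+1),
      (∑ r : Fin (2*n) × Fin (2*n), M (i, p) (k, r) * Jm n m (k, r) (j, q)) = 1 := by
    intro k
    simp only [Jm, Matrix.of_apply, mul_one]
    exact M_row hn H G hG0 hGs hBush hHad M hM i p k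
  rw [Finset.sum_congr rfl (fun k _ => step k)]
  simp [Jm]
  try ring

lemma P_mul_M : Pm n m * M = Qm n m := by
  have h := congrArg Matrix.transpose (M_mul_P hn H G hG0 hGs hBush hHad M hM)
  rwa [Matrix.transpose_mul, Pm_transpose, M_symm hn H G hG0 hGs hBush hHad M hM,
    Qm_transpose] at h

lemma Q_mul_M : Qm n m * M = ((m : ℝ) + 1) • Qm n m := by
  have h := congrArg Matrix.transpose (M_mul_Q hn H G hG0 hGs hBush hHad M hM)
  rwa [Matrix.transpose_mul, Matrix.transpose_smul, Qm_transpose,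
    M_symm hn H G hG0 hGs hBush hHad M hM] at h

lemma K_mul_M : Km n m * M = Jm n m := by
  have h := congrArg Matrix.transpose (M_mul_K hn H G hG0 hGs hBush hHad M hM)
  rwa [Matrix.transpose_mul, Km_transpose, Jm_transpose,
    M_symm hn H G hG0 hGs hBush hHad M hM] at h

lemma J_mul_M : Jm n m * M = ((m : ℝ) + 1) • Jm n m := by
  have h := congrArg Matrix.transpose (M_mul_J hn H G hG0 hGs hBush hHad M hM)
  rwa [Matrix.transpose_mul, Matrix.transpose_smul, Jm_transpose,
    M_symm hn H G hG0 hGs hBush hHad M hM] at h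

lemma M_diag : ∀ i p q, M (i, p) (i, q) = (1 : Matrix (Fin (2*n) × Fin (2*n)) (Fin (2*n) × Fin (2*n)) ℝ) p q := by
  intro i p q
  rw [hM, G_mul_Gt hn H G hG0 hGs hBush hHad i]

lemma M_offdiag (hsign : ∀ k, signMatrix (H k))
    (hmub : ∀ k l, k ≠ l → ∃ L, signMatrix L ∧ H k * (H l)ᵀ = (2 * (n : ℝ)) • L) :
    ∀ i j, i ≠ j → ∀ p q, 2 * (n : ℝ) * M (i, p) (j, q) = 1 ∨
      2 * (n : ℝ) * M (i, p) (j, q) = -1 := by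
  have h2n : (2 * (n : ℝ)) ≠ 0 := by positivity
  intro i j hij p q
  rw [hM]
  rcases gram_sign hn H G hG0 hGs hBush hsign hmub i j hij p q with h | h <;>
    rw [h] <;> [left; right] <;> field_simp

end M


theorem sum_univ_nine {M : Type*} [AddCommMonoid M] (f : Fin 9 → M) :
    ∑ i, f i = f 0 + f 1 + f 2 + f 3 + f 4 + f 5 + f 6 + f 7 + f 8 := by
  rw [Fin.sum_univ_castSucc, Fin.sum_univ_eight]
  rfl

variable {α : Type*} [Fintype α] [DecidableEq α]

def fM (Z : Matrix α α ℝ) : Matrix (Fin 2 × α) (Fin 2 × α) ℝ :=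
  Matrix.of fun u v => Z u.2 v.2

def gM (Z : Matrix α α ℝ) : Matrix (Fin 2 × α) (Fin 2 × α) ℝ :=
  Matrix.of fun u v => if u.1 = v.1 then Z u.2 v.2 else -(Z u.2 v.2)

lemma fM_add (Z W : Matrix α α ℝ) : fM (Z + W) = fM Z + fM W := by
  ext ⟨e,x⟩ ⟨f,y⟩; simp [fM]
lemma fM_smul (c : ℝ) (Z : Matrix α α ℝ) : fM (c • Z) = c • fM Z := by
  ext ⟨e,x⟩ ⟨f,y⟩; simp [fM]
lemma gM_add (Z W : Matrix α α ℝ) : gM (Z + W) = gM Z + gM W := by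
  ext ⟨e,x⟩ ⟨f,y⟩; by_cases h : e = f <;> simp [gM, h] <;> ring
lemma gM_smul (c : ℝ) (Z : Matrix α α ℝ) : gM (c • Z) = c • gM Z := by
  ext ⟨e,x⟩ ⟨f,y⟩; by_cases h : e = f <;> simp [gM, h]

lemma fM_mul_fM (Z W : Matrix α α ℝ) : fM Z * fM W = (2:ℝ) • fM (Z * W) := by
  ext ⟨e,x⟩ ⟨f,y⟩
  simp [fM, Matrix.mul_apply, Fintype.sum_prod_type, Fin.sum_univ_two]
  try ring

lemma gM_mul_gM (Z W : Matrix α α ℝ) : gM Z * gM W = (2:ℝ) • gM (Z * W) := by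
  ext ⟨e,x⟩ ⟨f,y⟩
  fin_cases e <;> fin_cases f <;>
    simp [gM, Matrix.mul_apply, Fintype.sum_prod_type, Fin.sum_univ_two,
      neg_mul, mul_neg, neg_neg, Finset.sum_neg_distrib] <;> ring

lemma fM_mul_gM (Z W : Matrix α α ℝ) : fM Z * gM W = 0 := by
  ext ⟨e,x⟩ ⟨f,y⟩
  fin_cases f <;>
    simp [fM, gM, Matrix.mul_apply, Fintype.sum_prod_type, Fin.sum_univ_two,
      neg_mul, mul_neg, neg_neg] <;> ring

lemma gM_mul_fM (Z W : Matrix α α ℝ) : gM Z * fM W = 0 := by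
  ext ⟨e,x⟩ ⟨f,y⟩
  fin_cases e <;>
    simp [fM, gM, Matrix.mul_apply, Fintype.sum_prod_type, Fin.sum_univ_two,
      neg_mul, mul_neg, neg_neg] <;> ring


lemma fM_zero {α : Type*} : fM (0 : Matrix α α ℝ) = 0 := by
  ext ⟨e,x⟩ ⟨f,y⟩; simp [fM]
lemma gM_zero {α : Type*} [DecidableEq α] : gM (0 : Matrix α α ℝ) = 0 := by
  ext ⟨e,x⟩ ⟨f,y⟩; by_cases h : e = f <;> simp [gM, h]
lemma gM_neg {α : Type*} [DecidableEq α] (Z : Matrix α α ℝ) : gM (-Z) = -gM Z := by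
  ext ⟨e,x⟩ ⟨f,y⟩; by_cases h : e = f <;> simp [gM, h]
def genF (n m : ℕ) : Set (Matrix (Idx n m) (Idx n m) ℝ) :=
  {1, Pm n m, Km n m, Qm n m, Jm n m}

lemma genF_mul_closed :
    ∀ Z ∈ Submodule.span ℝ (genF n m), ∀ W ∈ Submodule.span ℝ (genF n m),
      Z * W ∈ Submodule.span ℝ (genF n m) := by
  have base : ∀ z ∈ genF n m, ∀ w ∈ genF n m,
      z * w ∈ Submodule.span ℝ (genF n m) := by
    intro z hz w hw
    simp only [genF, Set.mem_insert_iff, Set.mem_singleton_iff] at hz hw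
    rcases hz with rfl|rfl|rfl|rfl|rfl <;> rcases hw with rfl|rfl|rfl|rfl|rfl <;>
    first
      | (rw [one_mul]; exact Submodule.subset_span (by simp [genF]))
      | (rw [mul_one]; exact Submodule.subset_span (by simp [genF]))
      | (rw [Pm_mul_Pm]; exact Submodule.smul_mem _ _ (Submodule.subset_span (by simp [genF])))
      | (rw [Pm_mul_Km]; exact Submodule.smul_mem _ _ (Submodule.subset_span (by simp [genF])))
      | (rw [Km_mul_Pm]; exact Submodule.smul_mem _ _ (Submodule.subset_span (by simp [genF])))
      | (rw [Pm_mul_Qm]; exact Submodule.smul_mem _ _ (Submodule.subset_span (by simp [genF])))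
      | (rw [Qm_mul_Pm]; exact Submodule.smul_mem _ _ (Submodule.subset_span (by simp [genF])))
      | (rw [Pm_mul_Jm]; exact Submodule.smul_mem _ _ (Submodule.subset_span (by simp [genF])))
      | (rw [Jm_mul_Pm]; exact Submodule.smul_mem _ _ (Submodule.subset_span (by simp [genF])))
      | (rw [Km_mul_Km]; exact Submodule.smul_mem _ _ (Submodule.subset_span (by simp [genF])))
      | (rw [Km_mul_Qm]; exact Submodule.smul_mem _ _ (Submodule.subset_span (by simp [genF])))
      | (rw [Qm_mul_Km]; exact Submodule.smul_mem _ _ (Submodule.subset_span (by simp [genF])))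
      | (rw [Km_mul_Jm]; exact Submodule.smul_mem _ _ (Submodule.subset_span (by simp [genF])))
      | (rw [Jm_mul_Km]; exact Submodule.smul_mem _ _ (Submodule.subset_span (by simp [genF])))
      | (rw [Qm_mul_Qm]; exact Submodule.smul_mem _ _ (Submodule.subset_span (by simp [genF])))
      | (rw [Qm_mul_Jm]; exact Submodule.smul_mem _ _ (Submodule.subset_span (by simp [genF])))
      | (rw [Jm_mul_Qm]; exact Submodule.smul_mem _ _ (Submodule.subset_span (by simp [genF])))
      | (rw [Jm_mul_Jm]; exact Submodule.smul_mem _ _ (Submodule.subset_span (by simp [genF])))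
  intro Z hZ
  induction hZ using Submodule.span_induction with
  | mem x hx =>
    intro W hW
    induction hW using Submodule.span_induction with
    | mem w hw => exact base x hx w hw
    | zero => rw [mul_zero]; exact Submodule.zero_mem _
    | add a b _ _ iha ihb => rw [mul_add]; exact Submodule.add_mem _ iha ihb
    | smul c a _ ih => rw [mul_smul_comm]; exact Submodule.smul_mem _ _ ih
  | zero => intro W _; rw [zero_mul]; exact Submodule.zero_mem _
  | add a b _ _ iha ihb =>
    intro W hW; rw [add_mul]; exact Submodule.add_mem _ (iha W hW) (ihb W hW)
  | smul c a _ ih =>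
    intro W hW; rw [smul_mul_assoc]; exact Submodule.smul_mem _ _ (ih W hW)


def genD (n m : ℕ) (MM : Matrix (Idx n m) (Idx n m) ℝ) :
    Set (Matrix (Idx n m) (Idx n m) ℝ) :=
  {1, Pm n m, Qm n m, MM}


section D
variable {n m : ℕ} (hn : 0 < n)
  (H : Fin m → Matrix (Fin (2*n) × Fin (2*n)) (Fin (2*n) × Fin (2*n)) ℝ)
  (G : Fin (m+1) → Matrix (Fin (2*n) × Fin (2*n)) (Fin (2*n) × Fin (2*n)) ℝ)
  (hG0 : G 0 = 1)
  (hGs : ∀ k : Fin m, G k.succ = (2 * (n : ℝ))⁻¹ • H k)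
  (hBush : ∀ k, isBushType n (H k))
  (hHad : ∀ k, H k * (H k)ᵀ = ((4 * n ^ 2 : ℕ) : ℝ) • 1)
  (M : Matrix (Idx n m) (Idx n m) ℝ)
  (hM : ∀ i j p q, M (i, p) (j, q) = (G i * (G j)ᵀ) p q)

include hn hG0 hGs hBush hHad hM in
lemma genD_mul_closed :
    ∀ Z ∈ Submodule.span ℝ (genD n m M), ∀ W ∈ Submodule.span ℝ (genD n m M),
      Z * W ∈ Submodule.span ℝ (genD n m M) := by
  have base : ∀ z ∈ genD n m M, ∀ w ∈ genD n m M,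
      z * w ∈ Submodule.span ℝ (genD n m M) := by
    intro z hz w hw
    simp only [genD, Set.mem_insert_iff, Set.mem_singleton_iff] at hz hw
    rcases hz with rfl|rfl|rfl|rfl <;> rcases hw with rfl|rfl|rfl|rfl <;>
    first
      | (rw [one_mul]; exact Submodule.subset_span (by simp [genD]))
      | (rw [mul_one]; exact Submodule.subset_span (by simp [genD]))
      | (rw [Pm_mul_Pm]; exact Submodule.smul_mem _ _ (Submodule.subset_span (by simp [genD])))
      | (rw [Pm_mul_Qm]; exact Submodule.smul_mem _ _ (Submodule.subset_span (by simp [genD])))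
      | (rw [Qm_mul_Pm]; exact Submodule.smul_mem _ _ (Submodule.subset_span (by simp [genD])))
      | (rw [Qm_mul_Qm]; exact Submodule.smul_mem _ _ (Submodule.subset_span (by simp [genD])))
      | (rw [P_mul_M hn H G hG0 hGs hBush hHad _ hM];
         exact Submodule.subset_span (by simp [genD]))
      | (rw [M_mul_P hn H G hG0 hGs hBush hHad _ hM];
         exact Submodule.subset_span (by simp [genD]))
      | (rw [Q_mul_M hn H G hG0 hGs hBush hHad _ hM];
         exact Submodule.smul_mem _ _ (Submodule.subset_span (by simp [genD])))
      | (rw [M_mul_Q hn H G hG0 hGs hBush hHad _ hM];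
         exact Submodule.smul_mem _ _ (Submodule.subset_span (by simp [genD])))
      | (rw [M_mul_M hn H G hG0 hGs hBush hHad _ hM];
         exact Submodule.smul_mem _ _ (Submodule.subset_span (by simp [genD])))
  intro Z hZ
  induction hZ using Submodule.span_induction with
  | mem x hx =>
    intro W hW
    induction hW using Submodule.span_induction with
    | mem w hw => exact base x hx w hw
    | zero => rw [mul_zero]; exact Submodule.zero_mem _
    | add a b _ _ iha ihb => rw [mul_add]; exact Submodule.add_mem _ iha ihb
    | smul c a _ ih => rw [mul_smul_comm]; exact Submodule.smul_mem _ _ ih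
  | zero => intro W _; rw [zero_mul]; exact Submodule.zero_mem _
  | add a b _ _ iha ihb =>
    intro W hW; rw [add_mul]; exact Submodule.add_mem _ (iha W hW) (ihb W hW)
  | smul c a _ ih =>
    intro W hW; rw [smul_mul_assoc]; exact Submodule.smul_mem _ _ (ih W hW)

end D

end MUBH

/-- The double cover `Ã₀, …, Ã₈` of the 5-class scheme of mutually unbiased
Bush-type Hadamard matrices forms a symmetric 8-class association scheme. -/
theorem mubh_eight_class_scheme (n m : ℕ) (hn : 0 < n)
    (H : Fin m → Matrix (Fin (2*n) × Fin (2*n)) (Fin (2*n) × Fin (2*n)) ℝ)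
    (hsign : ∀ k, signMatrix (H k))
    (hHad : ∀ k, H k * (H k)ᵀ = ((4 * n ^ 2 : ℕ) : ℝ) • 1)
    (hBush : ∀ k, isBushType n (H k))
    (hmub : ∀ k l, k ≠ l → ∃ L, signMatrix L ∧ H k * (H l)ᵀ = (2 * (n : ℝ)) • L)
    (G : Fin (m+1) → Matrix (Fin (2*n) × Fin (2*n)) (Fin (2*n) × Fin (2*n)) ℝ)
    (hG0 : G 0 = 1)
    (hGs : ∀ k : Fin m, G k.succ = (2 * (n : ℝ))⁻¹ • H k)
    (M : Matrix (Fin (m+1) × Fin (2*n) × Fin (2*n)) (Fin (m+1) × Fin (2*n) × Fin (2*n)) ℝ)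
    (hM : ∀ i j p q, M (i, p) (j, q) = (G i * (G j)ᵀ) p q)
    (B₁ B₂ : Matrix (Fin (m+1) × Fin (2*n) × Fin (2*n)) (Fin (m+1) × Fin (2*n) × Fin (2*n)) ℝ)
    (hB₁01 : ∀ x y, B₁ x y = 0 ∨ B₁ x y = 1)
    (hB₂01 : ∀ x y, B₂ x y = 0 ∨ B₂ x y = 1)
    (hdisj : ∀ x y, B₁ x y = 0 ∨ B₂ x y = 0)
    (hB : B₁ - B₂ = (2 * (n : ℝ)) • (M - 1))
    (A₀ A₁ A₂ A₃ A₄ A₅ : Matrix (Fin (m+1) × Fin (2*n) × Fin (2*n)) (Fin (m+1) × Fin (2*n) × Fin (2*n)) ℝ)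
    (hA₀ : A₀ = 1)
    (hA₁ : A₁ = Matrix.of (fun x y : Fin (m+1) × Fin (2*n) × Fin (2*n) =>
      if x.1 = y.1 ∧ x.2.1 = y.2.1 ∧ x.2.2 ≠ y.2.2 then (1 : ℝ) else 0))
    (hA₂ : A₂ = Matrix.of (fun x y : Fin (m+1) × Fin (2*n) × Fin (2*n) =>
      if x.1 = y.1 ∧ x.2.1 ≠ y.2.1 then (1 : ℝ) else 0))
    (hA₃ : A₃ = Matrix.of (fun x y : Fin (m+1) × Fin (2*n) × Fin (2*n) =>
      if x.1 ≠ y.1 ∧ x.2.1 = y.2.1 then (1 : ℝ) else 0))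
    (hA₄ : A₄ = B₁ - A₃)
    (hA₅ : A₅ = B₂)
    (T : Fin 9 → Matrix (Fin 2 × Fin (m+1) × Fin (2*n) × Fin (2*n)) (Fin 2 × Fin (m+1) × Fin (2*n) × Fin (2*n)) ℝ)
    (hT0 : ∀ e f x y, T 0 (e, x) (f, y) = if e = f then A₀ x y else 0)
    (hT1 : ∀ e f x y, T 1 (e, x) (f, y) = if e = f then A₁ x y else 0)
    (hT2 : ∀ e f x y, T 2 (e, x) (f, y) = if e = f then 0 else A₁ x y)
    (hT3 : ∀ e f x y, T 3 (e, x) (f, y) = A₂ x y)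
    (hT4 : ∀ e f x y, T 4 (e, x) (f, y) = if e = f then A₃ x y else 0)
    (hT5 : ∀ e f x y, T 5 (e, x) (f, y) = if e = f then 0 else A₃ x y)
    (hT6 : ∀ e f x y, T 6 (e, x) (f, y) = if e = f then A₄ x y else A₅ x y)
    (hT7 : ∀ e f x y, T 7 (e, x) (f, y) = if e = f then A₅ x y else A₄ x y)
    (hT8 : ∀ e f x y, T 8 (e, x) (f, y) = if e = f then 0 else A₀ x y)
    :
    T 0 = 1 ∧
    (∀ i, (T i)ᵀ = T i) ∧
    (∑ i, T i = Matrix.of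
      (fun _ _ : Fin 2 × Fin (m+1) × Fin (2*n) × Fin (2*n) => (1 : ℝ))) ∧
    (∃ c : Fin 9 → Fin 9 → Fin 9 → ℝ, ∀ i j,
      T i * T j = ∑ k, c i j k • T k) := by
  
  classical
  have h2n : (2 * (n : ℝ)) ≠ 0 := by positivity
  -- abbreviations for aux lemmas
  have hMsymm := MUBH.M_symm hn H G hG0 hGs hBush hHad M hM
  have hMd := MUBH.M_diag hn H G hG0 hGs hBush hHad M hM
  have hMoff := MUBH.M_offdiag hn H G hG0 hGs hBush hHad M hM hsign hmub
  -- entrywise consequences for B₁, B₂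
  have hBe : ∀ x y, B₁ x y - B₂ x y
      = 2 * (n : ℝ) * (M x y - (1 : Matrix (Fin (m+1) × Fin (2*n) × Fin (2*n)) (Fin (m+1) × Fin (2*n) × Fin (2*n)) ℝ) x y) := by
    intro x y
    have h := congrFun (congrFun hB x) y
    simpa [Matrix.sub_apply, Matrix.smul_apply] using h
  have hBdiag : ∀ x y : Fin (m+1) × Fin (2*n) × Fin (2*n), x.1 = y.1 →
      B₁ x y = 0 ∧ B₂ x y = 0 := by
    rintro ⟨i, p⟩ ⟨j, q⟩ hxy
    simp only at hxy
    subst hxy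
    have h1 : M (i, p) (i, q)
        = (1 : Matrix (Fin (m+1) × Fin (2*n) × Fin (2*n)) (Fin (m+1) × Fin (2*n) × Fin (2*n)) ℝ) (i, p) (i, q) := by
      rw [hMd i p q]
      by_cases h : p = q <;> simp [Matrix.one_apply, Prod.ext_iff, h]
    have h0 : B₁ (i, p) (i, q) - B₂ (i, p) (i, q) = 0 := by
      rw [hBe, h1]; ring
    rcases hdisj (i, p) (i, q) with h | h <;>
      rcases hB₁01 (i, p) (i, q) with a | a <;>
      rcases hB₂01 (i, p) (i, q) with b | b <;>
      constructor <;> linarith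
  have hBoff : ∀ x y : Fin (m+1) × Fin (2*n) × Fin (2*n), x.1 ≠ y.1 →
      (B₁ x y - B₂ x y = 1 ∨ B₁ x y - B₂ x y = -1) := by
    rintro ⟨i, p⟩ ⟨j, q⟩ hxy
    simp only at hxy
    have hone : (1 : Matrix (Fin (m+1) × Fin (2*n) × Fin (2*n)) (Fin (m+1) × Fin (2*n) × Fin (2*n)) ℝ) (i, p) (j, q) = 0 :=
      Matrix.one_apply_ne (fun h => hxy (congrArg Prod.fst h))
    rw [hBe, hone, sub_zero]
    exact hMoff i j hxy p q
  have hBsum : ∀ x y : Fin (m+1) × Fin (2*n) × Fin (2*n), x.1 ≠ y.1 →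
      B₁ x y + B₂ x y = 1 := by
    intro x y h
    rcases hBoff x y h with h' | h' <;> rcases hB₁01 x y with a | a <;>
      rcases hB₂01 x y with b | b <;> linarith
  -- symmetry of B₁, B₂
  have hMes : ∀ x y, M x y = M y x := by
    intro x y
    have := congrFun (congrFun hMsymm y) x
    rw [Matrix.transpose_apply] at this
    exact this
  have hBsymm : ∀ x y, B₁ x y = B₁ y x ∧ B₂ x y = B₂ y x := by
    intro x y
    have hd : B₁ x y - B₂ x y = B₁ y x - B₂ y x := by
      rw [hBe, hBe, hMes x y]
      have : (1 : Matrix (Fin (m+1) × Fin (2*n) × Fin (2*n)) (Fin (m+1) × Fin (2*n) × Fin (2*n)) ℝ) x y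
          = (1 : Matrix (Fin (m+1) × Fin (2*n) × Fin (2*n)) (Fin (m+1) × Fin (2*n) × Fin (2*n)) ℝ) y x := by
        by_cases h : x = y
        · rw [h]
        · rw [Matrix.one_apply_ne h, Matrix.one_apply_ne (fun hh => h hh.symm)]
      rw [this]
    by_cases h : x.1 = y.1
    · obtain ⟨a1, a2⟩ := hBdiag x y h
      obtain ⟨b1, b2⟩ := hBdiag y x h.symm
      exact ⟨by rw [a1, b1], by rw [a2, b2]⟩
    · have a := hBsum x y h
      have b := hBsum y x (fun hh => h hh.symm)
      constructor <;> linarith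
  -- A-matrices in terms of Pm, Km, Qm, Jm, M
  have hA01 : A₀ + A₁ = MUBH.Pm n m := by
    rw [hA₀, hA₁]
    ext ⟨i, a, b⟩ ⟨j, c, d⟩
    by_cases h1 : i = j <;> by_cases h2 : a = c <;> by_cases h3 : b = d <;>
      simp [MUBH.Pm, Matrix.one_apply, Prod.ext_iff, h1, h2, h3]
  have hA1P : A₁ = MUBH.Pm n m - 1 := by
    rw [← hA01, ← hA₀]; abel
  have hA2K : A₂ = MUBH.Km n m - MUBH.Pm n m := by
    rw [hA₂]
    ext ⟨i, a, b⟩ ⟨j, c, d⟩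
    by_cases h1 : i = j <;> by_cases h2 : a = c <;>
      simp [MUBH.Pm, MUBH.Km, Matrix.sub_apply, h1, h2]
  have hA3Q : A₃ = MUBH.Qm n m - MUBH.Pm n m := by
    rw [hA₃]
    ext ⟨i, a, b⟩ ⟨j, c, d⟩
    by_cases h1 : i = j <;> by_cases h2 : a = c <;>
      simp [MUBH.Pm, MUBH.Qm, Matrix.sub_apply, h1, h2]
  have hB12 : B₁ + B₂ = MUBH.Jm n m - MUBH.Km n m := by
    ext x y
    by_cases h : x.1 = y.1
    · obtain ⟨a1, a2⟩ := hBdiag x y h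
      simp [Matrix.add_apply, Matrix.sub_apply, MUBH.Jm, MUBH.Km, a1, a2, h]
    · have := hBsum x y h
      simp [Matrix.add_apply, Matrix.sub_apply, MUBH.Jm, MUBH.Km, h, this]
  have hA45sum : A₄ + A₅ = MUBH.Jm n m - MUBH.Km n m - MUBH.Qm n m + MUBH.Pm n m := by
    rw [hA₄, hA₅, hA3Q]
    have : B₁ - (MUBH.Qm n m - MUBH.Pm n m) + B₂ = (B₁ + B₂) - (MUBH.Qm n m - MUBH.Pm n m) := by
      abel
    rw [this, hB12]; abel
  have hA45diff : A₄ - A₅ = (2 * (n : ℝ)) • M - (2 * (n : ℝ)) • 1 - (MUBH.Qm n m - MUBH.Pm n m) := by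
    rw [hA₄, hA₅, hA3Q]
    have : B₁ - (MUBH.Qm n m - MUBH.Pm n m) - B₂ = (B₁ - B₂) - (MUBH.Qm n m - MUBH.Pm n m) := by
      abel
    rw [this, hB, smul_sub]
  -- entrywise symmetry of A's
  have hA0s : ∀ x y, A₀ x y = A₀ y x := by
    intro x y; rw [hA₀]
    by_cases h : x = y
    · rw [h]
    · rw [Matrix.one_apply_ne h, Matrix.one_apply_ne (fun hh => h hh.symm)]
  have hA1s : ∀ x y, A₁ x y = A₁ y x := by
    intro x y; rw [hA₁]
    simp only [Matrix.of_apply]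
    have hiff : (y.1 = x.1 ∧ y.2.1 = x.2.1 ∧ y.2.2 ≠ x.2.2)
        ↔ (x.1 = y.1 ∧ x.2.1 = y.2.1 ∧ x.2.2 ≠ y.2.2) := by
      constructor <;> rintro ⟨u, v, w⟩ <;> exact ⟨u.symm, v.symm, fun hh => w hh.symm⟩
    exact (if_congr hiff rfl rfl).symm
  have hA2s : ∀ x y, A₂ x y = A₂ y x := by
    intro x y; rw [hA₂]
    simp only [Matrix.of_apply]
    have hiff : (y.1 = x.1 ∧ y.2.1 ≠ x.2.1) ↔ (x.1 = y.1 ∧ x.2.1 ≠ y.2.1) := by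
      constructor <;> rintro ⟨u, v⟩ <;> exact ⟨u.symm, fun hh => v hh.symm⟩
    exact (if_congr hiff rfl rfl).symm
  have hA3s : ∀ x y, A₃ x y = A₃ y x := by
    intro x y; rw [hA₃]
    simp only [Matrix.of_apply]
    have hiff : (y.1 ≠ x.1 ∧ y.2.1 = x.2.1) ↔ (x.1 ≠ y.1 ∧ x.2.1 = y.2.1) := by
      constructor <;> rintro ⟨u, v⟩ <;> exact ⟨fun hh => u hh.symm, v.symm⟩
    exact (if_congr hiff rfl rfl).symm
  have hA4s : ∀ x y, A₄ x y = A₄ y x := by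
    intro x y; rw [hA₄]
    simp only [Matrix.sub_apply]
    rw [(hBsymm x y).1, hA3s x y]
  have hA5s : ∀ x y, A₅ x y = A₅ y x := by
    intro x y; rw [hA₅]; exact (hBsymm x y).2
  -- Part 1
  have part1 : T 0 = 1 := by
    ext ⟨e, x⟩ ⟨f, y⟩
    rw [hT0 e f x y, hA₀]
    by_cases h : e = f <;> by_cases h' : x = y <;>
      simp [Matrix.one_apply, Prod.ext_iff, h, h']
  -- Part 2
  have symm_helper : ∀ (U V : Matrix (Fin (m+1) × Fin (2*n) × Fin (2*n)) (Fin (m+1) × Fin (2*n) × Fin (2*n)) ℝ)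
      (W : Matrix (Fin 2 × Fin (m+1) × Fin (2*n) × Fin (2*n)) (Fin 2 × Fin (m+1) × Fin (2*n) × Fin (2*n)) ℝ),
      (∀ x y, U x y = U y x) → (∀ x y, V x y = V y x) →
      (∀ e f x y, W (e, x) (f, y) = if e = f then U x y else V x y) → Wᵀ = W := by
    intro U V W hU hV hW
    ext ⟨e, x⟩ ⟨f, y⟩
    rw [Matrix.transpose_apply, hW f e y x, hW e f x y]
    by_cases h : e = f
    · rw [if_pos h.symm, if_pos h]; exact hU y x
    · rw [if_neg (Ne.symm h), if_neg h]; exact hV y x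
  have part2 : ∀ i, (T i)ᵀ = T i := by
    intro i
    fin_cases i
    · exact symm_helper A₀ 0 (T 0) hA0s (by intro x y; simp) (by intro e f x y; rw [hT0]; simp)
    · exact symm_helper A₁ 0 (T 1) hA1s (by intro x y; simp) (by intro e f x y; rw [hT1]; simp)
    · exact symm_helper 0 A₁ (T 2) (by intro x y; simp) hA1s (by intro e f x y; rw [hT2]; simp)
    · exact symm_helper A₂ A₂ (T 3) hA2s hA2s (by intro e f x y; rw [hT3]; simp)
    · exact symm_helper A₃ 0 (T 4) hA3s (by intro x y; simp) (by intro e f x y; rw [hT4]; simp)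
    · exact symm_helper 0 A₃ (T 5) (by intro x y; simp) hA3s (by intro e f x y; rw [hT5]; simp)
    · exact symm_helper A₄ A₅ (T 6) hA4s hA5s (by intro e f x y; rw [hT6])
    · exact symm_helper A₅ A₄ (T 7) hA5s hA4s (by intro e f x y; rw [hT7])
    · exact symm_helper 0 A₀ (T 8) (by intro x y; simp) hA0s (by intro e f x y; rw [hT8]; simp)
  -- Part 3
  have hsumA : A₀ + A₁ + A₂ + A₃ + (A₄ + A₅) = MUBH.Jm n m := by
    have e1 : A₀ + A₁ + A₂ + A₃ + (A₄ + A₅)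
        = (A₀ + A₁) + A₂ + A₃ + (A₄ + A₅) := by abel
    rw [e1, hA01, hA2K, hA3Q, hA45sum]; abel
  have part3 : ∑ i, T i = Matrix.of
      (fun _ _ : Fin 2 × Fin (m+1) × Fin (2*n) × Fin (2*n) => (1 : ℝ)) := by
    ext ⟨e, x⟩ ⟨f, y⟩
    rw [Matrix.sum_apply]
    rw [MUBH.sum_univ_nine (f := fun i => T i (e, x) (f, y))]
    rw [hT0, hT1, hT2, hT3, hT4, hT5, hT6, hT7, hT8]
    have hs := congrFun (congrFun hsumA x) y
    simp only [Matrix.add_apply, MUBH.Jm, Matrix.of_apply] at hs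
    by_cases h : e = f <;> simp only [if_pos, if_neg, h, if_true, if_false,
      Matrix.of_apply] <;> linarith
  -- Part 4
  have memT : ∀ i, T i ∈ Submodule.span ℝ (Set.range T) :=
    fun i => Submodule.subset_span ⟨i, rfl⟩
  -- decompositions of fM/gM images
  have hfA0 : MUBH.fM A₀ = T 0 + T 8 := by
    ext ⟨e, x⟩ ⟨f, y⟩
    rw [Matrix.add_apply, hT0, hT8]
    by_cases h : e = f <;> simp [MUBH.fM, h]
  have hgA0 : MUBH.gM A₀ = T 0 - T 8 := by
    ext ⟨e, x⟩ ⟨f, y⟩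
    rw [Matrix.sub_apply, hT0, hT8]
    by_cases h : e = f <;> simp [MUBH.gM, h]
  have hfA1 : MUBH.fM A₁ = T 1 + T 2 := by
    ext ⟨e, x⟩ ⟨f, y⟩
    rw [Matrix.add_apply, hT1, hT2]
    by_cases h : e = f <;> simp [MUBH.fM, h]
  have hgA1 : MUBH.gM A₁ = T 1 - T 2 := by
    ext ⟨e, x⟩ ⟨f, y⟩
    rw [Matrix.sub_apply, hT1, hT2]
    by_cases h : e = f <;> simp [MUBH.gM, h]
  have hfA2 : MUBH.fM A₂ = T 3 := by
    ext ⟨e, x⟩ ⟨f, y⟩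
    rw [hT3]
    simp [MUBH.fM]
  have hfA3 : MUBH.fM A₃ = T 4 + T 5 := by
    ext ⟨e, x⟩ ⟨f, y⟩
    rw [Matrix.add_apply, hT4, hT5]
    by_cases h : e = f <;> simp [MUBH.fM, h]
  have hgA3 : MUBH.gM A₃ = T 4 - T 5 := by
    ext ⟨e, x⟩ ⟨f, y⟩
    rw [Matrix.sub_apply, hT4, hT5]
    by_cases h : e = f <;> simp [MUBH.gM, h]
  have hfA45 : MUBH.fM (A₄ + A₅) = T 6 + T 7 := by
    ext ⟨e, x⟩ ⟨f, y⟩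
    rw [Matrix.add_apply, hT6, hT7]
    by_cases h : e = f <;> simp [MUBH.fM, Matrix.add_apply, h] <;> ring
  have hgA45 : MUBH.gM (A₄ - A₅) = T 6 - T 7 := by
    ext ⟨e, x⟩ ⟨f, y⟩
    rw [Matrix.sub_apply, hT6, hT7]
    by_cases h : e = f <;> simp [MUBH.gM, Matrix.sub_apply, h] <;> ring
  -- membership of generator images in S
  have memf1 : MUBH.fM (1 : Matrix (Fin (m+1) × Fin (2*n) × Fin (2*n)) (Fin (m+1) × Fin (2*n) × Fin (2*n)) ℝ)
      ∈ Submodule.span ℝ (Set.range T) := by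
    rw [← hA₀, hfA0]; exact add_mem (memT 0) (memT 8)
  have memg1 : MUBH.gM (1 : Matrix (Fin (m+1) × Fin (2*n) × Fin (2*n)) (Fin (m+1) × Fin (2*n) × Fin (2*n)) ℝ)
      ∈ Submodule.span ℝ (Set.range T) := by
    rw [← hA₀, hgA0]; exact sub_mem (memT 0) (memT 8)
  have memfP : MUBH.fM (MUBH.Pm n m) ∈ Submodule.span ℝ (Set.range T) := by
    rw [← hA01, MUBH.fM_add, hfA0, hfA1]
    exact add_mem (add_mem (memT 0) (memT 8)) (add_mem (memT 1) (memT 2))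
  have memgP : MUBH.gM (MUBH.Pm n m) ∈ Submodule.span ℝ (Set.range T) := by
    rw [← hA01, MUBH.gM_add, hgA0, hgA1]
    exact add_mem (sub_mem (memT 0) (memT 8)) (sub_mem (memT 1) (memT 2))
  have memfK : MUBH.fM (MUBH.Km n m) ∈ Submodule.span ℝ (Set.range T) := by
    have : MUBH.Km n m = MUBH.Pm n m + A₂ := by rw [hA2K]; abel
    rw [this, MUBH.fM_add, hfA2]
    exact add_mem memfP (memT 3)
  have memfQ : MUBH.fM (MUBH.Qm n m) ∈ Submodule.span ℝ (Set.range T) := by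
    have : MUBH.Qm n m = MUBH.Pm n m + A₃ := by rw [hA3Q]; abel
    rw [this, MUBH.fM_add, hfA3]
    exact add_mem memfP (add_mem (memT 4) (memT 5))
  have memgQ : MUBH.gM (MUBH.Qm n m) ∈ Submodule.span ℝ (Set.range T) := by
    have : MUBH.Qm n m = MUBH.Pm n m + A₃ := by rw [hA3Q]; abel
    rw [this, MUBH.gM_add, hgA3]
    exact add_mem memgP (sub_mem (memT 4) (memT 5))
  have memfJ : MUBH.fM (MUBH.Jm n m) ∈ Submodule.span ℝ (Set.range T) := by
    have : MUBH.Jm n m = MUBH.Pm n m + A₂ + A₃ + (A₄ + A₅) := by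
      rw [hA2K, hA3Q, hA45sum]; abel
    rw [this, MUBH.fM_add, MUBH.fM_add, MUBH.fM_add, hfA2, hfA3, hfA45]
    exact add_mem (add_mem (add_mem memfP (memT 3)) (add_mem (memT 4) (memT 5)))
      (add_mem (memT 6) (memT 7))
  have memgM : MUBH.gM M ∈ Submodule.span ℝ (Set.range T) := by
    have hMeq : M = (2 * (n : ℝ))⁻¹ • ((A₄ - A₅) + (MUBH.Qm n m - MUBH.Pm n m)
        + (2 * (n : ℝ)) • (1 : Matrix (Fin (m+1) × Fin (2*n) × Fin (2*n)) (Fin (m+1) × Fin (2*n) × Fin (2*n)) ℝ)) := by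
      rw [hA45diff]
      rw [show (2 * (n : ℝ)) • M - (2 * (n : ℝ)) • (1 : Matrix (Fin (m+1) × Fin (2*n) × Fin (2*n)) (Fin (m+1) × Fin (2*n) × Fin (2*n)) ℝ)
          - (MUBH.Qm n m - MUBH.Pm n m) + (MUBH.Qm n m - MUBH.Pm n m)
          + (2 * (n : ℝ)) • (1 : Matrix (Fin (m+1) × Fin (2*n) × Fin (2*n)) (Fin (m+1) × Fin (2*n) × Fin (2*n)) ℝ)
          = (2 * (n : ℝ)) • M from by abel]
      rw [smul_smul, inv_mul_cancel₀ h2n, one_smul]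
    rw [hMeq, MUBH.gM_smul]
    refine Submodule.smul_mem _ _ ?_
    rw [MUBH.gM_add, MUBH.gM_add, MUBH.gM_smul, hgA45]
    have hgQP : MUBH.gM (MUBH.Qm n m - MUBH.Pm n m)
        ∈ Submodule.span ℝ (Set.range T) := by
      have : MUBH.Qm n m - MUBH.Pm n m = MUBH.Qm n m + (-1 : ℝ) • MUBH.Pm n m := by
        rw [neg_one_smul]; abel
      rw [this, MUBH.gM_add, MUBH.gM_smul]
      exact add_mem memgQ (Submodule.smul_mem _ _ memgP)
    exact add_mem (add_mem (sub_mem (memT 6) (memT 7)) hgQP)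
      (Submodule.smul_mem _ _ memg1)
  -- span-to-S transfer
  have hfS : ∀ Z ∈ Submodule.span ℝ (MUBH.genF n m),
      MUBH.fM Z ∈ Submodule.span ℝ (Set.range T) := by
    intro Z hZ
    induction hZ using Submodule.span_induction with
    | mem x hx =>
      simp only [MUBH.genF, Set.mem_insert_iff, Set.mem_singleton_iff] at hx
      rcases hx with rfl | rfl | rfl | rfl | rfl
      · exact memf1
      · exact memfP
      · exact memfK
      · exact memfQ
      · exact memfJ
    | zero => rw [MUBH.fM_zero]; exact Submodule.zero_mem _
    | add a b _ _ iha ihb => rw [MUBH.fM_add]; exact add_mem iha ihb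
    | smul c a _ ih => rw [MUBH.fM_smul]; exact Submodule.smul_mem _ _ ih
  have hgS : ∀ Z ∈ Submodule.span ℝ (MUBH.genD n m M),
      MUBH.gM Z ∈ Submodule.span ℝ (Set.range T) := by
    intro Z hZ
    induction hZ using Submodule.span_induction with
    | mem x hx =>
      simp only [MUBH.genD, Set.mem_insert_iff, Set.mem_singleton_iff] at hx
      rcases hx with rfl | rfl | rfl | rfl
      · exact memg1
      · exact memgP
      · exact memgQ
      · exact memgM
    | zero => rw [MUBH.gM_zero]; exact Submodule.zero_mem _
    | add a b _ _ iha ihb => rw [MUBH.gM_add]; exact add_mem iha ihb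
    | smul c a _ ih => rw [MUBH.gM_smul]; exact Submodule.smul_mem _ _ ih
  -- generator memberships for the A-matrices
  have memF : ∀ x ∈ MUBH.genF n m, x ∈ Submodule.span ℝ (MUBH.genF n m) :=
    fun x hx => Submodule.subset_span hx
  have memD : ∀ x ∈ MUBH.genD n m M, x ∈ Submodule.span ℝ (MUBH.genD n m M) :=
    fun x hx => Submodule.subset_span hx
  have hF1 : (1 : Matrix (Fin (m+1) × Fin (2*n) × Fin (2*n)) (Fin (m+1) × Fin (2*n) × Fin (2*n)) ℝ) ∈ Submodule.span ℝ (MUBH.genF n m) := memF _ (by simp [MUBH.genF])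
  have hFP : MUBH.Pm n m ∈ Submodule.span ℝ (MUBH.genF n m) := memF _ (by simp [MUBH.genF])
  have hFK : MUBH.Km n m ∈ Submodule.span ℝ (MUBH.genF n m) := memF _ (by simp [MUBH.genF])
  have hFQ : MUBH.Qm n m ∈ Submodule.span ℝ (MUBH.genF n m) := memF _ (by simp [MUBH.genF])
  have hFJ : MUBH.Jm n m ∈ Submodule.span ℝ (MUBH.genF n m) := memF _ (by simp [MUBH.genF])
  have hD1 : (1 : Matrix (Fin (m+1) × Fin (2*n) × Fin (2*n)) (Fin (m+1) × Fin (2*n) × Fin (2*n)) ℝ) ∈ Submodule.span ℝ (MUBH.genD n m M) := memD _ (by simp [MUBH.genD])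
  have hDP : MUBH.Pm n m ∈ Submodule.span ℝ (MUBH.genD n m M) := memD _ (by simp [MUBH.genD])
  have hDQ : MUBH.Qm n m ∈ Submodule.span ℝ (MUBH.genD n m M) := memD _ (by simp [MUBH.genD])
  have hDM : M ∈ Submodule.span ℝ (MUBH.genD n m M) := memD _ (by simp [MUBH.genD])
  have hA1F : A₁ ∈ Submodule.span ℝ (MUBH.genF n m) := by
    rw [hA1P]; exact sub_mem hFP hF1
  have hA1D : A₁ ∈ Submodule.span ℝ (MUBH.genD n m M) := by
    rw [hA1P]; exact sub_mem hDP hD1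
  have hA3F : A₃ ∈ Submodule.span ℝ (MUBH.genF n m) := by
    rw [hA3Q]; exact sub_mem hFQ hFP
  have hA3D : A₃ ∈ Submodule.span ℝ (MUBH.genD n m M) := by
    rw [hA3Q]; exact sub_mem hDQ hDP
  have hA45F : A₄ + A₅ ∈ Submodule.span ℝ (MUBH.genF n m) := by
    rw [hA45sum]; exact add_mem (sub_mem (sub_mem hFJ hFK) hFQ) hFP
  have hA45D : A₄ - A₅ ∈ Submodule.span ℝ (MUBH.genD n m M) := by
    rw [hA45diff]
    exact sub_mem (sub_mem (Submodule.smul_mem _ _ hDM) (Submodule.smul_mem _ _ hD1))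
      (sub_mem hDQ hDP)
  -- decomposition claim
  have claim : ∀ i : Fin 9, ∃ Z W,
      Z ∈ Submodule.span ℝ (MUBH.genF n m) ∧ W ∈ Submodule.span ℝ (MUBH.genD n m M) ∧
      (2 : ℝ) • T i = MUBH.fM Z + MUBH.gM W := by
    intro i
    fin_cases i
    · exact ⟨A₀, A₀, by rw [hA₀]; exact hF1, by rw [hA₀]; exact hD1,
        by rw [hfA0, hgA0, two_smul]; abel⟩
    · exact ⟨A₁, A₁, hA1F, hA1D, by rw [hfA1, hgA1, two_smul]; abel⟩
    · exact ⟨A₁, -A₁, hA1F, neg_mem hA1D,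
        by rw [MUBH.gM_neg, hfA1, hgA1, two_smul]; abel⟩
    · refine ⟨(2 : ℝ) • A₂, 0, ?_, Submodule.zero_mem _, ?_⟩
      · refine Submodule.smul_mem _ _ ?_
        rw [hA2K]; exact sub_mem hFK hFP
      · rw [MUBH.fM_smul, hfA2, MUBH.gM_zero]; abel
    · exact ⟨A₃, A₃, hA3F, hA3D, by rw [hfA3, hgA3, two_smul]; abel⟩
    · exact ⟨A₃, -A₃, hA3F, neg_mem hA3D,
        by rw [MUBH.gM_neg, hfA3, hgA3, two_smul]; abel⟩
    · exact ⟨A₄ + A₅, A₄ - A₅, hA45F, hA45D,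
        by rw [hfA45, hgA45, two_smul]; abel⟩
    · exact ⟨A₄ + A₅, -(A₄ - A₅), hA45F, neg_mem hA45D,
        by rw [MUBH.gM_neg, hfA45, hgA45, two_smul]; abel⟩
    · exact ⟨A₀, -A₀, by rw [hA₀]; exact hF1, by rw [hA₀]; exact neg_mem hD1,
        by rw [MUBH.gM_neg, hfA0, hgA0, two_smul]; abel⟩
  -- products lie in the span
  have hmul : ∀ i j, T i * T j ∈ Submodule.span ℝ (Set.range T) := by
    intro i j
    obtain ⟨Z1, W1, hZ1, hW1, hd1⟩ := claim i
    obtain ⟨Z2, W2, hZ2, hW2, hd2⟩ := claim j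
    have key : (4 : ℝ) • (T i * T j)
        = (2 : ℝ) • MUBH.fM (Z1 * Z2) + (2 : ℝ) • MUBH.gM (W1 * W2) := by
      have h4 : ((2 : ℝ) • T i) * ((2 : ℝ) • T j) = (4 : ℝ) • (T i * T j) := by
        rw [smul_mul_assoc, mul_smul_comm, smul_smul]; norm_num
      rw [← h4, hd1, hd2, add_mul, mul_add, mul_add,
        MUBH.fM_mul_fM, MUBH.gM_mul_gM, MUBH.fM_mul_gM, MUBH.gM_mul_fM]
      abel
    have hTT : T i * T j = (4 : ℝ)⁻¹ • ((2 : ℝ) • MUBH.fM (Z1 * Z2)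
        + (2 : ℝ) • MUBH.gM (W1 * W2)) := by
      rw [← key, smul_smul]; norm_num
    rw [hTT]
    refine Submodule.smul_mem _ _ (add_mem (Submodule.smul_mem _ _ ?_)
      (Submodule.smul_mem _ _ ?_))
    · exact hfS _ (MUBH.genF_mul_closed _ hZ1 _ hZ2)
    · exact hgS _ (MUBH.genD_mul_closed hn H G hG0 hGs hBush hHad M hM _ hW1 _ hW2)
  refine ⟨part1, part2, part3, ?_⟩
  have hex : ∀ i j : Fin 9, ∃ c : Fin 9 → ℝ, ∑ k, c k • T k = T i * T j :=
    fun i j => (Submodule.mem_span_range_iff_exists_fun ℝ).mp (hmul i j)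
  choose c hc using hex
  exact ⟨c, fun i j => (hc i j).symm⟩
end

section
/- For the 8-class double-cover scheme Ã₀,…,Ã₈, the fusion B̃₀ = Ã₀, B̃₁ = Ã₁+Ã₂+Ã₃, B̃₂ = Ã₄+Ã₆, B̃₃ = Ã₅+Ã₇, B̃₄ = Ã₈ is again an association scheme (of class 4). -/
open Matrix BigOperators

set_option linter.unusedSectionVars false
set_option linter.unusedVariables false
set_option maxHeartbeats 2000000

section BlkAux
variable {ι : Type*} [Fintype ι] [DecidableEq ι]

def blk (X Y : Matrix ι ι ℝ) : Matrix (Fin 2 × ι) (Fin 2 × ι) ℝ :=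
  Matrix.of fun a b => if a.1 = b.1 then X a.2 b.2 else Y a.2 b.2

lemma blk_apply (X Y : Matrix ι ι ℝ) (e f : Fin 2) (x y : ι) :
    blk X Y (e, x) (f, y) = if e = f then X x y else Y x y := rfl

lemma blk_congr {X Y X' Y' : Matrix ι ι ℝ} (h1 : X = X') (h2 : Y = Y') :
    blk X Y = blk X' Y' := by rw [h1, h2]

lemma blk_mul (X Y X' Y' : Matrix ι ι ℝ) :
    blk X Y * blk X' Y' = blk (X * X' + Y * Y') (X * Y' + Y * X') := by
  ext ⟨e, x⟩ ⟨f, y⟩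
  rw [Matrix.mul_apply, blk_apply, Fintype.sum_prod_type, Fin.sum_univ_two]
  fin_cases e <;> fin_cases f <;>
    simp [blk_apply, Matrix.mul_apply, Matrix.add_apply, Finset.sum_add_distrib, add_comm]

lemma blk_add (X Y X' Y' : Matrix ι ι ℝ) :
    blk X Y + blk X' Y' = blk (X + X') (Y + Y') := by
  ext ⟨e, x⟩ ⟨f, y⟩
  by_cases h : e = f <;> simp [blk_apply, h]

lemma blk_smul (c : ℝ) (X Y : Matrix ι ι ℝ) :
    c • blk X Y = blk (c • X) (c • Y) := by
  ext ⟨e, x⟩ ⟨f, y⟩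
  by_cases h : e = f <;> simp [blk_apply, h]

lemma blk_transpose (X Y : Matrix ι ι ℝ) : (blk X Y)ᵀ = blk Xᵀ Yᵀ := by
  ext ⟨e, x⟩ ⟨f, y⟩
  by_cases h : e = f
  · subst h; simp [blk_apply, Matrix.transpose_apply]
  · simp [blk_apply, Matrix.transpose_apply, h, Ne.symm h, transpose]

lemma blk_one : blk (1 : Matrix ι ι ℝ) 0 = 1 := by
  ext ⟨e, x⟩ ⟨f, y⟩
  by_cases h : e = f <;>
    simp [blk_apply, Matrix.one_apply, Prod.ext_iff, h]

end BlkAux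

/-- The fusion `B̃₀ = Ã₀, B̃₁ = Ã₁+Ã₂+Ã₃, B̃₂ = Ã₄+Ã₆, B̃₃ = Ã₅+Ã₇, B̃₄ = Ã₈`
of the 8-class double-cover scheme is again an association scheme of class 4. -/
theorem mubh_fusion_four_class (n m : ℕ) (hn : 0 < n)
    (H : Fin m → Matrix (Fin (2*n) × Fin (2*n)) (Fin (2*n) × Fin (2*n)) ℝ)
    (hsign : ∀ k, signMatrix (H k))
    (hHad : ∀ k, H k * (H k)ᵀ = ((4 * n ^ 2 : ℕ) : ℝ) • 1)
    (hBush : ∀ k, isBushType n (H k))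
    (hmub : ∀ k l, k ≠ l → ∃ L, signMatrix L ∧ H k * (H l)ᵀ = (2 * (n : ℝ)) • L)
    (G : Fin (m+1) → Matrix (Fin (2*n) × Fin (2*n)) (Fin (2*n) × Fin (2*n)) ℝ)
    (hG0 : G 0 = 1)
    (hGs : ∀ k : Fin m, G k.succ = (2 * (n : ℝ))⁻¹ • H k)
    (M : Matrix (Fin (m+1) × Fin (2*n) × Fin (2*n)) (Fin (m+1) × Fin (2*n) × Fin (2*n)) ℝ)
    (hM : ∀ i j p q, M (i, p) (j, q) = (G i * (G j)ᵀ) p q)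
    (B₁ B₂ : Matrix (Fin (m+1) × Fin (2*n) × Fin (2*n)) (Fin (m+1) × Fin (2*n) × Fin (2*n)) ℝ)
    (hB₁01 : ∀ x y, B₁ x y = 0 ∨ B₁ x y = 1)
    (hB₂01 : ∀ x y, B₂ x y = 0 ∨ B₂ x y = 1)
    (hdisj : ∀ x y, B₁ x y = 0 ∨ B₂ x y = 0)
    (hB : B₁ - B₂ = (2 * (n : ℝ)) • (M - 1))
    (A₀ A₁ A₂ A₃ A₄ A₅ : Matrix (Fin (m+1) × Fin (2*n) × Fin (2*n)) (Fin (m+1) × Fin (2*n) × Fin (2*n)) ℝ)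
    (hA₀ : A₀ = 1)
    (hA₁ : A₁ = Matrix.of (fun x y : Fin (m+1) × Fin (2*n) × Fin (2*n) =>
      if x.1 = y.1 ∧ x.2.1 = y.2.1 ∧ x.2.2 ≠ y.2.2 then (1 : ℝ) else 0))
    (hA₂ : A₂ = Matrix.of (fun x y : Fin (m+1) × Fin (2*n) × Fin (2*n) =>
      if x.1 = y.1 ∧ x.2.1 ≠ y.2.1 then (1 : ℝ) else 0))
    (hA₃ : A₃ = Matrix.of (fun x y : Fin (m+1) × Fin (2*n) × Fin (2*n) =>
      if x.1 ≠ y.1 ∧ x.2.1 = y.2.1 then (1 : ℝ) else 0))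
    (hA₄ : A₄ = B₁ - A₃)
    (hA₅ : A₅ = B₂)
    (T : Fin 9 → Matrix (Fin 2 × Fin (m+1) × Fin (2*n) × Fin (2*n)) (Fin 2 × Fin (m+1) × Fin (2*n) × Fin (2*n)) ℝ)
    (hT0 : ∀ e f x y, T 0 (e, x) (f, y) = if e = f then A₀ x y else 0)
    (hT1 : ∀ e f x y, T 1 (e, x) (f, y) = if e = f then A₁ x y else 0)
    (hT2 : ∀ e f x y, T 2 (e, x) (f, y) = if e = f then 0 else A₁ x y)
    (hT3 : ∀ e f x y, T 3 (e, x) (f, y) = A₂ x y)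
    (hT4 : ∀ e f x y, T 4 (e, x) (f, y) = if e = f then A₃ x y else 0)
    (hT5 : ∀ e f x y, T 5 (e, x) (f, y) = if e = f then 0 else A₃ x y)
    (hT6 : ∀ e f x y, T 6 (e, x) (f, y) = if e = f then A₄ x y else A₅ x y)
    (hT7 : ∀ e f x y, T 7 (e, x) (f, y) = if e = f then A₅ x y else A₄ x y)
    (hT8 : ∀ e f x y, T 8 (e, x) (f, y) = if e = f then 0 else A₀ x y)
    (Bt : Fin 5 → Matrix (Fin 2 × Fin (m+1) × Fin (2*n) × Fin (2*n)) (Fin 2 × Fin (m+1) × Fin (2*n) × Fin (2*n)) ℝ)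
    (hBt0 : Bt 0 = T 0)
    (hBt1 : Bt 1 = T 1 + T 2 + T 3)
    (hBt2 : Bt 2 = T 4 + T 6)
    (hBt3 : Bt 3 = T 5 + T 7)
    (hBt4 : Bt 4 = T 8) :
    Bt 0 = 1 ∧
    (∀ i, (Bt i)ᵀ = Bt i) ∧
    (∑ i, Bt i = Matrix.of
      (fun _ _ : Fin 2 × Fin (m+1) × Fin (2*n) × Fin (2*n) => (1 : ℝ))) ∧
    (∃ c : Fin 5 → Fin 5 → Fin 5 → ℝ, ∀ i j,
      Bt i * Bt j = ∑ k, c i j k • Bt k) := by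
  have hn0 : ((n:ℝ)) ≠ 0 := Nat.cast_ne_zero.mpr hn.ne'
  have h2n : (2 * (n:ℝ)) ≠ 0 := by positivity
  -- the two auxiliary base matrices
  set C : Matrix (Fin (m+1) × Fin (2*n) × Fin (2*n)) (Fin (m+1) × Fin (2*n) × Fin (2*n)) ℝ :=
    Matrix.of (fun x y => if x.1 = y.1 then (1:ℝ) else 0) with hCdef
  set Jb : Matrix (Fin (m+1) × Fin (2*n) × Fin (2*n)) (Fin (m+1) × Fin (2*n) × Fin (2*n)) ℝ :=
    Matrix.of (fun _ _ => (1:ℝ)) with hJdef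
  have hCe : ∀ x y : Fin (m+1) × Fin (2*n) × Fin (2*n), C x y = if x.1 = y.1 then 1 else 0 :=
    fun x y => rfl
  have hJe : ∀ x y : Fin (m+1) × Fin (2*n) × Fin (2*n), Jb x y = 1 := fun x y => rfl
  -- basic facts about the G's
  have hGG : ∀ i, G i * (G i)ᵀ = 1 := by
    intro i
    obtain rfl | ⟨k, rfl⟩ := Fin.eq_zero_or_eq_succ i
    · rw [hG0]; simp
    · rw [hGs k]
      rw [Matrix.transpose_smul, Matrix.smul_mul, Matrix.mul_smul, smul_smul, hHad k, smul_smul]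
      rw [show (2 * (n:ℝ))⁻¹ * (2 * (n:ℝ))⁻¹ * ((4 * n ^ 2 : ℕ) : ℝ) = 1 by
        push_cast; field_simp; ring]
      rw [one_smul]
  have hGtG : ∀ i, (G i)ᵀ * G i = 1 := fun i => mul_eq_one_comm.mp (hGG i)
  -- entries of M
  have hMdiag : ∀ (i : Fin (m+1)) p q,
      M (i,p) (i,q) = (1 : Matrix (Fin (2*n) × Fin (2*n)) (Fin (2*n) × Fin (2*n)) ℝ) p q := by
    intro i p q; rw [hM, hGG]
  have hMoff : ∀ (i j : Fin (m+1)) p q, i ≠ j →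
      M (i,p) (j,q) = (2*(n:ℝ))⁻¹ ∨ M (i,p) (j,q) = -(2*(n:ℝ))⁻¹ := by
    intro i j p q hij
    obtain rfl | ⟨k, rfl⟩ := Fin.eq_zero_or_eq_succ i
    · obtain rfl | ⟨l, rfl⟩ := Fin.eq_zero_or_eq_succ j
      · exact absurd rfl hij
      · rw [hM, hG0, hGs, Matrix.one_mul, Matrix.transpose_smul, Matrix.smul_apply,
          Matrix.transpose_apply, smul_eq_mul]
        rcases hsign l q p with h | h <;> rw [h] <;> [left; right] <;> ring
    · obtain rfl | ⟨l, rfl⟩ := Fin.eq_zero_or_eq_succ j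
      · rw [hM, hG0, Matrix.transpose_one, Matrix.mul_one, hGs, Matrix.smul_apply, smul_eq_mul]
        rcases hsign k p q with h | h <;> rw [h] <;> [left; right] <;> ring
      · have hkl : k ≠ l := by rintro rfl; exact hij rfl
        obtain ⟨L, hLs, hLe⟩ := hmub k l hkl
        rw [hM, hGs, hGs, Matrix.transpose_smul, Matrix.smul_mul, Matrix.mul_smul, smul_smul,
          hLe, smul_smul, Matrix.smul_apply, smul_eq_mul]
        rcases hLs p q with h | h <;> rw [h] <;> [left; right] <;> field_simp
  have hMsym : ∀ x y, M x y = M y x := by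
    rintro ⟨i, p⟩ ⟨j, q⟩
    rw [hM, hM, show G j * (G i)ᵀ = (G i * (G j)ᵀ)ᵀ by
      rw [Matrix.transpose_mul, Matrix.transpose_transpose], Matrix.transpose_apply]
  have hMM : M * M = ((m:ℝ)+1) • M := by
    ext ⟨i, p⟩ ⟨k, r⟩
    rw [Matrix.mul_apply, Matrix.smul_apply, smul_eq_mul, Fintype.sum_prod_type]
    have hinner : ∀ j : Fin (m+1), (∑ q, M (i,p) (j,q) * M (j,q) (k,r)) = M (i,p) (k,r) := by
      intro j
      have e1 : ∀ q, M (i,p) (j,q) * M (j,q) (k,r)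
          = (G i * (G j)ᵀ) p q * ((G j * (G k)ᵀ) q r) := by
        intro q; rw [hM, hM]
      rw [Finset.sum_congr rfl (fun q _ => e1 q), ← Matrix.mul_apply, Matrix.mul_assoc,
        ← Matrix.mul_assoc ((G j)ᵀ), hGtG, Matrix.one_mul, hM]
    rw [Finset.sum_congr rfl (fun j _ => hinner j), Finset.sum_const, Finset.card_univ,
      Fintype.card_fin, nsmul_eq_mul]
    push_cast; ring
  -- entrywise description of B₁, B₂
  have hB12 : ∀ x y, B₁ x y - B₂ x y
      = (2*(n:ℝ)) * (M x y - (1 : Matrix (Fin (m+1) × Fin (2*n) × Fin (2*n)) (Fin (m+1) × Fin (2*n) × Fin (2*n)) ℝ) x y) := by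
    intro x y
    have h := congrFun (congrFun hB x) y
    simpa [Matrix.sub_apply, Matrix.smul_apply] using h
  have hBdiag : ∀ (i : Fin (m+1)) p q, B₁ (i,p) (i,q) = 0 ∧ B₂ (i,p) (i,q) = 0 := by
    intro i p q
    have h := hB12 (i,p) (i,q)
    rw [hMdiag] at h
    have h1 : (1 : Matrix (Fin (m+1) × Fin (2*n) × Fin (2*n)) (Fin (m+1) × Fin (2*n) × Fin (2*n)) ℝ) (i,p) (i,q)
        = (1 : Matrix (Fin (2*n) × Fin (2*n)) (Fin (2*n) × Fin (2*n)) ℝ) p q := by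
      simp [Matrix.one_apply, Prod.ext_iff]
    rw [h1, sub_self, mul_zero] at h
    rcases hB₁01 (i,p) (i,q) with ha | ha <;> rcases hB₂01 (i,p) (i,q) with hb | hb <;>
      rcases hdisj (i,p) (i,q) with hc | hc <;> constructor <;> linarith
  have hBoff : ∀ (i j : Fin (m+1)) p q, i ≠ j → B₁ (i,p) (j,q) + B₂ (i,p) (j,q) = 1 := by
    intro i j p q hij
    have h := hB12 (i,p) (j,q)
    have h1 : (1 : Matrix (Fin (m+1) × Fin (2*n) × Fin (2*n)) (Fin (m+1) × Fin (2*n) × Fin (2*n)) ℝ) (i,p) (j,q) = 0 :=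
      Matrix.one_apply_ne (by simp [Prod.ext_iff]; intro hh; exact absurd hh hij)
    rw [h1, sub_zero] at h
    have hv1 : (2*(n:ℝ)) * (2*(n:ℝ))⁻¹ = 1 := mul_inv_cancel₀ h2n
    have hv2 : (2*(n:ℝ)) * -(2*(n:ℝ))⁻¹ = -1 := by rw [mul_neg, hv1]
    rcases hMoff i j p q hij with hm | hm <;> rw [hm] at h <;>
      [rw [hv1] at h; rw [hv2] at h] <;>
      rcases hB₁01 (i,p) (j,q) with ha | ha <;> rcases hB₂01 (i,p) (j,q) with hb | hb <;>
      linarith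
  have hBsymm : ∀ x y, B₁ x y = B₁ y x ∧ B₂ x y = B₂ y x := by
    intro x y
    have hone : (1 : Matrix (Fin (m+1) × Fin (2*n) × Fin (2*n)) (Fin (m+1) × Fin (2*n) × Fin (2*n)) ℝ) x y
        = (1 : Matrix (Fin (m+1) × Fin (2*n) × Fin (2*n)) (Fin (m+1) × Fin (2*n) × Fin (2*n)) ℝ) y x := by
      simp [Matrix.one_apply, eq_comm]
    have hd : B₁ x y - B₂ x y = B₁ y x - B₂ y x := by
      rw [hB12 x y, hB12 y x, hMsym x y, hone]
    rcases hB₁01 x y with a | a <;> rcases hB₂01 x y with b | b <;>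
      rcases hB₁01 y x with a' | a' <;> rcases hB₂01 y x with b' | b' <;>
      rcases hdisj x y with c | c <;> rcases hdisj y x with c' | c' <;>
      constructor <;> linarith
  have hB1symm : B₁ᵀ = B₁ := by
    ext x y; rw [Matrix.transpose_apply]; exact (hBsymm y x).1
  have hB2symm : B₂ᵀ = B₂ := by
    ext x y; rw [Matrix.transpose_apply]; exact (hBsymm y x).2
  -- C and Jb algebra
  have hCsym : Cᵀ = C := by
    ext x y; rw [Matrix.transpose_apply, hCe, hCe]; simp [eq_comm]
  have hCC : C * C = (4*(n:ℝ)^2) • C := by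
    ext ⟨i,p⟩ ⟨j,q⟩
    rw [Matrix.mul_apply, Matrix.smul_apply]
    simp only [hCe, smul_eq_mul]
    rw [Fintype.sum_prod_type]
    simp [Finset.sum_ite_eq, Finset.card_univ, mul_ite, ite_mul, apply_ite (Finset.card),
      Fintype.card_prod, Fintype.card_fin]
    split_ifs <;> push_cast <;> ring
  have hCJ : C * Jb = (4*(n:ℝ)^2) • Jb := by
    ext ⟨i,p⟩ ⟨j,q⟩
    rw [Matrix.mul_apply, Matrix.smul_apply]
    simp only [hCe, hJe, mul_one, smul_eq_mul]
    rw [Fintype.sum_prod_type]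
    simp [Finset.sum_ite_eq, Finset.card_univ, apply_ite (Finset.card),
      Fintype.card_prod, Fintype.card_fin]
    push_cast; ring
  have hJC : Jb * C = (4*(n:ℝ)^2) • Jb := by
    ext ⟨i,p⟩ ⟨j,q⟩
    rw [Matrix.mul_apply, Matrix.smul_apply]
    simp only [hCe, hJe, one_mul, smul_eq_mul]
    rw [Fintype.sum_prod_type]
    simp [Finset.sum_ite_eq, Finset.card_univ, apply_ite (Finset.card),
      Fintype.card_prod, Fintype.card_fin]
    push_cast; ring
  have hJJ : Jb * Jb = (((m:ℝ)+1) * (4*(n:ℝ)^2)) • Jb := by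
    ext x y
    rw [Matrix.mul_apply, Matrix.smul_apply, hJe, smul_eq_mul, mul_one]
    simp only [hJe, mul_one]
    rw [Finset.sum_const, Finset.card_univ, nsmul_eq_mul, mul_one]
    simp only [Fintype.card_prod, Fintype.card_fin]
    push_cast; ring
  -- structural identities
  have hA12 : A₁ + A₂ = C - 1 := by
    ext ⟨i, p1, p2⟩ ⟨j, q1, q2⟩
    rw [Matrix.add_apply, Matrix.sub_apply, hA₁, hA₂, hCe]
    by_cases hij : i = j <;> by_cases h1 : p1 = q1 <;> by_cases h2 : p2 = q2 <;>
      simp [hij, h1, h2, Matrix.one_apply, Prod.ext_iff]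
  have hSeq : B₁ + B₂ = Jb - C := by
    ext ⟨i,p⟩ ⟨j,q⟩
    rw [Matrix.add_apply, Matrix.sub_apply, hCe, hJe]
    by_cases hij : i = j
    · subst hij
      rw [(hBdiag i p q).1, (hBdiag i p q).2]; simp
    · rw [hBoff i j p q hij]; simp [hij]
  have hJval : Jb = B₁ + B₂ + C := by rw [hSeq]; abel
  -- product identities on the base
  have hEE : (C - 1) * (C - 1)
      = (4*(n:ℝ)^2 - 1) • (1 : Matrix (Fin (m+1) × Fin (2*n) × Fin (2*n)) (Fin (m+1) × Fin (2*n) × Fin (2*n)) ℝ)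
        + (4*(n:ℝ)^2 - 2) • (C - 1) := by
    have e : (C-1)*(C-1) = C*C - C - C + 1 := by noncomm_ring
    rw [e, hCC]; module
  have hEB : (C - 1) * B₁ + (C - 1) * B₂ = (4*(n:ℝ)^2 - 1) • B₁ + (4*(n:ℝ)^2 - 1) • B₂ := by
    have e1 : (C-1)*B₁ + (C-1)*B₂ = (C-1)*(B₁+B₂) := by noncomm_ring
    rw [e1, hSeq]
    have e2 : (C-1)*(Jb - C) = C*Jb - C*C - Jb + C := by noncomm_ring
    rw [e2, hCJ, hCC, hJval]
    module
  have hBE : B₁ * (C - 1) + B₂ * (C - 1) = (4*(n:ℝ)^2 - 1) • B₁ + (4*(n:ℝ)^2 - 1) • B₂ := by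
    have e1 : B₁*(C-1) + B₂*(C-1) = (B₁+B₂)*(C-1) := by noncomm_ring
    rw [e1, hSeq]
    have e2 : (Jb - C)*(C-1) = Jb*C - Jb - C*C + C := by noncomm_ring
    rw [e2, hJC, hCC, hJval]
    module
  have hM1 : (M - 1) * (M - 1) = ((m:ℝ)-1) • M + 1 := by
    have e : (M - 1) * (M - 1) = M*M - M - M + 1 := by noncomm_ring
    rw [e, hMM]; module
  have hDD : (B₁ - B₂) * (B₁ - B₂)
      = (2*(n:ℝ)*((m:ℝ)-1)) • (B₁ - B₂) + (4*(n:ℝ)^2*(m:ℝ)) • 1 := by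
    rw [hB, Matrix.smul_mul, Matrix.mul_smul, smul_smul, hM1]
    module
  have hSS : (B₁ + B₂) * (B₁ + B₂)
      = (4*(n:ℝ)^2*((m:ℝ)-1)) • B₁ + (4*(n:ℝ)^2*((m:ℝ)-1)) • B₂ + (4*(n:ℝ)^2*(m:ℝ)) • (C - 1)
        + (4*(n:ℝ)^2*(m:ℝ)) • 1 := by
    rw [hSeq]
    have e2 : (Jb - C)*(Jb - C) = Jb*Jb - Jb*C - C*Jb + C*C := by noncomm_ring
    rw [e2, hJJ, hJC, hCJ, hCC, hJval]
    module
  have key1 : B₁*B₁ + B₂*B₂ + (B₁*B₁ + B₂*B₂) = (B₁+B₂)*(B₁+B₂) + (B₁-B₂)*(B₁-B₂) := by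
    noncomm_ring
  have key2 : B₁*B₂ + B₂*B₁ + (B₁*B₂ + B₂*B₁) = (B₁+B₂)*(B₁+B₂) - (B₁-B₂)*(B₁-B₂) := by
    noncomm_ring
  have hPP : B₁*B₁ + B₂*B₂
      = (4*(n:ℝ)^2*(m:ℝ)) • (1 : Matrix (Fin (m+1) × Fin (2*n) × Fin (2*n)) (Fin (m+1) × Fin (2*n) × Fin (2*n)) ℝ)
        + (2*(n:ℝ)^2*(m:ℝ)) • (C - 1)
        + ((n:ℝ)*((m:ℝ)-1)*(2*(n:ℝ)+1)) • B₁ + ((n:ℝ)*((m:ℝ)-1)*(2*(n:ℝ)-1)) • B₂ := by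
    have h2 : (2:ℝ) • (B₁*B₁ + B₂*B₂)
        = (2:ℝ) • ((4*(n:ℝ)^2*(m:ℝ)) • (1 : Matrix (Fin (m+1) × Fin (2*n) × Fin (2*n)) (Fin (m+1) × Fin (2*n) × Fin (2*n)) ℝ)
            + (2*(n:ℝ)^2*(m:ℝ)) • (C - 1)
            + ((n:ℝ)*((m:ℝ)-1)*(2*(n:ℝ)+1)) • B₁ + ((n:ℝ)*((m:ℝ)-1)*(2*(n:ℝ)-1)) • B₂) := by
      rw [two_smul ℝ (B₁*B₁ + B₂*B₂), key1, hSS, hDD]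
      module
    exact smul_right_injective _ (two_ne_zero) h2
  have hPQ : B₁*B₂ + B₂*B₁
      = (2*(n:ℝ)^2*(m:ℝ)) • (C - 1)
        + ((n:ℝ)*((m:ℝ)-1)*(2*(n:ℝ)-1)) • B₁ + ((n:ℝ)*((m:ℝ)-1)*(2*(n:ℝ)+1)) • B₂ := by
    have h2 : (2:ℝ) • (B₁*B₂ + B₂*B₁)
        = (2:ℝ) • ((2*(n:ℝ)^2*(m:ℝ)) • (C - 1)
            + ((n:ℝ)*((m:ℝ)-1)*(2*(n:ℝ)-1)) • B₁ + ((n:ℝ)*((m:ℝ)-1)*(2*(n:ℝ)+1)) • B₂) := by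
      rw [two_smul ℝ (B₁*B₂ + B₂*B₁), key2, hSS, hDD]
      module
    exact smul_right_injective _ (two_ne_zero) h2
  -- block representations of the fused matrices
  have h34 : ∀ x y, A₃ x y + A₄ x y = B₁ x y := by
    intro x y; rw [hA₄]; simp [Matrix.sub_apply]
  have hBt0' : Bt 0 = blk 1 0 := by
    rw [hBt0]; ext ⟨e, x⟩ ⟨f, y⟩
    rw [hT0, blk_apply, hA₀]
    by_cases h : e = f <;> simp [h]
  have hBt1' : Bt 1 = blk (C - 1) (C - 1) := by
    rw [hBt1]; ext ⟨e, x⟩ ⟨f, y⟩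
    have h12 : A₁ x y + A₂ x y
        = C x y - (1 : Matrix (Fin (m+1) × Fin (2*n) × Fin (2*n)) (Fin (m+1) × Fin (2*n) × Fin (2*n)) ℝ) x y := by
      have := congrFun (congrFun hA12 x) y
      simpa [Matrix.add_apply, Matrix.sub_apply] using this
    rw [Matrix.add_apply, Matrix.add_apply, hT1, hT2, hT3, blk_apply]
    by_cases h : e = f <;> simp [h, Matrix.sub_apply] <;> linarith
  have hBt2' : Bt 2 = blk B₁ B₂ := by
    rw [hBt2]; ext ⟨e, x⟩ ⟨f, y⟩
    rw [Matrix.add_apply, hT4, hT6, blk_apply]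
    by_cases h : e = f <;> simp [h, hA₅] <;> linarith [h34 x y]
  have hBt3' : Bt 3 = blk B₂ B₁ := by
    rw [hBt3]; ext ⟨e, x⟩ ⟨f, y⟩
    rw [Matrix.add_apply, hT5, hT7, blk_apply]
    by_cases h : e = f <;> simp [h, hA₅] <;> linarith [h34 x y]
  have hBt4' : Bt 4 = blk 0 1 := by
    rw [hBt4]; ext ⟨e, x⟩ ⟨f, y⟩
    rw [hT8, blk_apply, hA₀]
    by_cases h : e = f <;> simp [h]
  refine ⟨?_, ?_, ?_, ?_⟩
  · rw [hBt0']; exact blk_one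
  · intro i
    fin_cases i <;>
      simp only [show ((⟨0, by omega⟩ : Fin 5) = 0) from rfl,
        show ((⟨1, by omega⟩ : Fin 5) = 1) from rfl,
        show ((⟨2, by omega⟩ : Fin 5) = 2) from rfl,
        show ((⟨3, by omega⟩ : Fin 5) = 3) from rfl,
        show ((⟨4, by omega⟩ : Fin 5) = 4) from rfl]
    · rw [hBt0', blk_transpose, Matrix.transpose_one, Matrix.transpose_zero]
    · rw [hBt1', blk_transpose, Matrix.transpose_sub, hCsym, Matrix.transpose_one]
    · rw [hBt2', blk_transpose, hB1symm, hB2symm]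
    · rw [hBt3', blk_transpose, hB1symm, hB2symm]
    · rw [hBt4', blk_transpose, Matrix.transpose_one, Matrix.transpose_zero]
  · rw [Fin.sum_univ_five, hBt0', hBt1', hBt2', hBt3', hBt4', blk_add, blk_add, blk_add, blk_add]
    have hx : (1 : Matrix (Fin (m+1) × Fin (2*n) × Fin (2*n)) (Fin (m+1) × Fin (2*n) × Fin (2*n)) ℝ)
        + (C - 1) + B₁ + B₂ + 0 = Jb := by
      rw [hJval]; abel
    have hy : (0 : Matrix (Fin (m+1) × Fin (2*n) × Fin (2*n)) (Fin (m+1) × Fin (2*n) × Fin (2*n)) ℝ)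
        + (C - 1) + B₂ + B₁ + 1 = Jb := by
      rw [hJval]; abel
    rw [hx, hy]
    ext ⟨e, x⟩ ⟨f, y⟩
    by_cases h : e = f <;> simp [blk_apply, h, hJe]
  · refine ⟨![
      ![![1,0,0,0,0], ![0,1,0,0,0], ![0,0,1,0,0], ![0,0,0,1,0], ![0,0,0,0,1]],
      ![![0,1,0,0,0],
        ![2*(4*(n:ℝ)^2-1), 2*(4*(n:ℝ)^2-2), 0, 0, 2*(4*(n:ℝ)^2-1)],
        ![0,0,4*(n:ℝ)^2-1,4*(n:ℝ)^2-1,0],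
        ![0,0,4*(n:ℝ)^2-1,4*(n:ℝ)^2-1,0],
        ![0,1,0,0,0]],
      ![![0,0,1,0,0],
        ![0,0,4*(n:ℝ)^2-1,4*(n:ℝ)^2-1,0],
        ![4*(n:ℝ)^2*(m:ℝ), 2*(n:ℝ)^2*(m:ℝ), (n:ℝ)*((m:ℝ)-1)*(2*(n:ℝ)+1), (n:ℝ)*((m:ℝ)-1)*(2*(n:ℝ)-1), 0],
        ![0, 2*(n:ℝ)^2*(m:ℝ), (n:ℝ)*((m:ℝ)-1)*(2*(n:ℝ)-1), (n:ℝ)*((m:ℝ)-1)*(2*(n:ℝ)+1), 4*(n:ℝ)^2*(m:ℝ)],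
        ![0,0,0,1,0]],
      ![![0,0,0,1,0],
        ![0,0,4*(n:ℝ)^2-1,4*(n:ℝ)^2-1,0],
        ![0, 2*(n:ℝ)^2*(m:ℝ), (n:ℝ)*((m:ℝ)-1)*(2*(n:ℝ)-1), (n:ℝ)*((m:ℝ)-1)*(2*(n:ℝ)+1), 4*(n:ℝ)^2*(m:ℝ)],
        ![4*(n:ℝ)^2*(m:ℝ), 2*(n:ℝ)^2*(m:ℝ), (n:ℝ)*((m:ℝ)-1)*(2*(n:ℝ)+1), (n:ℝ)*((m:ℝ)-1)*(2*(n:ℝ)-1), 0],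
        ![0,0,1,0,0]],
      ![![0,0,0,0,1], ![0,1,0,0,0], ![0,0,0,1,0], ![0,0,1,0,0], ![1,0,0,0,0]]], ?_⟩
    intro i j
    fin_cases i <;> fin_cases j <;>
    · try simp only [show ((⟨0, by omega⟩ : Fin 5) = 0) from rfl,
        show ((⟨1, by omega⟩ : Fin 5) = 1) from rfl,
        show ((⟨2, by omega⟩ : Fin 5) = 2) from rfl,
        show ((⟨3, by omega⟩ : Fin 5) = 3) from rfl,
        show ((⟨4, by omega⟩ : Fin 5) = 4) from rfl]
      simp only [Fin.sum_univ_five, Matrix.cons_val_zero, Matrix.cons_val_one, Matrix.head_cons,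
        Matrix.cons_val_two, Matrix.tail_cons, Matrix.cons_val_three, Matrix.cons_val_four,
        Matrix.head_fin_const, Fin.isValue]
      rw [hBt0', hBt1', hBt2', hBt3', hBt4', blk_mul]
      simp only [blk_smul, blk_add]
      try simp only [Matrix.mul_one, Matrix.one_mul, Matrix.mul_zero, Matrix.zero_mul]
      refine blk_congr ?_ ?_ <;>
        first
          | module
          | linear_combination (norm := module) hEE + hEE
          | linear_combination (norm := module) hEE
          | linear_combination (norm := module) hEB
          | linear_combination (norm := module) hBE
          | linear_combination (norm := module) hPP
          | linear_combination (norm := module) hPQ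
end
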